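/- arXiv:1401.2715 — 11 statements merged into one kernel-verified Lean document; each statement's English description precedes it below -/
import Mathlib

section
/- If W : ℝ → ℝ satisfies that W is convex on [0, θ) for some θ > 0, W is convex on [M, ∞) for some M > 0, and W' = σ is Lipschitz continuous with constant L on [θ/2, 2M], then W is λ-convex on [0, ∞) for some λ > 0, i.e., the function p ↦ W(p) + (λ/2) p² is convex on [0, ∞). -/
open Set

/-- If `W` is convex on `[0, θ)` for some `θ > 0`, convex on `[M, ∞)` for some `M > 0`,
differentiable on `(0, ∞)` with derivative `σ`, and `σ` is Lipschitz with constant `L` on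
`[θ/2, 2M]`, then `W` is `λ`-convex on `[0, ∞)` for some `λ > 0`. -/
theorem stmt0 (W σ : ℝ → ℝ) (θ M : ℝ) (hθ : 0 < θ) (hM : 0 < M)
    (hconv1 : ConvexOn ℝ (Set.Ico 0 θ) W)
    (hconv2 : ConvexOn ℝ (Set.Ici M) W)
    (hderiv : ∀ p ∈ Set.Ioi (0:ℝ), HasDerivAt W (σ p) p)
    (L : NNReal) (hlip : LipschitzOnWith L σ (Set.Icc (θ/2) (2*M))) :
    ∃ lam : ℝ, 0 < lam ∧ ConvexOn ℝ (Set.Ici 0) (fun p => W p + lam / 2 * p ^ 2) := by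
  set lam : ℝ := (L : ℝ) + 1 with hlamdef
  have hlam0 : (0:ℝ) < lam := by positivity
  refine ⟨lam, hlam0, ?_⟩
  set F : ℝ → ℝ := fun p => W p + lam / 2 * p ^ 2 with hFdef
  -- monotonicity of σ on a convex set where W is convex
  have hσmono : ∀ {S : Set ℝ}, ConvexOn ℝ S W → ∀ {p q : ℝ}, p ∈ S → q ∈ S →
      0 < p → 0 < q → p < q → σ p ≤ σ q := by
    intro S hS p q hp hq hp0 hq0 hpq
    exact (hS.le_slope_of_hasDerivAt hp hq hpq (hderiv p hp0)).trans
      (hS.slope_le_of_hasDerivAt hp hq hpq (hderiv q hq0))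
  -- Lipschitz estimate
  have hLip : ∀ p q : ℝ, θ/2 ≤ p → p ≤ q → q ≤ 2*M → σ p - σ q ≤ (L:ℝ) * (q - p) := by
    intro p q hp hpq hq
    have h1 : dist (σ p) (σ q) ≤ (L:ℝ) * dist p q :=
      hlip.dist_le_mul p ⟨hp, hpq.trans hq⟩ q ⟨hp.trans hpq, hq⟩
    rw [Real.dist_eq, Real.dist_eq] at h1
    have h2 : σ p - σ q ≤ |σ p - σ q| := le_abs_self _
    have h3 : |p - q| = q - p := by rw [abs_sub_comm]; exact abs_of_nonneg (by linarith)
    rw [h3] at h1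
    linarith
  -- key monotonicity of p ↦ σ p + lam * p on (0, ∞)
  have step : ∀ p q : ℝ, θ/2 ≤ p → p < q → σ p + lam * p ≤ σ q + lam * q := by
    intro p q hp hpq
    have hp0 : 0 < p := lt_of_lt_of_le (by linarith) hp
    have hq0 : 0 < q := hp0.trans hpq
    by_cases hqθ : q < θ
    · have := hσmono hconv1 ⟨hp0.le, lt_of_lt_of_le (by linarith) (le_of_lt hqθ) |>.trans_le le_rfl⟩
        ⟨hq0.le, hqθ⟩ hp0 hq0 hpq
      nlinarith
    · push_neg at hqθ
      by_cases hq2M : q ≤ 2*M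
      · have := hLip p q hp hpq.le hq2M
        have hexp : lam * q - lam * p = (L:ℝ) * (q - p) + (q - p) := by
          rw [hlamdef]; ring
        linarith
      · push_neg at hq2M
        by_cases hpM : M ≤ p
        · have := hσmono hconv2 hpM (by linarith : M ≤ q) hp0 hq0 hpq
          nlinarith
        · push_neg at hpM
          -- chain through 2M
          have h2M0 : (0:ℝ) < 2*M := by linarith
          have h1 : σ p - σ (2*M) ≤ (L:ℝ) * (2*M - p) := hLip p (2*M) hp (by linarith) le_rfl
          have h2 : σ (2*M) ≤ σ q :=
            hσmono hconv2 (by linarith : M ≤ 2*M) (by linarith : M ≤ q) h2M0 hq0 hq2M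
          have hexp : lam * (2*M) - lam * p = (L:ℝ) * (2*M - p) + (2*M - p) := by
            rw [hlamdef]; ring
          have h3 : σ p + lam * p ≤ σ (2*M) + lam * (2*M) := by linarith
          have h4 : σ (2*M) + lam * (2*M) ≤ σ q + lam * q := by nlinarith
          linarith
  have gmono : ∀ p q : ℝ, 0 < p → p < q → σ p + lam * p ≤ σ q + lam * q := by
    intro p q hp0 hpq
    by_cases hp : θ/2 ≤ p
    · exact step p q hp hpq
    · push_neg at hp
      by_cases hq : q ≤ θ/2
      · have := hσmono hconv1 ⟨hp0.le, by linarith⟩ ⟨(hp0.trans hpq).le, by linarith⟩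
          hp0 (hp0.trans hpq) hpq
        nlinarith
      · push_neg at hq
        have hm : σ p + lam * p ≤ σ (θ/2) + lam * (θ/2) := by
          have := hσmono hconv1 ⟨hp0.le, by linarith⟩ ⟨by linarith, by linarith⟩
            hp0 (by linarith) hp
          nlinarith
        exact hm.trans (step (θ/2) q le_rfl hq)
  -- derivative of F
  have hFd : ∀ p : ℝ, 0 < p → HasDerivAt F (σ p + lam * p) p := by
    intro p hp
    have h1 : HasDerivAt (fun x : ℝ => lam / 2 * x ^ 2) (lam * p) p := by
      have := (hasDerivAt_pow 2 p).const_mul (lam / 2)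
      exact this.congr_deriv (by push_cast; ring)
    exact (hderiv p hp).add h1
  -- F is convex on (0, ∞)
  have hFIoi : ConvexOn ℝ (Ioi (0:ℝ)) F := by
    have hint : interior (Ioi (0:ℝ)) = Ioi 0 := isOpen_Ioi.interior_eq
    have hdiff : DifferentiableOn ℝ F (interior (Ioi (0:ℝ))) := by
      rw [hint]; exact fun p hp => ((hFd p hp).differentiableAt).differentiableWithinAt
    have hcont : ContinuousOn F (Ioi (0:ℝ)) :=
      fun p hp => ((hFd p hp).differentiableAt).continuousAt.continuousWithinAt
    refine MonotoneOn.convexOn_of_deriv (convex_Ioi 0) hcont hdiff ?_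
    rw [hint]
    intro p hp q hq hpq
    rcases eq_or_lt_of_le hpq with rfl | hpq'
    · exact le_rfl
    · rw [(hFd p hp).deriv, (hFd q hq).deriv]
      exact gmono p q hp hpq'
  -- F is convex on [0, θ)
  have hFIco : ConvexOn ℝ (Ico (0:ℝ) θ) F := by
    have hq : ConvexOn ℝ (Ico (0:ℝ) θ) (fun p : ℝ => lam / 2 * p ^ 2) := by
      have h1 : ConvexOn ℝ (Ico (0:ℝ) θ) (fun p : ℝ => p ^ 2) :=
        (Even.convexOn_pow even_two).subset (subset_univ _) (convex_Ico _ _)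
      have := h1.smul (c := lam / 2) (by positivity)
      simpa [smul_eq_mul] using this
    exact hconv1.add hq
  -- glue
  apply convexOn_of_slope_mono_adjacent (convex_Ici 0)
  intro x y z hx hz hxy hyz
  rcases eq_or_lt_of_le (Set.mem_Ici.mp hx : (0:ℝ) ≤ x) with hx0 | hx0
  · -- x = 0
    subst hx0
    by_cases hzθ : z < θ
    · exact hFIco.slope_mono_adjacent ⟨le_rfl, hθ⟩ ⟨by linarith, hzθ⟩ hxy hyz
    · push_neg at hzθ
      set m := min y θ with hm
      have hm0 : 0 < m := lt_min hxy hθ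
      have hmy : m ≤ y := min_le_left _ _
      have hmθ : m ≤ θ := min_le_right _ _
      set c := m / 2 with hc
      set c' := 3 * m / 4 with hc'
      have hc0 : 0 < c := by positivity
      have hcc' : c < c' := by rw [hc, hc']; linarith
      have hc'θ : c' < θ := by rw [hc']; linarith
      have hc'y : c' < y := by rw [hc']; linarith
      have hcy : c < y := by rw [hc]; linarith
      have h1 : (F c - F 0) / (c - 0) ≤ (F c' - F c) / (c' - c) :=
        hFIco.slope_mono_adjacent ⟨le_rfl, hθ⟩ ⟨by linarith, hc'θ⟩ hc0 hcc'
      have h2 : (F c' - F c) / (c' - c) ≤ (F y - F c') / (y - c') :=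
        hFIoi.slope_mono_adjacent hc0 hxy hcc' hc'y
      have hz0 : (0:ℝ) < z := hxy.trans hyz
      have h3 : (F y - F c') / (y - c') ≤ (F z - F y) / (z - y) :=
        hFIoi.slope_mono_adjacent (hc0.trans hcc' : (0:ℝ) < c') hz0 hc'y hyz
      have h4 : (F y - F c) / (y - c) ≤ (F z - F y) / (z - y) :=
        hFIoi.slope_mono_adjacent hc0 hz0 hcy hyz
      have hA : (F c - F 0) / (c - 0) ≤ (F z - F y) / (z - y) := h1.trans (h2.trans h3)
      rw [sub_zero] at hA
      set S := (F z - F y) / (z - y) with hS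
      have e1 : F c - F 0 ≤ S * c := (div_le_iff₀ hc0).mp hA
      have e2 : F y - F c ≤ S * (y - c) := (div_le_iff₀ (by linarith)).mp h4
      have e3 : S * c + S * (y - c) = S * y := by ring
      rw [sub_zero, div_le_iff₀ hxy]
      linarith [e1, e2, e3]
  · exact hFIoi.slope_mono_adjacent hx0 (hx0.trans (hxy.trans hyz)) hxy hyz
end

section
/- Suppose σ : (0,∞) → ℝ is continuous, there exists θ > 0 and α > 0 such that σ is differentiable on (0,θ) with σ'(p) ≥ α for all p ∈ (0,θ), σ(p) → −∞ as p → 0+, and there exists c > 0 with σ(p)/p ≥ c for all p > 1/θ. Then there exist positive constants C and ε₀ such that for all p > 0 and all δ ∈ (0, ε₀] with p ≠ δ, (σ(p) − σ(δ))/(p − δ) > C. -/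
/-- Under (H1)-type continuity, (L1): `σ' ≥ α > 0` on `(0,θ)`, (H2): `σ(p) → −∞` as `p → 0+`,
and (L2): `σ(p)/p ≥ c > 0` for `p > 1/θ`, there exist `C, ε₀ > 0` such that
`(σ(p) − σ(δ))/(p − δ) > C` for all `p > 0`, `0 < δ ≤ ε₀`, `p ≠ δ`. -/
theorem stmt2 (σ σ' : ℝ → ℝ) (θ α c : ℝ) (hθ : 0 < θ) (hα : 0 < α) (hc : 0 < c)
    (hcont : ContinuousOn σ (Set.Ioi 0))
    (hL1 : ∀ p ∈ Set.Ioo (0:ℝ) θ, HasDerivAt σ (σ' p) p ∧ α ≤ σ' p)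
    (hH2 : Filter.Tendsto σ (nhdsWithin 0 (Set.Ioi 0)) Filter.atBot)
    (hL2 : ∀ p : ℝ, 1/θ < p → c ≤ σ p / p) :
    ∃ C ε₀ : ℝ, 0 < C ∧ 0 < ε₀ ∧
      ∀ p δ : ℝ, 0 < p → 0 < δ → δ ≤ ε₀ → p ≠ δ →
        (σ p - σ δ) / (p - δ) > C := by
  set K := max θ (1/θ) with hK
  have hθK : θ ≤ K := le_max_left _ _
  have hKpos : 0 < K := lt_of_lt_of_le hθ hθK
  have hsub : Set.Icc θ K ⊆ Set.Ioi 0 := fun x hx => lt_of_lt_of_le hθ hx.1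
  obtain ⟨x₀, hx₀, hmin⟩ :=
    isCompact_Icc.exists_isMinOn ⟨θ, le_refl θ, hθK⟩ (hcont.mono hsub)
  set m := σ x₀ with hm
  set C := min α c / 2 with hC
  have hCpos : 0 < C := by
    have := lt_min hα hc
    positivity
  have hCα : C < α := by
    have h1 : min α c ≤ α := min_le_left _ _
    have := lt_min hα hc
    rw [hC]; linarith
  have hCc : C < c := by
    have h1 : min α c ≤ c := min_le_right _ _
    have := lt_min hα hc
    rw [hC]; linarith
  set B := min m 0 - C * K with hB
  have hev : ∀ᶠ x in nhdsWithin 0 (Set.Ioi 0), σ x < B :=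
    hH2.eventually (Filter.eventually_lt_atBot B)
  rw [eventually_nhdsWithin_iff, Metric.eventually_nhds_iff] at hev
  obtain ⟨ε, hεpos, hε⟩ := hev
  refine ⟨C, min (ε/2) (θ/2), hCpos, by positivity, ?_⟩
  intro p δ hp hδ hδle hpδ
  have hδθ : δ < θ := lt_of_le_of_lt (hδle.trans (min_le_right _ _)) (by linarith)
  have hδε : δ < ε := lt_of_le_of_lt (hδle.trans (min_le_left _ _)) (by linarith)
  have hσδ : σ δ < B := by
    apply hε _ hδ
    simpa [Real.dist_eq, abs_of_pos hδ] using hδε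
  have hσδ0 : σ δ < 0 := by
    have h1 : min m 0 ≤ 0 := min_le_right _ _
    have h2 : 0 < C * K := mul_pos hCpos hKpos
    rw [hB] at hσδ; linarith
  rcases lt_or_ge p θ with hpθ | hpθ
  · -- MVT case : both p, δ in (0, θ)
    have key : ∀ a b : ℝ, a ∈ Set.Ioo (0:ℝ) θ → b ∈ Set.Ioo (0:ℝ) θ → a < b →
        (σ b - σ a) / (b - a) > C := by
      intro a b ha hb hab
      have hIcc : Set.Icc a b ⊆ Set.Ioo (0:ℝ) θ := fun x hx =>
        ⟨lt_of_lt_of_le ha.1 hx.1, lt_of_le_of_lt hx.2 hb.2⟩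
      obtain ⟨ξ, hξ, hξeq⟩ := exists_hasDerivAt_eq_slope σ σ' hab
        (fun x hx => ((hL1 x (hIcc hx)).1).continuousAt.continuousWithinAt)
        (fun x hx => (hL1 x (hIcc (Set.Ioo_subset_Icc_self hx))).1)
      rw [gt_iff_lt, ← hξeq]
      exact lt_of_lt_of_le hCα (hL1 ξ (hIcc (Set.Ioo_subset_Icc_self hξ))).2
    rcases lt_or_gt_of_ne hpδ with h | h
    · have hkey := key p δ ⟨hp, hpθ⟩ ⟨hδ, hδθ⟩ h
      have heq : (σ p - σ δ) / (p - δ) = (σ δ - σ p) / (δ - p) := by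
        rw [← neg_sub (σ δ), ← neg_sub δ, neg_div_neg_eq]
      rw [heq]; exact hkey
    · exact key δ p ⟨hδ, hδθ⟩ ⟨hp, hpθ⟩ h
  · -- p ≥ θ
    have hpδ' : δ < p := lt_of_lt_of_le hδθ hpθ
    have hdpos : 0 < p - δ := sub_pos.2 hpδ'
    rw [gt_iff_lt, lt_div_iff₀ hdpos]
    rcases le_or_gt p K with hpK | hpK
    · have hmle : m ≤ σ p := hmin ⟨hpθ, hpK⟩
      have h1 : min m 0 ≤ m := min_le_left _ _
      rw [hB] at hσδ
      nlinarith
    · have h2 : c ≤ σ p / p := hL2 p (lt_of_le_of_lt (le_max_right θ (1/θ)) hpK)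
      have h3 : c * p ≤ σ p := (le_div_iff₀ hp).1 h2
      nlinarith
end

section
/- Suppose σ : (0,∞) → ℝ is continuous, σ(p)/p → ∞ as p → ∞, σ(p) → −∞ as p → 0+, σ is nondecreasing on [M₀, ∞) and positive there, and μ > 0. Then for all sufficiently large γ > 0: for every p with 0 < p ≤ γ, one has σ(γ)/(2μ) > σ(p)/p − σ(γ)/γ. -/
/-- If `σ` is continuous on `(0,∞)` with `σ(p)/p → ∞` as `p → ∞`, `σ(p) → −∞` as `p → 0+`,
`σ` nondecreasing and positive on `[M₀,∞)`, and `μ > 0`, then for all sufficiently large `γ`: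
for every `0 < p ≤ γ` one has `σ(γ)/(2μ) > σ(p)/p − σ(γ)/γ`. -/
theorem stmt4 (σ : ℝ → ℝ) (M₀ μ : ℝ) (hμ : 0 < μ)
    (hcont : ContinuousOn σ (Set.Ioi 0))
    (hsup : Filter.Tendsto (fun p => σ p / p) Filter.atTop Filter.atTop)
    (hH2 : Filter.Tendsto σ (nhdsWithin 0 (Set.Ioi 0)) Filter.atBot)
    (hmono : MonotoneOn σ (Set.Ici M₀))
    (hpos : ∀ p, M₀ ≤ p → 0 < σ p) :
    ∃ Γ : ℝ, 0 < Γ ∧ ∀ γ : ℝ, Γ ≤ γ → ∀ p : ℝ, 0 < p → p ≤ γ →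
      σ γ / (2 * μ) > σ p / p - σ γ / γ := by
  -- get δ > 0 with σ ≤ 0 on (0, δ)
  have hneg : ∀ᶠ p in nhdsWithin 0 (Set.Ioi 0), σ p ≤ 0 :=
    hH2.eventually (Filter.eventually_le_atBot 0)
  rw [Filter.Eventually, mem_nhdsGT_iff_exists_Ioo_subset] at hneg
  obtain ⟨δ, hδ, hδneg⟩ := hneg
  have hδ0 : (0:ℝ) < δ := hδ
  set M₁ : ℝ := max (max M₀ δ) (4 * μ) with hM₁def
  have hM₁pos : 0 < M₁ := lt_of_lt_of_le (by linarith) (le_max_right _ _)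
  have hδM₁ : δ ≤ M₁ := le_trans (le_max_right _ _) (le_max_left _ _)
  have hM₀M₁ : M₀ ≤ M₁ := le_trans (le_max_left _ _) (le_max_left _ _)
  have h4μM₁ : 4 * μ ≤ M₁ := le_max_right _ _
  -- bound σ p / p on [δ, M₁]
  have hsub : Set.Icc δ M₁ ⊆ Set.Ioi 0 := fun x hx => lt_of_lt_of_le hδ0 hx.1
  have hcont' : ContinuousOn (fun p => σ p / p) (Set.Icc δ M₁) :=
    (hcont.mono hsub).div continuousOn_id (fun x hx => ne_of_gt (hsub hx))
  obtain ⟨x₀, hx₀mem, hx₀max⟩ :=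
    isCompact_Icc.exists_isMaxOn ⟨δ, le_refl δ, hδM₁⟩ hcont'
  set C : ℝ := σ x₀ / x₀ with hCdef
  set C' : ℝ := max C 0 + 1 with hC'def
  have hCC' : C < C' := lt_of_le_of_lt (le_max_left _ _) (by linarith)
  have hC'pos : 0 < C' := lt_of_le_of_lt (le_max_right _ _) (by linarith)
  -- choose Γ₀ with σ γ / γ ≥ C' for γ ≥ Γ₀
  obtain ⟨Γ₀, hΓ₀⟩ := (hsup.eventually_ge_atTop C').exists_forall_of_atTop
  refine ⟨max Γ₀ (max M₁ (2 * μ)), lt_of_lt_of_le (by linarith)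
    (le_trans (le_max_right _ _) (le_max_right _ _)), ?_⟩
  intro γ hγ p hp hpγ
  have hγΓ₀ : Γ₀ ≤ γ := le_trans (le_max_left _ _) hγ
  have hγM₁ : M₁ ≤ γ := le_trans (le_trans (le_max_left _ _) (le_max_right _ _)) hγ
  have hγ2μ : 2 * μ ≤ γ := le_trans (le_trans (le_max_right _ _) (le_max_right _ _)) hγ
  have hγpos : 0 < γ := lt_of_lt_of_le hM₁pos hγM₁
  have hσγpos : 0 < σ γ := hpos γ (le_trans hM₀M₁ hγM₁)
  have hratio : C' ≤ σ γ / γ := hΓ₀ γ hγΓ₀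
  have hγγpos : 0 < σ γ / γ := lt_of_lt_of_le hC'pos hratio
  have h2μpos : 0 < 2 * μ := by linarith
  have hγ2μ' : σ γ / γ ≤ σ γ / (2 * μ) :=
    div_le_div_of_nonneg_left (le_of_lt hσγpos) h2μpos hγ2μ
  have hbig : C' ≤ σ γ / (2 * μ) := le_trans hratio hγ2μ'
  rcases lt_or_ge p δ with hlt | hge
  · -- small p : σ p ≤ 0
    have : σ p ≤ 0 := hδneg ⟨hp, hlt⟩
    have : σ p / p ≤ 0 := div_nonpos_of_nonpos_of_nonneg this (le_of_lt hp)
    have hpos2μ : 0 < σ γ / (2 * μ) := div_pos hσγpos h2μpos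
    linarith
  rcases le_or_gt p M₁ with hle | hgt
  · -- middle p : σ p / p ≤ C
    have : σ p / p ≤ C := hx₀max ⟨hge, hle⟩
    linarith
  · -- large p : use monotonicity
    have hM₀p : M₀ ≤ p := le_trans hM₀M₁ (le_of_lt hgt)
    have hσpγ : σ p ≤ σ γ := hmono hM₀p (le_trans hM₀M₁ hγM₁) hpγ
    have h1 : σ p / p ≤ σ γ / p := div_le_div_of_nonneg_right hσpγ (le_of_lt hp)
    have h2 : σ γ / p ≤ σ γ / (4 * μ) :=
      div_le_div_of_nonneg_left (le_of_lt hσγpos) (by linarith)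
        (le_trans h4μM₁ (le_of_lt hgt))
    have h3 : σ γ / (4 * μ) < σ γ / (2 * μ) :=
      div_lt_div_of_pos_left hσγpos h2μpos (by linarith)
    linarith
end

section
/- Let σ : (0,∞) → ℝ be locally Lipschitz with σ(p) → −∞ as p → 0+ and σ(p) > 0 for all sufficiently large p. Let p₋ > 0 be the smallest root of σ. Define g(p) = ∫₀^p (−1/σ(z)) dz for 0 < p < p₋ (which is finite, continuous, strictly increasing, and g(p) → 0 as p → 0+). Then any solution p(t) of the ODE p'(t) = −σ(p(t)) with p(0) = p₀ ≥ 0 satisfies p(t) ≥ min{p₋, g⁻¹(t)} for all t > 0. -/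
open MeasureTheory intervalIntegral

/-- Lower bound for solutions of `p' = −σ(p)`: with `p₋` the smallest positive root of `σ` and
`g(q) = ∫₀^q (−1/σ(z)) dz` for `0 < q < p₋`, any solution with `p(0) = p₀ ≥ 0` satisfies
`p(t) ≥ min {p₋, g⁻¹(t)}` for all `t > 0`.  Since `g` is continuous and strictly increasing on
`(0, p₋)`, this is expressed equivalently as: for every `q ∈ (0, p₋)` with `g(q) ≤ t` one has
`p(t) ≥ q`. -/
theorem stmt5 (σ : ℝ → ℝ) (pm : ℝ)
    (hlip : ∀ x : ℝ, 0 < x → ∃ ε > 0, ∃ L : NNReal,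
      LipschitzOnWith L σ (Metric.ball x ε ∩ Set.Ioi 0))
    (hH2 : Filter.Tendsto σ (nhdsWithin 0 (Set.Ioi 0)) Filter.atBot)
    (hposlarge : ∃ M : ℝ, ∀ p, M ≤ p → 0 < σ p)
    (hpm : 0 < pm ∧ σ pm = 0 ∧ ∀ q, 0 < q → σ q = 0 → pm ≤ q)
    (p : ℝ → ℝ) (p₀ : ℝ) (hp₀ : 0 ≤ p₀) (hinit : p 0 = p₀)
    (hpcont : ContinuousOn p (Set.Ici 0))
    (hppos : ∀ t : ℝ, 0 < t → 0 < p t)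
    (hode : ∀ t : ℝ, 0 < t → HasDerivAt p (-σ (p t)) t) :
    ∀ t : ℝ, 0 < t → ∀ q : ℝ, 0 < q → q < pm →
      (∫ z in (0:ℝ)..q, -(1 / σ z)) ≤ t → q ≤ p t := by
  obtain ⟨hpm0, hσpm, hmin⟩ := hpm
  -- continuity of σ on (0,∞)
  have hσcont : ∀ x : ℝ, 0 < x → ContinuousAt σ x := by
    intro x hx
    obtain ⟨ε, hε, L, hL⟩ := hlip x hx
    have hmem : Metric.ball x ε ∩ Set.Ioi 0 ∈ nhds x :=
      Filter.inter_mem (Metric.ball_mem_nhds x hε) (Ioi_mem_nhds hx)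
    exact hL.continuousOn.continuousAt hmem
  -- σ is negative on (0, pm)
  have hσneg : ∀ x : ℝ, 0 < x → x < pm → σ x < 0 := by
    intro x hx hxpm
    by_contra hge
    push_neg at hge
    have hev : ∀ᶠ z in nhdsWithin 0 (Set.Ioi 0), σ z < 0 :=
      hH2.eventually (Filter.eventually_lt_atBot 0)
    obtain ⟨u, hu, hsub⟩ := mem_nhdsGT_iff_exists_Ioo_subset.mp hev
    have hu0 : (0:ℝ) < u := hu
    set y : ℝ := min u x / 2 with hy
    have hy0 : 0 < y := by positivity
    have hyu : y < u := by
      have : min u x ≤ u := min_le_left _ _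
      simp only [hy]; linarith
    have hyx : y < x := by
      have : min u x ≤ x := min_le_right _ _
      simp only [hy]; linarith
    have hσy : σ y < 0 := hsub ⟨hy0, hyu⟩
    have hc : ContinuousOn σ (Set.Icc y x) := fun z hz =>
      (hσcont z (lt_of_lt_of_le hy0 hz.1)).continuousWithinAt
    have hiv := intermediate_value_Icc hyx.le hc
    obtain ⟨z, hz, hz0⟩ := hiv ⟨hσy.le, hge⟩
    have := hmin z (lt_of_lt_of_le hy0 hz.1) hz0
    have := hz.2
    linarith
  set f : ℝ → ℝ := fun z => -(1 / σ z) with hf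
  have hfpos : ∀ z : ℝ, 0 < z → z < pm → 0 < f z := by
    intro z h1 h2
    have hσz := hσneg z h1 h2
    have : 1 / σ z < 0 := one_div_neg.mpr hσz
    simp only [hf]; linarith
  have hfcont : ∀ z : ℝ, 0 < z → z < pm → ContinuousAt f z := by
    intro z h1 h2
    exact ((continuousAt_const.div (hσcont z h1) (hσneg z h1 h2).ne)).neg
  have hfcontOn : ContinuousOn f (Set.Ioo 0 pm) := fun z hz =>
    (hfcont z hz.1 hz.2).continuousWithinAt
  -- integrability of f on (0, c] for c < pm
  have hfint : ∀ c : ℝ, 0 < c → c < pm → IntervalIntegrable f MeasureTheory.volume 0 c := by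
    intro c hc hcpm
    have hev : ∀ᶠ z in nhdsWithin 0 (Set.Ioi 0), σ z < -1 :=
      hH2.eventually (Filter.eventually_lt_atBot (-1))
    obtain ⟨u, hu, hsub⟩ := mem_nhdsGT_iff_exists_Ioo_subset.mp hev
    have hu0 : (0:ℝ) < u := hu
    set w : ℝ := min u c / 2 with hw
    have hw0 : 0 < w := by positivity
    have hwu : w < u := by
      have : min u c ≤ u := min_le_left _ _
      simp only [hw]; linarith
    have hwc : w < c := by
      have : min u c ≤ c := min_le_right _ _
      simp only [hw]; linarith
    have hcontOn : ContinuousOn f (Set.Icc w c) := fun z hz =>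
      (hfcont z (lt_of_lt_of_le hw0 hz.1) (lt_of_le_of_lt hz.2 hcpm)).continuousWithinAt
    obtain ⟨C1, hC1⟩ := (isCompact_Icc).exists_bound_of_continuousOn hcontOn
    set M : ℝ := max 1 C1 with hM
    have hbdd : ∀ z ∈ Set.Ioc (0:ℝ) c, ‖f z‖ ≤ M := by
      intro z hz
      rcases lt_or_ge z u with h | h
      · have hσz : σ z < -1 := hsub ⟨hz.1, h⟩
        have hz1 : 1 ≤ -σ z := by linarith
        have hpos0 : 0 < -σ z := by linarith
        have hfz : f z = 1 / (-σ z) := by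
          show -(1 / σ z) = 1 / (-σ z); rw [div_neg]
        rw [hfz, Real.norm_eq_abs, abs_of_pos (div_pos one_pos hpos0)]
        exact le_trans ((div_le_one hpos0).mpr hz1) (le_max_left 1 C1)
      · have : z ∈ Set.Icc w c := ⟨le_of_lt (lt_of_lt_of_le hwu h), hz.2⟩
        exact le_trans (hC1 z this) (le_max_right 1 C1)
    have haesm : AEStronglyMeasurable f (MeasureTheory.volume.restrict (Set.Ioc 0 c)) := by
      refine ContinuousOn.aestronglyMeasurable ?_ measurableSet_Ioc
      exact fun z hz => (hfcont z hz.1 (lt_of_le_of_lt hz.2 hcpm)).continuousWithinAt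
    have hint : MeasureTheory.IntegrableOn f (Set.Ioc 0 c) MeasureTheory.volume := by
      refine ⟨haesm, HasFiniteIntegral.restrict_of_bounded (C := M) measure_Ioc_lt_top ?_⟩
      exact (MeasureTheory.ae_restrict_iff' measurableSet_Ioc).mpr (Filter.Eventually.of_forall hbdd)
    exact (intervalIntegrable_iff_integrableOn_Ioc_of_le hc.le).mpr hint
  set g : ℝ → ℝ := fun c => ∫ z in (0:ℝ)..c, f z with hg
  -- derivative of g
  have hgderiv : ∀ x : ℝ, 0 < x → x < pm → HasDerivAt g (f x) x := by
    intro x hx hxpm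
    exact integral_hasDerivAt_right (hfint x hx hxpm)
      (hfcontOn.stronglyMeasurableAtFilter isOpen_Ioo x ⟨hx, hxpm⟩) (hfcont x hx hxpm)
  -- strict monotonicity of g
  have hgmono : ∀ a b : ℝ, 0 < a → a < b → b < pm → g a < g b := by
    intro a b ha hab hbpm
    have hia := hfint a ha (hab.trans hbpm)
    have hib := hfint b (ha.trans hab) hbpm
    have hiab : IntervalIntegrable f MeasureTheory.volume a b := by
      refine hib.mono_set ?_
      rw [Set.uIcc_of_le hab.le, Set.uIcc_of_le (ha.trans hab).le]
      exact Set.Icc_subset_Icc ha.le le_rfl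
    have hpos : (0:ℝ) < ∫ z in a..b, f z :=
      intervalIntegral_pos_of_pos_on hiab
        (fun z hz => hfpos z (ha.trans hz.1) (hz.2.trans hbpm)) hab
    have hadd : (∫ z in (0:ℝ)..a, f z) + ∫ z in a..b, f z = ∫ z in (0:ℝ)..b, f z :=
      integral_add_adjacent_intervals hia hiab
    simp only [hg]
    linarith
  have hgpos : ∀ c : ℝ, 0 < c → c < pm → 0 < g c := by
    intro c hc hcpm
    exact intervalIntegral_pos_of_pos_on (hfint c hc hcpm)
      (fun z hz => hfpos z hz.1 (hz.2.trans hcpm)) hc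
  -- monotonicity of p on intervals where it stays in (0, pm)
  have hpmono : ∀ a b : ℝ, 0 < a → a < b → (∀ s ∈ Set.Icc a b, p s < pm) → p a < p b := by
    intro a b ha hab hbnd
    have hderiv : ∀ s ∈ Set.Icc a b, HasDerivAt p (-σ (p s)) s := fun s hs =>
      hode s (lt_of_lt_of_le ha hs.1)
    have hcont : ContinuousOn p (Set.Icc a b) := fun s hs =>
      (hderiv s hs).continuousAt.continuousWithinAt
    have hsm : StrictMonoOn p (Set.Icc a b) := by
      refine strictMonoOn_of_deriv_pos (convex_Icc a b) hcont ?_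
      intro s hs
      rw [interior_Icc] at hs
      have hs' : s ∈ Set.Icc a b := Set.Ioo_subset_Icc_self hs
      rw [(hderiv s hs').deriv]
      have : σ (p s) < 0 := hσneg _ (hppos s (ha.trans hs.1)) (hbnd s hs')
      linarith
    exact hsm ⟨le_rfl, hab.le⟩ ⟨hab.le, le_rfl⟩ hab
  intro t ht q hq hqpm hgq
  by_contra hlt
  push_neg at hlt
  -- Step 1: p stays below pm on (0, t]
  have hbelow : ∀ s : ℝ, 0 < s → s ≤ t → p s < pm := by
    by_contra hA
    push_neg at hA
    obtain ⟨s0, hs00, hs0t, hs0pm⟩ := hA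
    set A : Set ℝ := Set.Icc s0 t ∩ p ⁻¹' (Set.Ici pm) with hA'
    have hAne : A.Nonempty := ⟨s0, ⟨le_rfl, hs0t⟩, hs0pm⟩
    have hAbdd : BddAbove A := ⟨t, fun s hs => hs.1.2⟩
    have hAclosed : IsClosed A := by
      have hc : ContinuousOn p (Set.Icc s0 t) := fun s hs =>
        (hode s (lt_of_lt_of_le hs00 hs.1)).continuousAt.continuousWithinAt
      exact hc.preimage_isClosed_of_isClosed isClosed_Icc isClosed_Ici
    set s1 : ℝ := sSup A with hs1
    have hs1mem : s1 ∈ A := hAclosed.csSup_mem hAne hAbdd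
    have hs1le : s1 ≤ t := hs1mem.1.2
    have hs1pos : 0 < s1 := lt_of_lt_of_le hs00 hs1mem.1.1
    have hps1 : pm ≤ p s1 := hs1mem.2
    have hs1t : s1 < t := by
      rcases lt_or_eq_of_le hs1le with h | h
      · exact h
      · exfalso; rw [h] at hps1; linarith
    -- points after s1 have p < pm
    have hafter : ∀ s : ℝ, s1 < s → s ≤ t → p s < pm := by
      intro s hs1s hst
      by_contra hge
      push_neg at hge
      have : s ∈ A := ⟨⟨le_trans hs1mem.1.1 hs1s.le, hst⟩, hge⟩
      have := le_csSup hAbdd this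
      linarith
    -- find s2 ∈ (s1, t) with q < p s2
    have hc1 : ContinuousAt p s1 := (hode s1 hs1pos).continuousAt
    have hqps1 : q < p s1 := lt_of_lt_of_le hqpm hps1
    have hnear : p ⁻¹' (Set.Ioi q) ∈ nhds s1 := hc1 (Ioi_mem_nhds hqps1)
    have hIoo : Set.Ioo s1 t ∈ nhdsWithin s1 (Set.Ioi s1) := Ioo_mem_nhdsGT_of_mem ⟨le_rfl, hs1t⟩
    obtain ⟨s2, hs2, hs2'⟩ :=
      Filter.nonempty_of_mem (Filter.inter_mem (nhdsWithin_le_nhds hnear) hIoo)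
    have hs2q : q < p s2 := hs2
    have hs2mem : s2 ∈ Set.Ioo s1 t := hs2'
    have hps2t : p s2 < p t := by
      refine hpmono s2 t (lt_trans hs1pos hs2mem.1) hs2mem.2 ?_
      intro s hs
      exact hafter s (lt_of_lt_of_le hs2mem.1 hs.1) hs.2
    linarith
  -- Step 2: g (p t) - t is constant along the solution
  have hkey : ∀ ε : ℝ, 0 < ε → ε < t → g (p t) - t = g (p ε) - ε := by
    intro ε hε hεt
    have hcd : ∀ s ∈ Set.Icc ε t, HasDerivAt (fun s => g (p s) - s) 0 s := by
      intro s hs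
      have hs0 : 0 < s := lt_of_lt_of_le hε hs.1
      have hp1 : 0 < p s := hppos s hs0
      have hp2 : p s < pm := hbelow s hs0 hs.2
      have h1 : HasDerivAt (fun s => g (p s)) (f (p s) * (-σ (p s))) s :=
        (hgderiv (p s) hp1 hp2).comp s (hode s hs0)
      have h2 : f (p s) * (-σ (p s)) = 1 := by
        have hσs : σ (p s) ≠ 0 := (hσneg _ hp1 hp2).ne
        show -(1 / σ (p s)) * (-σ (p s)) = 1
        field_simp
      rw [h2] at h1
      simpa [Pi.sub_def] using h1.sub (hasDerivAt_id' (x := s))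
    have hcont : ContinuousOn (fun s => g (p s) - s) (Set.Icc ε t) := fun s hs =>
      (hcd s hs).continuousAt.continuousWithinAt
    have := constant_of_has_deriv_right_zero hcont
      (fun s hs => (hcd s (Set.Ico_subset_Icc_self hs)).hasDerivWithinAt) t
      (Set.right_mem_Icc.mpr hεt.le)
    linarith [this]
  -- Step 3: t ≤ g (p t)
  have hpt0 : 0 < p t := hppos t ht
  have hptpm : p t < pm := hbelow t ht le_rfl
  have hge2 : t ≤ g (p t) := by
    by_contra hlt2
    push_neg at hlt2
    have hgpt0 : 0 < g (p t) := hgpos _ hpt0 hptpm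
    set ε : ℝ := min (t / 2) ((t - g (p t)) / 2) with hε'
    have hε0 : 0 < ε := lt_min (by linarith) (by linarith)
    have hεt : ε < t := lt_of_le_of_lt (min_le_left _ _) (by linarith)
    have hεsmall : ε ≤ (t - g (p t)) / 2 := min_le_right _ _
    have := hkey ε hε0 hεt
    have hpε0 : 0 < p ε := hppos ε hε0
    have hpεpm : p ε < pm := hbelow ε hε0 hεt.le
    have := hgpos (p ε) hpε0 hpεpm
    linarith
  -- Step 4: contradiction via strict monotonicity of g
  have : g (p t) < g q := hgmono (p t) q hpt0 hlt hqpm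
  have hgqt : g q ≤ t := hgq
  linarith
end

section
/- Let σ : (0,∞) → ℝ be locally Lipschitz with σ(p) > 0 for all p > p₊ (where p₊ is the largest root of σ) and ∫_{p₊+1}^∞ dz/σ(z) < ∞. Define h(p) = ∫_p^∞ dz/σ(z) for p > p₊, which is continuous, strictly decreasing, and h(p) → 0 as p → ∞. Then any solution p(t) > 0 of the ODE p'(t) = −σ(p(t)) with p(0) = p₀ > 0 satisfies p(t) ≤ max{p₊ + 1, h⁻¹(t)} for all t > 0. -/
open MeasureTheory

/-- Upper bound for solutions of `p' = −σ(p)`: with `p₊` the largest root of `σ`, `σ > 0` on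
`(p₊,∞)`, `∫_{p₊+1}^∞ dz/σ(z) < ∞` and `h(q) = ∫_q^∞ dz/σ(z)`, any positive solution with
`p(0) = p₀ > 0` satisfies `p(t) ≤ max {p₊ + 1, h⁻¹(t)}` for all `t > 0`.  Since `h` is
continuous and strictly decreasing on `(p₊,∞)`, this is expressed equivalently as: for every
`q > p₊ + 1` with `h(q) ≤ t` one has `p(t) ≤ q`. -/
theorem stmt6 (σ : ℝ → ℝ) (pp : ℝ)
    (hlip : ∀ x : ℝ, 0 < x → ∃ ε > 0, ∃ L : NNReal,
      LipschitzOnWith L σ (Metric.ball x ε ∩ Set.Ioi 0))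
    (hroot : 0 < pp ∧ σ pp = 0 ∧ ∀ q, 0 < q → σ q = 0 → q ≤ pp)
    (hpos : ∀ q, pp < q → 0 < σ q)
    (hint : IntegrableOn (fun z => 1 / σ z) (Set.Ici (pp + 1)))
    (p : ℝ → ℝ) (p₀ : ℝ) (hp₀ : 0 < p₀) (hinit : p 0 = p₀)
    (hppos : ∀ t : ℝ, 0 ≤ t → 0 < p t)
    (hode : ∀ t : ℝ, 0 ≤ t → HasDerivAt p (-σ (p t)) t) :
    ∀ t : ℝ, 0 < t → ∀ q : ℝ, pp + 1 < q →
      (∫ z in Set.Ioi q, 1 / σ z) ≤ t → p t ≤ q := by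
  obtain ⟨hpp_pos, hσpp, hmax⟩ := hroot
  -- continuity of σ above pp
  have hσcont : ∀ y : ℝ, pp < y → ContinuousAt σ y := by
    intro y hy
    obtain ⟨ε, hε, L, hL⟩ := hlip y (hpp_pos.trans hy)
    have hnhds : Metric.ball y ε ∩ Set.Ioi 0 ∈ nhds y :=
      Filter.inter_mem (Metric.ball_mem_nhds y hε) (isOpen_Ioi.mem_nhds (hpp_pos.trans hy))
    exact hL.continuousOn.continuousAt hnhds
  have hfcont : ∀ y : ℝ, pp < y → ContinuousAt (fun z => 1 / σ z) y := fun y hy =>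
    continuousAt_const.div (hσcont y hy) (hpos y hy).ne'
  -- splitting of the tail integral
  have hsplit : ∀ b c : ℝ, pp + 1 ≤ b → b ≤ c →
      (∫ z in Set.Ioi b, 1 / σ z)
        = (∫ z in Set.Ioc b c, 1 / σ z) + ∫ z in Set.Ioi c, 1 / σ z := by
    intro b c hb hbc
    rw [← Set.Ioc_union_Ioi_eq_Ioi hbc,
      setIntegral_union (Set.Ioc_disjoint_Ioi le_rfl) measurableSet_Ioi
        (hint.mono_set (fun z hz => le_trans hb hz.1.le))
        (hint.mono_set (fun z hz => le_trans (le_trans hb hbc) (le_of_lt hz)))]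
  -- derivative of the tail integral
  have hderiv_h : ∀ x : ℝ, pp + 1 < x →
      HasDerivAt (fun y => ∫ z in Set.Ioi y, 1 / σ z) (-(1 / σ x)) x := by
    intro x hx
    have hx' : pp < x := by linarith
    have hii : IntervalIntegrable (fun z => 1 / σ z) volume (pp + 1) x :=
      (hint.mono_set (by rw [Set.uIcc_of_le hx.le]; exact Set.Icc_subset_Ici_self)).intervalIntegrable
    have hmeas : StronglyMeasurableAtFilter (fun z => 1 / σ z) (nhds x) volume :=
      ⟨Set.Ici (pp + 1), Ici_mem_nhds hx, hint.aestronglyMeasurable⟩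
    have hd : HasDerivAt
        (fun y => (∫ z in Set.Ioi (pp + 1), 1 / σ z) - ∫ z in (pp + 1)..y, 1 / σ z)
        (-(1 / σ x)) x := by
      simpa [Pi.sub_def] using (hasDerivAt_const x (∫ z in Set.Ioi (pp + 1), 1 / σ z)).sub
        (intervalIntegral.integral_hasDerivAt_right hii hmeas (hfcont x hx'))
    refine hd.congr_of_eventuallyEq ?_
    filter_upwards [isOpen_Ioi.mem_nhds hx] with y hy
    rw [intervalIntegral.integral_of_le (le_of_lt hy), hsplit (pp + 1) y le_rfl (le_of_lt hy)]
    ring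
  intro t ht q hq hhq
  by_contra hqt
  push_neg at hqt
  have hq' : pp < q := by linarith
  -- the solution stays above q on [0,t]
  have key : ∀ s ∈ Set.Icc (0:ℝ) t, q < p s := by
    by_contra hk
    push_neg at hk
    obtain ⟨s₀, hs₀, hps₀⟩ := hk
    set S : Set ℝ := {s ∈ Set.Icc (0:ℝ) t | p s ≤ q} with hS
    have hSne : S.Nonempty := ⟨s₀, hs₀, hps₀⟩
    have hSbdd : BddAbove S := ⟨t, fun s hs => hs.1.2⟩
    set s₁ := sSup S with hs₁def
    have hs₁le : s₁ ≤ t := csSup_le hSne (fun s hs => hs.1.2)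
    have hs₁0 : 0 ≤ s₁ := le_trans hs₀.1 (le_csSup hSbdd ⟨hs₀, hps₀⟩)
    obtain ⟨u, hu_mono, hu_tendsto, hu_mem⟩ := exists_seq_tendsto_sSup hSne hSbdd
    have hps₁ : p s₁ ≤ q := by
      have hcont : ContinuousAt p s₁ := (hode s₁ hs₁0).continuousAt
      have : Filter.Tendsto (fun n => p (u n)) Filter.atTop (nhds (p s₁)) :=
        (hcont.tendsto).comp hu_tendsto
      exact le_of_tendsto this (Filter.Eventually.of_forall fun n => (hu_mem n).2)
    have hs₁lt : s₁ < t := lt_of_le_of_ne hs₁le (fun h => by rw [h] at hps₁; linarith)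
    have hanti : StrictAntiOn p (Set.Icc s₁ t) := by
      apply strictAntiOn_of_deriv_neg (convex_Icc _ _)
      · exact fun s hs => ((hode s (le_trans hs₁0 hs.1)).continuousAt).continuousWithinAt
      · intro s hs
        rw [interior_Icc] at hs
        have hs0 : 0 ≤ s := le_trans hs₁0 hs.1.le
        have hpsq : q < p s := by
          by_contra hps
          push_neg at hps
          have : s ∈ S := ⟨⟨hs0, hs.2.le⟩, hps⟩
          exact absurd (le_csSup hSbdd this) (not_le.mpr hs.1)
        have : deriv p s = -σ (p s) := (hode s hs0).deriv
        rw [this]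
        have : 0 < σ (p s) := hpos _ (lt_trans hq' hpsq)
        linarith
    have := hanti (Set.left_mem_Icc.mpr hs₁le) (Set.right_mem_Icc.mpr hs₁le) hs₁lt
    linarith
  have ha_lt : ∀ s ∈ Set.Icc (0:ℝ) t, pp + 1 < p s := fun s hs => lt_trans hq (key s hs)
  -- F s = h(p s) - s has zero derivative
  set F : ℝ → ℝ := fun s => (∫ z in Set.Ioi (p s), 1 / σ z) - s with hF
  have hFderiv : ∀ s ∈ Set.Icc (0:ℝ) t, HasDerivAt F 0 s := by
    intro s hs
    have h1 : HasDerivAt (fun y => ∫ z in Set.Ioi y, 1 / σ z) (-(1 / σ (p s))) (p s) :=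
      hderiv_h _ (ha_lt s hs)
    have h2 := hode s hs.1
    have h3 := h1.comp s h2
    have hσps : 0 < σ (p s) := hpos _ (by linarith [key s hs])
    have h5 := h3.sub (hasDerivAt_id s)
    have h4 : -(1 / σ (p s)) * -σ (p s) - 1 = 0 := by field_simp; ring
    rw [h4] at h5
    exact h5
  have hFcont : ContinuousOn F (Set.Icc 0 t) :=
    fun s hs => (hFderiv s hs).continuousAt.continuousWithinAt
  have hconst := constant_of_has_deriv_right_zero hFcont
    (fun s hs => (hFderiv s (Set.mem_Icc_of_Ico hs)).hasDerivWithinAt)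
  have hFt : F t = F 0 := hconst t (Set.right_mem_Icc.mpr ht.le)
  -- derive the contradiction
  have hp0 : q < p 0 := key 0 (Set.left_mem_Icc.mpr ht.le)
  have hpt : q < p t := key t (Set.right_mem_Icc.mpr ht.le)
  have h0nonneg : 0 ≤ ∫ z in Set.Ioi (p 0), 1 / σ z := by
    apply setIntegral_nonneg measurableSet_Ioi
    intro z hz
    have : 0 < σ z := hpos z (by have := Set.mem_Ioi.mp hz; linarith)
    positivity
  have hcpos : 0 < ∫ z in Set.Ioc q (p t), 1 / σ z := by
    have hnn : 0 ≤ᵐ[volume.restrict (Set.Ioc q (p t))] fun z => 1 / σ z := by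
      filter_upwards [ae_restrict_mem measurableSet_Ioc] with z hz
      have : 0 < σ z := hpos z (lt_trans hq' hz.1)
      positivity
    have hi : IntegrableOn (fun z => 1 / σ z) (Set.Ioc q (p t)) :=
      hint.mono_set (fun z hz => le_trans hq.le hz.1.le)
    rw [setIntegral_pos_iff_support_of_nonneg_ae hnn hi]
    have hsub : Set.Ioc q (p t) ⊆ Function.support fun z => 1 / σ z := by
      intro z hz
      have : 0 < σ z := hpos z (lt_trans hq' hz.1)
      simp only [Function.mem_support]
      positivity
    have : (Function.support fun z => 1 / σ z) ∩ Set.Ioc q (p t) = Set.Ioc q (p t) :=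
      Set.inter_eq_self_of_subset_right hsub
    rw [this, Real.volume_Ioc]
    simp only [ENNReal.ofReal_pos]
    linarith
  have hsplitq := hsplit q (p t) hq.le hqt.le
  have : (∫ z in Set.Ioi (p t), 1 / σ z) - t = (∫ z in Set.Ioi (p 0), 1 / σ z) - 0 := hFt
  linarith
end

section
/- Let σ : (0,∞) → ℝ be locally Lipschitz, with σ(p) → −∞ as p → 0+, and suppose W(p) = ∫₁^p σ(z)dz is convex on (0,θ) for some 0 < θ. Then for μ > θ, every local solution of the system ṗᵢ = −σ(pᵢ) + Σⱼ λⱼ σ(pⱼ) with pᵢ(0) > 0 and Σⱼ λⱼ pⱼ(0) = μ (λⱼ > 0, Σλⱼ = 1) extends to a global solution on [0,∞) with pᵢ(t) > 0 for all t ≥ 0. -/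
open Finset
open Set Metric

section helpers

lemma lipw {f : ℝ → ℝ} {K K' : NNReal} {s : Set ℝ} (h : LipschitzOnWith K f s) (hK : K ≤ K') :
    LipschitzOnWith K' f s :=
  fun x hx y hy => (h hx hy).trans (mul_le_mul_left (ENNReal.coe_le_coe.2 hK) _)

/-- Glue two Lipschitz-on-interval facts at a shared endpoint. -/
lemma lip_glue {f : ℝ → ℝ} {L : NNReal} {a b c : ℝ} (hab : a ≤ b) (hbc : b ≤ c)
    (h1 : LipschitzOnWith L f (Icc a b)) (h2 : LipschitzOnWith L f (Icc b c)) :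
    LipschitzOnWith L f (Icc a c) := by
  apply LipschitzOnWith.of_dist_le_mul
  have key : ∀ x ∈ Icc a c, ∀ y ∈ Icc a c, x ≤ y → dist (f x) (f y) ≤ L * dist x y := by
    intro x hx y hy hxy
    rcases le_total y b with h | h
    · exact h1.dist_le_mul x ⟨hx.1, le_trans hxy h⟩ y ⟨hy.1, h⟩
    rcases le_total b x with h' | h'
    · exact h2.dist_le_mul x ⟨h', hx.2⟩ y ⟨le_trans h' hxy, hy.2⟩
    · calc dist (f x) (f y) ≤ dist (f x) (f b) + dist (f b) (f y) := dist_triangle _ _ _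
        _ ≤ L * dist x b + L * dist b y :=
          add_le_add (h1.dist_le_mul x ⟨hx.1, h'⟩ b ⟨hab, le_rfl⟩)
            (h2.dist_le_mul b ⟨le_rfl, hbc⟩ y ⟨h, hy.2⟩)
        _ = L * (dist x b + dist b y) := by ring
        _ = L * dist x y := by
          rw [Real.dist_eq, Real.dist_eq, Real.dist_eq, abs_of_nonpos (by linarith),
            abs_of_nonpos (by linarith), abs_of_nonpos (by linarith)]
          ring
  intro x hx y hy
  rcases le_total x y with h | h
  · exact key x hx y hy h
  · rw [dist_comm (f x), dist_comm x]; exact key y hy x hx h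

/-- A function locally Lipschitz on `(0,∞)` is Lipschitz on any `Icc u v ⊆ (0,∞)`. -/
lemma lip_on_Icc (σ : ℝ → ℝ)
    (hlip : ∀ x : ℝ, 0 < x → ∃ ε > 0, ∃ L : NNReal,
      LipschitzOnWith L σ (Metric.ball x ε ∩ Set.Ioi 0))
    {u v : ℝ} (hu : 0 < u) : ∃ L : NNReal, LipschitzOnWith L σ (Icc u v) := by
  rcases lt_or_ge v u with h | huv
  · exact ⟨1, by rw [Icc_eq_empty (not_le.mpr h)]; exact lipschitzOnWith_empty _ _⟩
  set s : Set ℝ := {b | b ∈ Icc u v ∧ ∃ L : NNReal, LipschitzOnWith L σ (Icc u b)} with hs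
  have hus : u ∈ s := by
    refine ⟨⟨le_rfl, huv⟩, 1, LipschitzOnWith.of_dist_le_mul ?_⟩
    intro x hx y hy
    have : x = y := le_antisymm (hx.2.trans hy.1) (hy.2.trans hx.1)
    simp [this]
  have hbdd : BddAbove s := ⟨v, fun b hb => hb.1.2⟩
  set c := sSup s with hc
  have hcs : u ≤ c := le_csSup hbdd hus
  have hcv : c ≤ v := csSup_le ⟨u, hus⟩ (fun b hb => hb.1.2)
  have hc0 : 0 < c := lt_of_lt_of_le hu hcs
  obtain ⟨ε, hε, L₀, hL₀⟩ := hlip c hc0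
  set δ := min ε c / 2 with hδdef
  have hδ : 0 < δ := by positivity
  have hsub : Icc (c - δ) (c + δ) ⊆ Metric.ball c ε ∩ Set.Ioi 0 := by
    intro x hx
    have h1 : δ ≤ ε / 2 := by
      rw [hδdef]; gcongr; exact min_le_left _ _
    have h2 : δ ≤ c / 2 := by
      rw [hδdef]; gcongr; exact min_le_right _ _
    constructor
    · rw [mem_ball, Real.dist_eq, abs_lt]
      constructor <;> [linarith [hx.1]; linarith [hx.2]]
    · show 0 < x
      linarith [hx.1]
  have hL₀' : LipschitzOnWith L₀ σ (Icc (c - δ) (c + δ)) := hL₀.mono hsub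
  obtain ⟨b, hbs, hbgt⟩ : ∃ b ∈ s, c - δ < b := by
    by_contra h
    push_neg at h
    have : c ≤ c - δ := csSup_le ⟨u, hus⟩ h
    linarith
  have hbc : b ≤ c := le_csSup hbdd hbs
  obtain ⟨hbIcc, L₁, hL₁⟩ := hbs
  obtain ⟨hub, hbv⟩ := hbIcc
  have hglue : LipschitzOnWith (max L₁ L₀) σ (Icc u (c + δ)) := by
    refine lip_glue hub (by linarith) (lipw hL₁ (le_max_left _ _))
      (lipw (hL₀'.mono (Icc_subset_Icc (by linarith) le_rfl)) (le_max_right _ _))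
  rcases le_or_gt (c + δ) v with h | h
  · exfalso
    have : c + δ ∈ s := ⟨⟨by linarith, h⟩, _, hglue⟩
    have := le_csSup hbdd this
    linarith
  · exact ⟨max L₁ L₀, hglue.mono (Icc_subset_Icc le_rfl (by linarith))⟩

/-- Global existence for a globally Lipschitz, bounded, time-independent vector field. -/
lemma global_ode {E : Type*} [NormedAddCommGroup E] [NormedSpace ℝ E] [CompleteSpace E]
    (F : E → E) (K : NNReal) (hF : LipschitzWith K F) {C : ℝ} (hC : ∀ x, ‖F x‖ ≤ C)
    (x₀ : E) : ∃ f : ℝ → E, f 0 = x₀ ∧ ∀ t, HasDerivAt f (F (f t)) t := by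
  have hC0 : 0 ≤ C := (norm_nonneg _).trans (hC x₀)
  -- a solution on [-(n+1), n+1] for each n
  have hex : ∀ n : ℕ, ∃ f : ℝ → E, f 0 = x₀ ∧ ∀ t ∈ Icc (-(n+1:ℝ)) (n+1),
      HasDerivWithinAt f (F (f t)) (Icc (-(n+1:ℝ)) (n+1)) t := by
    intro n
    have hpl : IsPicardLindelof (fun _ : ℝ => F) (tmin := -(n+1:ℝ)) (tmax := n+1)
        ⟨0, by constructor <;> [linarith [Nat.cast_nonneg (α := ℝ) n];
          linarith [Nat.cast_nonneg (α := ℝ) n]]⟩ x₀ (C.toNNReal * (n+1)) 0 C.toNNReal K :=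
      IsPicardLindelof.of_time_independent (fun x _ => (hC x).trans (Real.le_coe_toNNReal C))
        hF.lipschitzOnWith (by simp)
    exact hpl.exists_eq_forall_mem_Icc_hasDerivWithinAt₀
  choose f hf0 hfd using hex
  -- interior derivative
  have hder : ∀ n : ℕ, ∀ t ∈ Ioo (-(n+1:ℝ)) (n+1), HasDerivAt (f n) (F (f n t)) t := by
    intro n t ht
    exact (hfd n t (Ioo_subset_Icc_self ht)).hasDerivAt (Icc_mem_nhds ht.1 ht.2)
  -- agreement
  have hagree : ∀ m n : ℕ, m ≤ n → EqOn (f m) (f n) (Icc (-(m+1:ℝ)) (m+1)) := by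
    intro m n hmn
    have hmn' : (m+1:ℝ) ≤ (n+1:ℝ) := by exact_mod_cast by omega
    have h0 : (0:ℝ) ∈ Ioo (-(m+1:ℝ)) (m+1) := by
      constructor <;> [linarith [Nat.cast_nonneg (α := ℝ) m]; linarith [Nat.cast_nonneg (α := ℝ) m]]
    refine ODE_solution_unique_of_mem_Icc (v := fun _ : ℝ => F) (s := fun _ => univ)
      (fun t _ => hF.lipschitzOnWith) h0 ?_ (fun t ht => hder m t ht) (fun _ _ => trivial)
      ?_ ?_ (fun _ _ => trivial) (by rw [hf0 m, hf0 n])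
    · exact fun t ht => ((hfd m t ht).continuousWithinAt)
    · intro t ht
      exact ((hfd n t ⟨by linarith [ht.1], by linarith [ht.2]⟩).continuousWithinAt).mono
        (Icc_subset_Icc (by linarith) (by linarith))
    · intro t ht
      exact hder n t ⟨by linarith [ht.1], by linarith [ht.2]⟩
  set p : ℝ → E := fun t => f ⌊|t|⌋₊ t with hp
  have hmem : ∀ t : ℝ, ∀ n : ℕ, ⌊|t|⌋₊ ≤ n → t ∈ Icc (-(⌊|t|⌋₊+1:ℝ)) (⌊|t|⌋₊+1) := by
    intro t n _
    have h1 : |t| < (⌊|t|⌋₊:ℝ) + 1 := Nat.lt_floor_add_one _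
    rw [abs_lt] at h1
    exact ⟨by linarith [h1.1], by linarith [h1.2]⟩
  have hpf : ∀ t : ℝ, ∀ n : ℕ, ⌊|t|⌋₊ ≤ n → p t = f n t := by
    intro t n hn
    exact hagree ⌊|t|⌋₊ n hn (hmem t ⌊|t|⌋₊ le_rfl)
  refine ⟨p, ?_, ?_⟩
  · show f ⌊|(0:ℝ)|⌋₊ 0 = x₀
    simp only [abs_zero, Nat.floor_zero]
    exact hf0 0
  · intro t
    set n := ⌊|t|⌋₊ with hn
    have htIoo : t ∈ Ioo (-(n+1:ℝ)) (n+1) := by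
      have h1 : |t| < (n:ℝ) + 1 := Nat.lt_floor_add_one _
      rw [abs_lt] at h1
      exact ⟨by linarith [h1.1], by linarith [h1.2]⟩
    have heq : p =ᶠ[nhds t] f n := by
      filter_upwards [IsOpen.mem_nhds isOpen_Ioo htIoo] with s hs
      have hsn : ⌊|s|⌋₊ ≤ n := by
        have h1 : |s| < (n:ℝ) + 1 := abs_lt.mpr ⟨by linarith [hs.1], by linarith [hs.2]⟩
        have h2 : ⌊|s|⌋₊ < n + 1 := by
          rw [Nat.floor_lt (abs_nonneg s)]
          exact_mod_cast h1
        omega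
      exact hpf s n hsn
    have hd := hder n t htIoo
    have : p t = f n t := hpf t n le_rfl
    rw [← this] at hd
    exact hd.congr_of_eventuallyEq heq
end helpers


/-- Global existence for the finite-dimensional system: if `σ` is locally Lipschitz on `(0,∞)`,
`σ(p) → −∞` as `p → 0+`, `σ` is nondecreasing on `(0,θ)` (i.e. `W` convex there), and the
initial data is positive with weighted mean `μ > θ`, then there is a global solution on
`[0,∞)` with all components positive for all time. -/
theorem stmt8 (σ : ℝ → ℝ) (θ : ℝ) (hθ : 0 < θ)
    (hlip : ∀ x : ℝ, 0 < x → ∃ ε > 0, ∃ L : NNReal,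
      LipschitzOnWith L σ (Metric.ball x ε ∩ Set.Ioi 0))
    (hH2 : Filter.Tendsto σ (nhdsWithin 0 (Set.Ioi 0)) Filter.atBot)
    (hmono : MonotoneOn σ (Set.Ioo 0 θ))
    (N : ℕ) (lam : Fin N → ℝ) (hlam : ∀ j, 0 < lam j) (hsum : ∑ j, lam j = 1)
    (μ : ℝ) (hμ : θ < μ)
    (p₀ : Fin N → ℝ) (hp₀ : ∀ i, 0 < p₀ i) (hmean : ∑ j, lam j * p₀ j = μ) :
    ∃ p : Fin N → ℝ → ℝ, (∀ i, p i 0 = p₀ i) ∧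
      (∀ i, ∀ t : ℝ, 0 ≤ t → 0 < p i t) ∧
      (∀ i, ∀ t : ℝ, 0 ≤ t →
        HasDerivAt (p i) (-σ (p i t) + ∑ j, lam j * σ (p j t)) t) := by
  classical
  -- N is positive
  have hN : 0 < N := by
    rcases Nat.eq_zero_or_pos N with h | h
    · subst h; simp at hsum
    · exact h
  haveI : Nonempty (Fin N) := ⟨⟨0, hN⟩⟩
  obtain ⟨jm, -, hjm⟩ := Finset.exists_min_image Finset.univ lam Finset.univ_nonempty
  have hjm' : ∀ j, lam jm ≤ lam j := fun j => hjm j (Finset.mem_univ j)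
  have hlm0 : 0 < lam jm := hlam jm
  have hlm1 : lam jm ≤ 1 := by
    rw [← hsum]
    exact Finset.single_le_sum (fun j _ => (hlam j).le) (Finset.mem_univ jm)
  have hμ0 : 0 < μ := hθ.trans hμ
  set R' := μ / lam jm with hR'def
  have hμR' : μ ≤ R' := by
    rw [hR'def, le_div_iff₀ hlm0]
    nlinarith
  set b := θ / 2 with hbdef
  have hb0 : 0 < b := by positivity
  have hbθ : b < θ := by rw [hbdef]; linarith
  have hbμ : b < μ := hbθ.trans hμ
  have hbR' : b ≤ R' := le_trans hbμ.le hμR'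
  -- minimum of σ on [b, R']
  obtain ⟨Lb, hLb⟩ := lip_on_Icc σ hlip hb0 (v := R')
  obtain ⟨zmin, hzmem, hzmin⟩ :=
    isCompact_Icc.exists_isMinOn (nonempty_Icc.mpr hbR') hLb.continuousOn
  set m := σ zmin with hmdef
  -- choose the barrier level a
  have hev : ∀ᶠ x in nhdsWithin 0 (Set.Ioi 0), σ x < m - 1 :=
    hH2.eventually (Filter.eventually_lt_atBot (m - 1))
  obtain ⟨δ, hδ0, hδsub⟩ := Metric.mem_nhdsWithin_iff.mp hev
  obtain ⟨im, -, him⟩ := Finset.exists_min_image Finset.univ p₀ Finset.univ_nonempty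
  have him' : ∀ i, p₀ im ≤ p₀ i := fun i => him i (Finset.mem_univ i)
  set a := min (min δ b) (p₀ im) / 2 with hadef
  have ha0 : 0 < a := by
    have := hδ0; have := hb0; have := hp₀ im
    rw [hadef]; positivity
  have haδ : a < δ := by
    have h1 : a ≤ δ / 2 := by rw [hadef]; gcongr; exact (min_le_left _ _).trans (min_le_left _ _)
    linarith
  have hab : a < b := by
    have h1 : a ≤ b / 2 := by rw [hadef]; gcongr; exact (min_le_left _ _).trans (min_le_right _ _)
    linarith
  have ham : ∀ i, a < p₀ i := by
    intro i
    have h1 : a ≤ p₀ im / 2 := by rw [hadef]; gcongr; exact min_le_right _ _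
    have := hp₀ im
    have := him' i
    linarith
  have haσ : σ a < m - 1 := by
    refine hδsub ⟨?_, ha0⟩
    rw [mem_ball, Real.dist_eq, sub_zero, abs_of_pos ha0]
    exact haδ
  have haR' : a ≤ R' := hab.le.trans hbR'
  -- the truncated σ
  obtain ⟨L, hL⟩ := lip_on_Icc σ hlip ha0 (v := R')
  set cl : ℝ → ℝ := fun x => max (min x R') a with hcldef
  have hcl1 : LipschitzWith 1 cl := (LipschitzWith.id.min_const R').max_const a
  have hclmem : ∀ x, cl x ∈ Icc a R' :=
    fun x => ⟨le_max_right _ _, max_le (min_le_right _ _) haR'⟩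
  have hclid : ∀ x ∈ Icc a R', cl x = x := by
    intro x hx
    rw [hcldef]
    simp only [min_eq_left hx.2, max_eq_left hx.1]
  set σ' : ℝ → ℝ := fun x => σ (cl x) with hσ'def
  have hσ'lip : LipschitzWith (L * 1) σ' := by
    rw [← lipschitzOnWith_univ]
    exact hL.comp (hcl1.lipschitzOnWith) (fun x _ => hclmem x)
  set M := |σ a| + (L : ℝ) * (R' - a) with hMdef
  have hσ'bd : ∀ x, |σ' x| ≤ M := by
    intro x
    have h1 : dist (σ (cl x)) (σ a) ≤ (L : ℝ) * dist (cl x) a :=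
      hL.dist_le_mul _ (hclmem x) _ ⟨le_rfl, haR'⟩
    have h2 : dist (cl x) a ≤ R' - a := by
      rw [Real.dist_eq, abs_of_nonneg (by linarith [(hclmem x).1])]
      linarith [(hclmem x).2]
    have h3 : |σ (cl x) - σ a| ≤ (L : ℝ) * (R' - a) := by
      rw [← Real.dist_eq]
      exact h1.trans (by nlinarith [NNReal.coe_nonneg L])
    calc |σ' x| = |σ (cl x) - σ a + σ a| := by rw [hσ'def]; ring_nf
      _ ≤ |σ (cl x) - σ a| + |σ a| := abs_add_le _ _
      _ ≤ M := by rw [hMdef]; linarith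
  -- the vector field
  set F : (Fin N → ℝ) → (Fin N → ℝ) :=
    fun x i => -σ' (x i) + ∑ j, lam j * σ' (x j) with hFdef
  have hlamabs : ∀ (g : Fin N → ℝ) (c : ℝ), (∀ j, |g j| ≤ c) → |∑ j, lam j * g j| ≤ c := by
    intro g c hg
    calc |∑ j, lam j * g j| ≤ ∑ j, |lam j * g j| := Finset.abs_sum_le_sum_abs _ _
      _ ≤ ∑ j, lam j * c := by
        refine Finset.sum_le_sum fun j _ => ?_
        rw [abs_mul, abs_of_pos (hlam j)]
        exact mul_le_mul_of_nonneg_left (hg j) (hlam j).le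
      _ = c := by rw [← Finset.sum_mul, hsum, one_mul]
  have hFlip : LipschitzWith (2 * (L * 1)) F := by
    apply LipschitzWith.of_dist_le_mul
    intro x y
    rw [dist_pi_le_iff (by positivity)]
    intro i
    have hcomp : ∀ j, |σ' (x j) - σ' (y j)| ≤ (L * 1 : NNReal) * dist x y := by
      intro j
      have := hσ'lip.dist_le_mul (x j) (y j)
      rw [Real.dist_eq] at this
      exact this.trans (mul_le_mul_of_nonneg_left (dist_le_pi_dist x y j)
        (NNReal.coe_nonneg _))
    have h2 : |∑ j, lam j * σ' (x j) - ∑ j, lam j * σ' (y j)|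
        ≤ (L * 1 : NNReal) * dist x y := by
      rw [← Finset.sum_sub_distrib]
      simp_rw [← mul_sub]
      exact hlamabs _ _ hcomp
    rw [Real.dist_eq]
    have : F x i - F y i = -(σ' (x i) - σ' (y i))
        + (∑ j, lam j * σ' (x j) - ∑ j, lam j * σ' (y j)) := by
      rw [hFdef]; ring
    rw [this]
    calc |_ + _| ≤ |-(σ' (x i) - σ' (y i))| + |∑ j, lam j * σ' (x j) - ∑ j, lam j * σ' (y j)| :=
          abs_add_le _ _
      _ ≤ (L * 1 : NNReal) * dist x y + (L * 1 : NNReal) * dist x y := by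
          rw [abs_neg]; exact add_le_add (hcomp i) h2
      _ = ((2 * (L * 1) : NNReal) : ℝ) * dist x y := by push_cast; ring
  have hFbd : ∀ x, ‖F x‖ ≤ 2 * M := by
    intro x
    have hM0 : 0 ≤ M := (abs_nonneg _).trans (hσ'bd 0)
    rw [pi_norm_le_iff_of_nonneg (by positivity)]
    intro i
    rw [Real.norm_eq_abs]
    calc |F x i| ≤ |σ' (x i)| + |∑ j, lam j * σ' (x j)| := by
          rw [hFdef]; exact (abs_add_le _ _).trans (by rw [abs_neg])
      _ ≤ M + M := add_le_add (hσ'bd _) (hlamabs _ _ fun j => hσ'bd _)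
      _ = 2 * M := by ring
  -- global solution
  obtain ⟨q, hq0, hqd⟩ := global_ode F _ hFlip hFbd p₀
  have hqi : ∀ i t, HasDerivAt (fun s => q s i) (F (q t) i) t := by
    intro i t
    exact (ContinuousLinearMap.proj (R := ℝ) (φ := fun _ : Fin N => ℝ) i).hasFDerivAt.comp_hasDerivAt
      t (hqd t)
  have hqC : ∀ i, Continuous (fun s => q s i) :=
    fun i => continuous_iff_continuousAt.mpr fun t => (hqi i t).continuousAt
  -- conservation law
  have hsum0 : ∀ x : Fin N → ℝ, ∑ j, lam j * F x j = 0 := by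
    intro x
    have : ∀ j, lam j * F x j = lam j * (∑ k, lam k * σ' (x k)) - lam j * σ' (x j) := by
      intro j; rw [hFdef]; ring
    rw [Finset.sum_congr rfl fun j _ => this j, Finset.sum_sub_distrib, ← Finset.sum_mul, hsum,
      one_mul, sub_self]
  have hcons : ∀ t, ∑ j, lam j * q t j = μ := by
    intro t
    have hg : ∀ s : ℝ, HasDerivAt (fun u => ∑ j, lam j * q u j) 0 s := by
      intro s
      have h := HasDerivAt.fun_sum (u := Finset.univ)
        (fun j _ => ((hqi j s).const_mul (lam j)))
      rwa [hsum0] at h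
    have hconst := is_const_of_deriv_eq_zero (f := fun u : ℝ => ∑ j, lam j * q u j)
      (fun s => (hg s).differentiableAt) (fun s => (hg s).deriv) t 0
    rw [hconst, hq0, hmean]
  -- upper bound from conservation + lower bound
  have hub : ∀ t, (∀ j, a ≤ q t j) → ∀ j, q t j ≤ R' := by
    intro t hget j
    have h1 : lam j * q t j ≤ μ := by
      rw [← hcons t]
      exact Finset.single_le_sum
        (f := fun k => lam k * q t k)
        (fun k _ => mul_nonneg (hlam k).le (ha0.le.trans (hget k))) (Finset.mem_univ j)
    have h2 : q t j ≤ μ / lam j := (le_div_iff₀ (hlam j)).mpr (by linarith [h1, mul_comm (lam j) (q t j)])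
    refine h2.trans ?_
    rw [hR'def]
    exact div_le_div_of_nonneg_left hμ0.le hlm0 (hjm' j)
  -- barrier argument : all components stay above a for t ≥ 0
  have key : ∀ t : ℝ, 0 ≤ t → ∀ i, a < q t i := by
    by_contra hcon
    push_neg at hcon
    set S : Set ℝ := Ici 0 ∩ ⋃ i, (fun t => q t i) ⁻¹' Iic a with hSdef
    have hSne : S.Nonempty := by
      obtain ⟨t, ht0, i, hi⟩ := hcon
      exact ⟨t, ht0, mem_iUnion.mpr ⟨i, hi⟩⟩
    have hSclosed : IsClosed S :=
      isClosed_Ici.inter (isClosed_iUnion_of_finite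
        fun i => IsClosed.preimage (hqC i) isClosed_Iic)
    have hSbdd : BddBelow S := ⟨0, fun t ht => ht.1⟩
    set t₀ := sInf S with ht₀def
    have ht₀S : t₀ ∈ S := hSclosed.csInf_mem hSne hSbdd
    obtain ⟨i₁, hi₁⟩ := mem_iUnion.mp ht₀S.2
    have hi₁' : q t₀ i₁ ≤ a := hi₁
    have ht₀pos : 0 < t₀ := by
      rcases (show (0:ℝ) ≤ t₀ from ht₀S.1).lt_or_eq with h | h
      · exact h
      · exfalso
        rw [← h, hq0] at hi₁'
        exact absurd hi₁' (not_le.mpr (ham i₁))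
    have hbefore : ∀ s, 0 ≤ s → s < t₀ → ∀ j, a < q s j := by
      intro s hs0 hst j
      by_contra hnot
      push_neg at hnot
      exact absurd (csInf_le hSbdd ⟨hs0, mem_iUnion.mpr ⟨j, hnot⟩⟩) (not_le.mpr hst)
    have hge : ∀ j, a ≤ q t₀ j := by
      intro j
      have hne : (nhdsWithin t₀ (Iio t₀)).NeBot := nhdsLT_neBot t₀
      refine ge_of_tendsto (((hqC j).tendsto t₀).mono_left (nhdsWithin_le_nhds : nhdsWithin t₀ (Iio t₀) ≤ nhds t₀)) ?_
      filter_upwards [Ioo_mem_nhdsLT_of_mem (⟨ht₀pos, le_rfl⟩ : t₀ ∈ Ioc 0 t₀)] with s hs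
      exact (hbefore s hs.1.le hs.2 j).le
    have heqa : q t₀ i₁ = a := le_antisymm hi₁' (hge i₁)
    have hle : ∀ j, q t₀ j ≤ R' := hub t₀ hge
    obtain ⟨j₀, hj₀⟩ : ∃ j₀, μ ≤ q t₀ j₀ := by
      by_contra hnot
      push_neg at hnot
      have h2 : ∑ j, lam j * q t₀ j < ∑ j, lam j * μ :=
        Finset.sum_lt_sum_of_nonempty Finset.univ_nonempty
          (fun j _ => mul_lt_mul_of_pos_left (hnot j) (hlam j))
      rw [hcons, ← Finset.sum_mul, hsum, one_mul] at h2
      exact lt_irrefl μ h2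
    have hclq : ∀ j, σ' (q t₀ j) = σ (q t₀ j) := by
      intro j
      rw [hσ'def]
      simp only
      rw [hclid _ ⟨hge j, hle j⟩]
    have hσlb : ∀ j, σ a ≤ σ (q t₀ j) := by
      intro j
      rcases le_or_gt (q t₀ j) b with h | h
      · exact hmono ⟨ha0, hab.trans hbθ⟩ ⟨ha0.trans_le (hge j), lt_of_le_of_lt h hbθ⟩ (hge j)
      · have h2 : m ≤ σ (q t₀ j) := hzmin ⟨h.le, hle j⟩
        linarith
    have hσj₀ : m ≤ σ (q t₀ j₀) := hzmin ⟨hbμ.le.trans hj₀, hle j₀⟩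
    have hdpos : 0 < F (q t₀) i₁ := by
      have hFval : F (q t₀) i₁ = -σ a + ∑ j, lam j * σ (q t₀ j) := by
        rw [hFdef]
        simp only
        rw [hclq i₁, heqa, Finset.sum_congr rfl fun j _ => by rw [hclq j]]
      rw [hFval]
      have hsplit : ∑ j, lam j * σ (q t₀ j) - σ a = ∑ j, lam j * (σ (q t₀ j) - σ a) := by
        simp_rw [mul_sub]
        rw [Finset.sum_sub_distrib, ← Finset.sum_mul, hsum, one_mul]
      have hterm : lam jm * 1 ≤ ∑ j, lam j * (σ (q t₀ j) - σ a) := by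
        have h1 : lam jm * 1 ≤ lam j₀ * (σ (q t₀ j₀) - σ a) := by
          have := hjm' j₀
          nlinarith [hσj₀, haσ, hlam j₀]
        refine h1.trans (Finset.single_le_sum
          (f := fun j => lam j * (σ (q t₀ j) - σ a))
          (fun j _ => mul_nonneg (hlam j).le (by linarith [hσlb j])) (Finset.mem_univ j₀))
      have h3 := hlm0
      linarith [hsplit, hterm]
    -- left slope contradiction
    have hwithin : HasDerivWithinAt (fun s => q s i₁) (F (q t₀) i₁) (Iio t₀) t₀ :=
      (hqi i₁ t₀).hasDerivWithinAt
    rw [hasDerivWithinAt_iff_tendsto_slope,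
      diff_singleton_eq_self (notMem_Iio.mpr le_rfl)] at hwithin
    have hne : (nhdsWithin t₀ (Iio t₀)).NeBot := nhdsLT_neBot t₀
    have hle0 : F (q t₀) i₁ ≤ 0 := by
      refine le_of_tendsto hwithin ?_
      filter_upwards [Ioo_mem_nhdsLT_of_mem (⟨ht₀pos, le_rfl⟩ : t₀ ∈ Ioc 0 t₀),
        self_mem_nhdsWithin] with s hs hs'
      have h1 : a < q s i₁ := hbefore s hs.1.le hs.2 i₁
      rw [slope_def_field]
      apply div_nonpos_of_nonneg_of_nonpos
      · rw [heqa]; linarith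
      · simp only [Set.mem_Iio] at hs'; linarith
    exact absurd hdpos (not_lt.mpr hle0)
  -- conclusion
  refine ⟨fun i t => q t i, fun i => by show q 0 i = p₀ i; rw [hq0], fun i t ht => ha0.trans (key t ht i), ?_⟩
  intro i t ht
  have hget : ∀ j, a ≤ q t j := fun j => (key t ht j).le
  have hlet : ∀ j, q t j ≤ R' := hub t hget
  have hclq : ∀ j, σ' (q t j) = σ (q t j) := by
    intro j
    rw [hσ'def]
    simp only
    rw [hclid _ ⟨hget j, hlet j⟩]
  have hFval : F (q t) i = -σ (q t i) + ∑ j, lam j * σ (q t j) := by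
    rw [hFdef]
    simp only
    rw [hclq i, Finset.sum_congr rfl fun j _ => by rw [hclq j]]
  rw [← hFval]
  exact hqi i t
end

section
/- Let σ : (0,∞) → ℝ be such that W(p) = ∫₁^p σ dz is λ-convex (i.e. (σ(a) − σ(b))(a − b) ≥ −λ(a − b)² for all a,b > 0). Let p, q : [0,T] → L²(0,1) be two solutions of p_t(x,t) = −σ(p(x,t)) + ∫₀¹ σ(p(y,t)) dy with p(x,t), q(x,t) > 0 and ∫₀¹ p dx = ∫₀¹ q dx = μ for all t. Then ∫₀¹ |p(x,t) − q(x,t)|² dx ≤ e^{2λt} ∫₀¹ |p(x,0) − q(x,0)|² dx for all t ∈ [0,T]. -/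
open MeasureTheory Set
set_option maxHeartbeats 1000000


lemma order_preserved {σ : ℝ → ℝ} {lam T : ℝ}
    (hσ : ∀ a b : ℝ, 0 < a → 0 < b → (σ a - σ b) * (a - b) ≥ -lam * (a - b) ^ 2)
    {f g : ℝ → ℝ} {Δ : ℝ → ℝ}
    (hf : ∀ t ∈ Icc (0:ℝ) T, HasDerivAt f (-σ (f t) + Δ t) t)
    (hg : ∀ t ∈ Icc (0:ℝ) T, HasDerivAt g (-σ (g t) + Δ t) t)
    (hfpos : ∀ t ∈ Icc (0:ℝ) T, 0 < f t) (hgpos : ∀ t ∈ Icc (0:ℝ) T, 0 < g t)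
    (h0 : f 0 ≤ g 0) : ∀ t ∈ Icc (0:ℝ) T, f t ≤ g t := by
  intro t₀ ht₀
  by_contra hcon
  push_neg at hcon
  set d : ℝ → ℝ := fun s => f s - g s with hd_def
  have hd : ∀ s ∈ Icc (0:ℝ) T, HasDerivAt d (-(σ (f s) - σ (g s))) s := by
    intro s hs
    have := (hf s hs).fun_sub (hg s hs)
    refine this.congr_deriv ?_
    ring
  have hdc : ∀ s ∈ Icc (0:ℝ) T, ContinuousAt d s := fun s hs => (hd s hs).continuousAt
  have hd0 : d 0 ≤ 0 := sub_nonpos.2 h0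
  have hdt₀ : 0 < d t₀ := sub_pos.2 hcon
  -- the crossing point
  set S : Set ℝ := {s ∈ Icc 0 t₀ | d s ≤ 0} with hS_def
  have hS0 : (0:ℝ) ∈ S := ⟨⟨le_refl _, ht₀.1⟩, hd0⟩
  have hSne : S.Nonempty := ⟨0, hS0⟩
  have hSbdd : BddAbove S := ⟨t₀, fun s hs => hs.1.2⟩
  set τ := sSup S with hτ_def
  have hτ0 : 0 ≤ τ := le_csSup hSbdd hS0
  have hτt₀ : τ ≤ t₀ := csSup_le hSne fun s hs => hs.1.2
  have hτI : τ ∈ Icc (0:ℝ) T := ⟨hτ0, hτt₀.trans ht₀.2⟩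
  have hdτ : d τ ≤ 0 := by
    obtain ⟨u, hu_mono, hu_tend, hu_mem⟩ := exists_seq_tendsto_sSup hSne hSbdd
    have : Filter.Tendsto (fun n => d (u n)) Filter.atTop (nhds (d τ)) :=
      (hdc τ hτI).tendsto.comp hu_tend
    exact le_of_tendsto this (Filter.Eventually.of_forall fun n => (hu_mem n).2)
  have hτlt : τ < t₀ := by
    rcases lt_or_eq_of_le hτt₀ with h | h
    · exact h
    · exact absurd (h ▸ hdτ) (not_le.2 hdt₀)
  have hpos' : ∀ s ∈ Ioc τ t₀, 0 < d s := by
    intro s hs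
    by_contra hle
    push_neg at hle
    exact absurd (le_csSup hSbdd ⟨⟨hτ0.trans hs.1.le, hs.2⟩, hle⟩) (not_le.2 hs.1)
  have hdτ0 : d τ = 0 := by
    refine le_antisymm hdτ ?_
    have htend : Filter.Tendsto (fun n : ℕ => τ + (t₀ - τ) / (n + 1)) Filter.atTop (nhds τ) := by
      have h' := tendsto_one_div_add_atTop_nhds_zero_nat (𝕜 := ℝ)
      have : Filter.Tendsto (fun n : ℕ => (t₀ - τ) / (n + 1)) Filter.atTop (nhds 0) := by
        have := h'.const_mul (t₀ - τ)
        rw [mul_zero] at this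
        exact this.congr (fun n => by rw [mul_one_div])
      simpa using (tendsto_const_nhds.add this)
    have : Filter.Tendsto (fun n : ℕ => d (τ + (t₀ - τ) / (n + 1))) Filter.atTop (nhds (d τ)) :=
      (hdc τ hτI).tendsto.comp htend
    refine ge_of_tendsto this (Filter.Eventually.of_forall fun n => ?_)
    refine (hpos' _ ⟨?_, ?_⟩).le
    · have : 0 < (t₀ - τ) / (n + 1) := div_pos (sub_pos.2 hτlt) (by positivity)
      linarith
    · have h1 : (t₀ - τ) / (n + 1) ≤ t₀ - τ := by
        apply div_le_self (sub_pos.2 hτlt).le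
        simp [le_add_iff_nonneg_left]
      linarith
  -- Gronwall via antitone exp weight
  set G : ℝ → ℝ := fun s => Real.exp (-(2 * lam) * s) * d s ^ 2 with hG_def
  have hG : ∀ s ∈ Icc (0:ℝ) T,
      HasDerivAt G (Real.exp (-(2 * lam) * s) *
        (2 * d s * -(σ (f s) - σ (g s)) - 2 * lam * d s ^ 2)) s := by
    intro s hs
    have hw : HasDerivAt (fun u => Real.exp (-(2 * lam) * u)) (-(2 * lam) * Real.exp (-(2 * lam) * s)) s := by
      have := ((hasDerivAt_id s).const_mul (-(2 * lam))).exp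
      simpa [mul_comm] using this
    have hd2 : HasDerivAt (fun u => d u ^ 2) (2 * d s * -(σ (f s) - σ (g s))) s := by
      have := (hd s hs).fun_pow 2
      simpa [mul_comm, mul_assoc, mul_left_comm] using this
    have := hw.fun_mul hd2
    refine this.congr_deriv ?_
    ring
  have hIcc_sub : Icc τ t₀ ⊆ Icc (0:ℝ) T := fun s hs => ⟨hτ0.trans hs.1, hs.2.trans ht₀.2⟩
  have hanti : AntitoneOn G (Icc τ t₀) := by
    apply antitoneOn_of_deriv_nonpos (convex_Icc τ t₀)
    · exact fun s hs => ((hG s (hIcc_sub hs)).continuousAt).continuousWithinAt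
    · intro s hs
      rw [interior_Icc] at hs
      exact ((hG s (hIcc_sub (Ioo_subset_Icc_self hs))).differentiableAt).differentiableWithinAt
    · intro s hs
      rw [interior_Icc] at hs
      have hsI : s ∈ Icc (0:ℝ) T := hIcc_sub (Ioo_subset_Icc_self hs)
      rw [(hG s hsI).deriv]
      have hkey := hσ (f s) (g s) (hfpos s hsI) (hgpos s hsI)
      have : 2 * d s * -(σ (f s) - σ (g s)) - 2 * lam * d s ^ 2 ≤ 0 := by
        have : (σ (f s) - σ (g s)) * d s ≥ -lam * d s ^ 2 := hkey
        nlinarith [this]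
      exact mul_nonpos_iff.2 (Or.inl ⟨(Real.exp_pos _).le, this⟩)
  have h1 : G t₀ ≤ G τ := hanti ⟨le_refl τ, hτlt.le⟩ ⟨hτlt.le, le_refl t₀⟩ hτlt.le
  have h2 : G τ = 0 := by simp [hG_def, hdτ0]
  have h3 : 0 < G t₀ := mul_pos (Real.exp_pos _) (pow_pos hdt₀ 2)
  linarith



section helpers
variable {σ : ℝ → ℝ} {lam T : ℝ}

lemma sigt_mono (hσ : ∀ a b : ℝ, 0 < a → 0 < b → (σ a - σ b) * (a - b) ≥ -lam * (a - b) ^ 2)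
    {a b : ℝ} (ha : 0 < a) (hab : a ≤ b) : σ a + lam * a ≤ σ b + lam * b := by
  rcases eq_or_lt_of_le hab with rfl | hlt
  · exact le_refl _
  · have h := hσ b a (ha.trans hlt) ha
    nlinarith [h, sub_pos.2 hlt]

lemma exists_bounds {T : ℝ} (hT : 0 ≤ T) {f : ℝ → ℝ} (hc : ContinuousOn f (Icc 0 T))
    (hpos : ∀ s ∈ Icc (0:ℝ) T, 0 < f s) :
    ∃ m M : ℝ, 0 < m ∧ m ≤ M ∧ ∀ s ∈ Icc (0:ℝ) T, f s ∈ Icc m M := by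
  obtain ⟨a, ha, hmin⟩ := isCompact_Icc.exists_isMinOn (nonempty_Icc.2 hT) hc
  obtain ⟨b, hb, hmax⟩ := isCompact_Icc.exists_isMaxOn (nonempty_Icc.2 hT) hc
  exact ⟨f a, f b, hpos a ha, hmin hb, fun s hs => ⟨hmin hs, hmax hs⟩⟩

/-- bound for `σ ∘ f` on `[0,T]` given positive bounds of `f`. -/
lemma sig_bound (hσ : ∀ a b : ℝ, 0 < a → 0 < b → (σ a - σ b) * (a - b) ≥ -lam * (a - b) ^ 2)
    {f : ℝ → ℝ} {m M : ℝ} (hm : 0 < m)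
    (hf : ∀ s ∈ Icc (0:ℝ) T, f s ∈ Icc m M) :
    ∀ s ∈ Icc (0:ℝ) T, |σ (f s)| ≤ max |σ m + lam * m| |σ M + lam * M| + |lam| * M := by
  intro s hs
  obtain ⟨h1, h2⟩ := hf s hs
  have hfpos : 0 < f s := hm.trans_le h1
  have hu : σ (f s) + lam * f s ≤ σ M + lam * M := sigt_mono hσ hfpos h2
  have hl : σ m + lam * m ≤ σ (f s) + lam * f s := sigt_mono hσ hm h1
  have h3 : |σ (f s) + lam * f s| ≤ max |σ m + lam * m| |σ M + lam * M| := by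
    rw [abs_le]
    constructor
    · exact le_trans (neg_le_neg (le_max_left _ _)) (by linarith [neg_abs_le (σ m + lam * m)])
    · exact le_trans hu (le_trans (le_abs_self _) (le_max_right _ _))
  have h4 : |lam * f s| ≤ |lam| * M := by
    rw [abs_mul]
    exact mul_le_mul_of_nonneg_left (by rw [abs_of_pos hfpos]; exact h2) (abs_nonneg _)
  calc |σ (f s)| = |(σ (f s) + lam * f s) - lam * f s| := by ring_nf
    _ ≤ |σ (f s) + lam * f s| + |lam * f s| := abs_sub _ _
    _ ≤ _ := add_le_add h3 h4

/-- measurable representative of `σ ∘ f` on `[0,T]`. -/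
lemma sig_meas (hσ : ∀ a b : ℝ, 0 < a → 0 < b → (σ a - σ b) * (a - b) ≥ -lam * (a - b) ^ 2)
    {f : ℝ → ℝ} {m M : ℝ} (hm : 0 < m) (hfm : Measurable f)
    (hf : ∀ s ∈ Icc (0:ℝ) T, f s ∈ Icc m M) :
    ∃ g : ℝ → ℝ, Measurable g ∧ ∀ s ∈ Icc (0:ℝ) T, g s = σ (f s) := by
  refine ⟨fun s => (σ (max (f s) m) + lam * max (f s) m) - lam * f s, ?_, ?_⟩
  · have hmono : Monotone (fun z => σ (max z m) + lam * max z m) := by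
      intro a b hab
      exact sigt_mono hσ (lt_max_of_lt_right hm) (max_le_max hab (le_refl m))
    exact ((hmono.measurable).comp hfm).sub (hfm.const_mul lam)
  · intro s hs
    have : max (f s) m = f s := max_eq_left (hf s hs).1
    simp only [this]; ring

end helpers


section
variable {σ : ℝ → ℝ} {lam μ T : ℝ}

lemma sigt_mono' (hσ : ∀ a b : ℝ, 0 < a → 0 < b → (σ a - σ b) * (a - b) ≥ -lam * (a - b) ^ 2)
    {a b : ℝ} (ha : 0 < a) (hab : a ≤ b) : σ a + lam * a ≤ σ b + lam * b := by
  rcases eq_or_lt_of_le hab with rfl | hlt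
  · exact le_refl _
  · have h := hσ b a (ha.trans hlt) ha
    nlinarith [h, sub_pos.2 hlt]

lemma delta_integrable (hT : 0 < T) (hμ : 0 < μ)
    (hσ : ∀ a b : ℝ, 0 < a → 0 < b → (σ a - σ b) * (a - b) ≥ -lam * (a - b) ^ 2)
    {p : ℝ → ℝ → ℝ} (hpm : Measurable (Function.uncurry p))
    (hpos : ∀ t ∈ Icc (0:ℝ) T, ∀ x ∈ Ioo (0:ℝ) 1, 0 < p t x)
    (hmean : ∀ t ∈ Icc (0:ℝ) T, (∫ x in Ioo (0:ℝ) 1, p t x) = μ)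
    (hintσ : ∀ t ∈ Icc (0:ℝ) T, IntegrableOn (fun x => σ (p t x)) (Ioo 0 1))
    (hodep : ∀ x ∈ Ioo (0:ℝ) 1, ∀ t ∈ Icc (0:ℝ) T,
      HasDerivAt (fun s => p s x) (-σ (p t x) + ∫ y in Ioo (0:ℝ) 1, σ (p t y)) t) :
    IntegrableOn (fun s => ∫ y in Ioo (0:ℝ) 1, σ (p s y)) (Icc 0 T) := by
  -- basic facts
  have measx : ∀ x : ℝ, Measurable (fun s => p s x) := fun x =>
    hpm.comp (measurable_id.prodMk measurable_const)
  have contx : ∀ x ∈ Ioo (0:ℝ) 1, ContinuousOn (fun s => p s x) (Icc 0 T) := by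
    intro x hx t ht
    exact ((hodep x hx t ht).continuousAt).continuousWithinAt
  have intp : ∀ s ∈ Icc (0:ℝ) T, IntegrableOn (fun y => p s y) (Ioo 0 1) := by
    intro s hs
    by_contra h
    have := hmean s hs
    rw [integral_undef h] at this
    linarith
  have intst : ∀ s ∈ Icc (0:ℝ) T,
      IntegrableOn (fun y => σ (p s y) + lam * p s y) (Ioo 0 1) := fun s hs =>
    (hintσ s hs).add ((intp s hs).const_mul lam)
  -- reference point
  set x₀ : ℝ := 2⁻¹ with hx₀_def
  have hx₀ : x₀ ∈ Ioo (0:ℝ) 1 := by constructor <;> norm_num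
  obtain ⟨m, M, hm, hmM, hbnd⟩ := exists_bounds hT.le (contx x₀ hx₀)
    (fun s hs => hpos s hs x₀ hx₀)
  set Kt : ℝ := max |σ m + lam * m| |σ M + lam * M| with hKt_def
  have hKt0 : 0 ≤ Kt := le_trans (abs_nonneg _) (le_max_left _ _)
  have hKt : ∀ s ∈ Icc (0:ℝ) T, |σ (p s x₀) + lam * p s x₀| ≤ Kt := by
    intro s hs
    obtain ⟨h1, h2⟩ := hbnd s hs
    have hfpos : 0 < p s x₀ := hm.trans_le h1
    have hu : σ (p s x₀) + lam * p s x₀ ≤ σ M + lam * M := sigt_mono hσ hfpos h2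
    have hl : σ m + lam * m ≤ σ (p s x₀) + lam * p s x₀ := sigt_mono hσ hm h1
    rw [abs_le]
    constructor
    · calc -Kt ≤ -|σ m + lam * m| := neg_le_neg (le_max_left _ _)
        _ ≤ σ m + lam * m := neg_abs_le _
        _ ≤ _ := hl
    · exact le_trans hu (le_trans (le_abs_self _) (le_max_right _ _))
  have IntSx₀ : IntegrableOn (fun s => σ (p s x₀)) (Icc 0 T) := by
    obtain ⟨g, hgm, hge⟩ := sig_meas hσ hm (measx x₀) hbnd
    refine Integrable.mono' (g := fun _ => Kt + |lam| * M)
      (integrable_const _) ?_ ?_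
    · exact (hgm.aestronglyMeasurable).congr
        (((ae_restrict_mem measurableSet_Icc).mono (fun s hs => hge s hs)))
    · refine (ae_restrict_mem measurableSet_Icc).mono (fun s hs => ?_)
      have := sig_bound hσ hm hbnd s hs
      simpa [Real.norm_eq_abs, hKt_def] using this
  have Intpx₀ : IntegrableOn (fun s => p s x₀) (Icc 0 T) :=
    (contx x₀ hx₀).integrableOn_compact isCompact_Icc
  set K₁ : ℝ := Kt * T + (2 * M + |lam| * (M * T)) with hK₁_def
  have key : ∀ y ∈ Ioo (0:ℝ) 1,
      IntegrableOn (fun s => σ (p s y) + lam * p s y) (Icc 0 T) ∧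
      (∫ s in Icc (0:ℝ) T, |σ (p s y) + lam * p s y|) ≤
        K₁ + (p 0 y + p T y + |lam| * ∫ s in Icc (0:ℝ) T, p s y) := by
    intro y hy
    obtain ⟨my, My, hmy, hmyMy, hbndy⟩ := exists_bounds hT.le (contx y hy)
      (fun s hs => hpos s hs y hy)
    have hpy : ∀ s ∈ Icc (0:ℝ) T, 0 < p s y := fun s hs => hpos s hs y hy
    have Intpy : IntegrableOn (fun s => p s y) (Icc 0 T) :=
      (contx y hy).integrableOn_compact isCompact_Icc
    have IntSy : IntegrableOn (fun s => σ (p s y)) (Icc 0 T) := by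
      obtain ⟨g, hgm, hge⟩ := sig_meas hσ hmy (measx y) hbndy
      refine Integrable.mono'
        (g := fun _ => max |σ my + lam * my| |σ My + lam * My| + |lam| * My)
        (integrable_const _) ?_ ?_
      · exact (hgm.aestronglyMeasurable).congr
          ((ae_restrict_mem measurableSet_Icc).mono (fun s hs => hge s hs))
      · refine (ae_restrict_mem measurableSet_Icc).mono (fun s hs => ?_)
        simpa [Real.norm_eq_abs] using sig_bound hσ hmy hbndy s hs
    have IntSty : IntegrableOn (fun s => σ (p s y) + lam * p s y) (Icc 0 T) :=
      IntSy.add (Intpy.const_mul lam)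
    have Intd : IntegrableOn (fun s => p s x₀ - p s y) (Icc 0 T) := Intpx₀.sub Intpy
    have hd : ∀ s ∈ Icc (0:ℝ) T,
        HasDerivAt (fun u => p u x₀ - p u y) (σ (p s y) - σ (p s x₀)) s := by
      intro s hs
      have h1 := (hodep x₀ hx₀ s hs).fun_sub (hodep y hy s hs)
      refine h1.congr_deriv ?_
      ring
    have IntDd : IntegrableOn (fun s => σ (p s y) - σ (p s x₀)) (Icc 0 T) :=
      IntSy.sub IntSx₀
    have hFTC : ∫ s in Icc (0:ℝ) T, (σ (p s y) - σ (p s x₀))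
        = (p T x₀ - p T y) - (p 0 x₀ - p 0 y) := by
      rw [integral_Icc_eq_integral_Ioc, ← intervalIntegral.integral_of_le hT.le]
      exact intervalIntegral.integral_eq_sub_of_hasDerivAt
        (fun s hs => hd s (by rwa [uIcc_of_le hT.le] at hs))
        ((intervalIntegrable_iff_integrableOn_Ioc_of_le hT.le).2
          (IntDd.mono_set Ioc_subset_Icc_self))
    have hsplit : ∫ s in Icc (0:ℝ) T,
        ((σ (p s x₀) + lam * p s x₀) - (σ (p s y) + lam * p s y))
        = ((p 0 x₀ - p 0 y) - (p T x₀ - p T y))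
          + lam * ∫ s in Icc (0:ℝ) T, (p s x₀ - p s y) := by
      have e1 : (fun s => (σ (p s x₀) + lam * p s x₀) - (σ (p s y) + lam * p s y))
          = fun s => (-(σ (p s y) - σ (p s x₀))) + lam * (p s x₀ - p s y) := by
        funext s; ring
      have i1 : IntegrableOn (fun s => -(σ (p s y) - σ (p s x₀))) (Icc 0 T) := IntDd.neg
      have i2 : IntegrableOn (fun s => lam * (p s x₀ - p s y)) (Icc 0 T) :=
        Intd.const_mul lam
      rw [e1, integral_add i1 i2, integral_neg, integral_const_mul, hFTC]
      ring
    refine ⟨IntSty, ?_⟩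
    -- pointwise: |st y| ≤ Kt + |sdiff|
    have hptw : ∀ s ∈ Icc (0:ℝ) T, |σ (p s y) + lam * p s y| ≤
        Kt + |(σ (p s x₀) + lam * p s x₀) - (σ (p s y) + lam * p s y)| := by
      intro s hs
      have h1 := hKt s hs
      calc |σ (p s y) + lam * p s y|
          = |(σ (p s x₀) + lam * p s x₀)
            - ((σ (p s x₀) + lam * p s x₀) - (σ (p s y) + lam * p s y))| := by ring_nf
        _ ≤ |σ (p s x₀) + lam * p s x₀|
            + |(σ (p s x₀) + lam * p s x₀) - (σ (p s y) + lam * p s y)| := abs_sub _ _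
        _ ≤ _ := add_le_add_left h1 _
    have hTmeas : (volume (Icc (0:ℝ) T)).toReal = T := by
      rw [Real.volume_Icc, ENNReal.toReal_ofReal (by linarith)]
      ring
    have Intsd : IntegrableOn
        (fun s => (σ (p s x₀) + lam * p s x₀) - (σ (p s y) + lam * p s y)) (Icc 0 T) :=
      (IntSx₀.add (Intpx₀.const_mul lam)).sub IntSty
    have habs : (∫ s in Icc (0:ℝ) T, |σ (p s y) + lam * p s y|) ≤
        Kt * T + ∫ s in Icc (0:ℝ) T,
          |(σ (p s x₀) + lam * p s x₀) - (σ (p s y) + lam * p s y)| := by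
      have hconst : IntegrableOn (fun _ : ℝ => Kt) (Icc 0 T) :=
        integrableOn_const measure_Icc_lt_top.ne
      have h1 : (∫ s in Icc (0:ℝ) T, |σ (p s y) + lam * p s y|) ≤
          ∫ s in Icc (0:ℝ) T, (Kt +
            |(σ (p s x₀) + lam * p s x₀) - (σ (p s y) + lam * p s y)|) :=
        setIntegral_mono_on IntSty.abs (hconst.add Intsd.abs)
          measurableSet_Icc hptw
      have h3 : (∫ s in Icc (0:ℝ) T, (Kt +
          |(σ (p s x₀) + lam * p s x₀) - (σ (p s y) + lam * p s y)|))
          = (∫ _ in Icc (0:ℝ) T, Kt) + ∫ s in Icc (0:ℝ) T,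
            |(σ (p s x₀) + lam * p s x₀) - (σ (p s y) + lam * p s y)| :=
        integral_add hconst Intsd.abs
      have h4 : (∫ _ in Icc (0:ℝ) T, Kt) = Kt * T := by
        rw [setIntegral_const, measureReal_def, hTmeas, smul_eq_mul, mul_comm]
      linarith [h1, h3.le, h3.ge]
    -- bound on ∫ |sdiff| by case analysis on the initial order
    have hIy : (∫ s in Icc (0:ℝ) T,
        |(σ (p s x₀) + lam * p s x₀) - (σ (p s y) + lam * p s y)|) ≤
        (2 * M + |lam| * (M * T)) + (p 0 y + p T y + |lam| * ∫ s in Icc (0:ℝ) T, p s y) := by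
      have hintpynn : 0 ≤ ∫ s in Icc (0:ℝ) T, p s y :=
        setIntegral_nonneg measurableSet_Icc (fun s hs => (hpy s hs).le)
      rcases le_total (p 0 y) (p 0 x₀) with hc | hc
      · -- p (s,y) ≤ p (s,x₀) for all time
        have hord := order_preserved hσ (fun t ht => hodep y hy t ht)
          (fun t ht => hodep x₀ hx₀ t ht) hpy (fun s hs => hm.trans_le (hbnd s hs).1) hc
        have hsd_nn : ∀ s ∈ Icc (0:ℝ) T,
            0 ≤ (σ (p s x₀) + lam * p s x₀) - (σ (p s y) + lam * p s y) := fun s hs =>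
          sub_nonneg.2 (sigt_mono hσ (hpy s hs) (hord s hs))
        have e2 : (∫ s in Icc (0:ℝ) T,
            |(σ (p s x₀) + lam * p s x₀) - (σ (p s y) + lam * p s y)|)
            = ∫ s in Icc (0:ℝ) T,
              ((σ (p s x₀) + lam * p s x₀) - (σ (p s y) + lam * p s y)) :=
          setIntegral_congr_fun measurableSet_Icc (fun s hs => abs_of_nonneg (hsd_nn s hs))
        rw [e2, hsplit]
        have hM0 : (0:ℝ) < M := hm.trans_le hmM
        have hd0 : p 0 x₀ - p 0 y ≤ M := by
          have h5 := (hbnd 0 ⟨le_refl 0, hT.le⟩).2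
          have h6 := hpy 0 ⟨le_refl 0, hT.le⟩
          linarith
        have hdT : 0 ≤ p T x₀ - p T y :=
          sub_nonneg.2 (hord T ⟨hT.le, le_refl T⟩)
        have habsd : |∫ s in Icc (0:ℝ) T, (p s x₀ - p s y)| ≤ M * T := by
          have h1 : |∫ s in Icc (0:ℝ) T, (p s x₀ - p s y)|
              ≤ ∫ s in Icc (0:ℝ) T, |p s x₀ - p s y| := by
            simpa [Real.norm_eq_abs] using
              norm_integral_le_integral_norm (μ := volume.restrict (Icc 0 T))
                (fun s => p s x₀ - p s y)
          have h2 : (∫ s in Icc (0:ℝ) T, |p s x₀ - p s y|)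
              ≤ ∫ s in Icc (0:ℝ) T, (M : ℝ) := by
            refine setIntegral_mono_on Intd.abs
              (integrableOn_const measure_Icc_lt_top.ne) measurableSet_Icc ?_
            intro s hs
            rw [abs_of_nonneg (sub_nonneg.2 (hord s hs))]
            linarith [(hbnd s hs).2, hpy s hs]
          rw [setIntegral_const, measureReal_def, hTmeas, smul_eq_mul, mul_comm T M] at h2
          linarith
        have : lam * (∫ s in Icc (0:ℝ) T, (p s x₀ - p s y)) ≤ |lam| * (M * T) := by
          calc lam * (∫ s in Icc (0:ℝ) T, (p s x₀ - p s y))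
              ≤ |lam * (∫ s in Icc (0:ℝ) T, (p s x₀ - p s y))| := le_abs_self _
            _ = |lam| * |∫ s in Icc (0:ℝ) T, (p s x₀ - p s y)| := abs_mul _ _
            _ ≤ |lam| * (M * T) := mul_le_mul_of_nonneg_left habsd (abs_nonneg _)
        have hp0y : 0 < p 0 y := hpy 0 ⟨le_refl 0, hT.le⟩
        have hpTy : 0 < p T y := hpy T ⟨hT.le, le_refl T⟩
        have hlamint : 0 ≤ |lam| * ∫ s in Icc (0:ℝ) T, p s y :=
          mul_nonneg (abs_nonneg _) hintpynn
        linarith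
      · -- p (s,x₀) ≤ p (s,y) for all time
        have hord := order_preserved hσ (fun t ht => hodep x₀ hx₀ t ht)
          (fun t ht => hodep y hy t ht) (fun s hs => hm.trans_le (hbnd s hs).1) hpy hc
        have hsd_np : ∀ s ∈ Icc (0:ℝ) T,
            (σ (p s x₀) + lam * p s x₀) - (σ (p s y) + lam * p s y) ≤ 0 := fun s hs =>
          sub_nonpos.2 (sigt_mono hσ (hm.trans_le (hbnd s hs).1) (hord s hs))
        have e2 : (∫ s in Icc (0:ℝ) T,
            |(σ (p s x₀) + lam * p s x₀) - (σ (p s y) + lam * p s y)|)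
            = - ∫ s in Icc (0:ℝ) T,
              ((σ (p s x₀) + lam * p s x₀) - (σ (p s y) + lam * p s y)) := by
          rw [← integral_neg]
          exact setIntegral_congr_fun measurableSet_Icc
            (fun s hs => abs_of_nonpos (hsd_np s hs))
        rw [e2, hsplit]
        have hd0 : -(p 0 x₀ - p 0 y) ≤ p 0 y := by
          have := hm.trans_le (hbnd 0 ⟨le_refl 0, hT.le⟩).1
          linarith
        have hdT : -(p T x₀ - p T y) ≤ p T y := by
          have := hm.trans_le (hbnd T ⟨hT.le, le_refl T⟩).1
          linarith
        have habsd : |∫ s in Icc (0:ℝ) T, (p s x₀ - p s y)|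
            ≤ ∫ s in Icc (0:ℝ) T, p s y := by
          have h1 : |∫ s in Icc (0:ℝ) T, (p s x₀ - p s y)|
              ≤ ∫ s in Icc (0:ℝ) T, |p s x₀ - p s y| := by
            simpa [Real.norm_eq_abs] using
              norm_integral_le_integral_norm (μ := volume.restrict (Icc 0 T))
                (fun s => p s x₀ - p s y)
          have h2 : (∫ s in Icc (0:ℝ) T, |p s x₀ - p s y|)
              ≤ ∫ s in Icc (0:ℝ) T, p s y := by
            refine setIntegral_mono_on Intd.abs Intpy measurableSet_Icc ?_
            intro s hs
            rw [abs_of_nonpos (sub_nonpos.2 (hord s hs))]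
            have := hm.trans_le (hbnd s hs).1
            linarith
          linarith
        have : -(lam * (∫ s in Icc (0:ℝ) T, (p s x₀ - p s y)))
            ≤ |lam| * ∫ s in Icc (0:ℝ) T, p s y := by
          calc -(lam * (∫ s in Icc (0:ℝ) T, (p s x₀ - p s y)))
              ≤ |lam * (∫ s in Icc (0:ℝ) T, (p s x₀ - p s y))| := neg_le_abs _
            _ = |lam| * |∫ s in Icc (0:ℝ) T, (p s x₀ - p s y)| := abs_mul _ _
            _ ≤ _ := mul_le_mul_of_nonneg_left habsd (abs_nonneg _)
        have hM0 : (0:ℝ) ≤ M := (hm.trans_le hmM).le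
        have hMT : (0:ℝ) ≤ |lam| * (M * T) := by positivity
        have hdT0 : p T x₀ - p T y ≤ 0 := sub_nonpos.2 (hord T ⟨hT.le, le_refl T⟩)
        have hpTy := hpy T ⟨hT.le, le_refl T⟩
        have hp0y := hpy 0 ⟨le_refl 0, hT.le⟩
        linarith
    linarith [habs, hIy, hK₁_def]
  -- product measure setup
  set νs := volume.restrict (Icc (0:ℝ) T) with hνs_def
  set μy := volume.restrict (Ioo (0:ℝ) 1) with hμy_def
  have hprodae : ∀ᵐ z : ℝ × ℝ ∂(νs.prod μy), z ∈ (Icc (0:ℝ) T) ×ˢ (Ioo (0:ℝ) 1) := by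
    rw [hνs_def, hμy_def, Measure.prod_restrict]
    exact ae_restrict_mem (measurableSet_Icc.prod measurableSet_Ioo)
  have jointAEM : AEMeasurable (fun z : ℝ × ℝ => σ (p z.1 z.2)) (νs.prod μy) := by
    have hFn : ∀ n : ℕ, Measurable (fun z : ℝ × ℝ =>
        (σ (max (p z.1 z.2) (1/(n+1))) + lam * max (p z.1 z.2) (1/(n+1)))
          - lam * p z.1 z.2) := by
      intro n
      have hn : (0:ℝ) < 1/(n+1) := by positivity
      have hmono : Monotone (fun z : ℝ => σ (max z (1/(n+1))) + lam * max z (1/(n+1))) := by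
        intro a b hab
        exact sigt_mono hσ (lt_max_of_lt_right hn) (max_le_max hab (le_refl _))
      have hup : Measurable (fun z : ℝ × ℝ => p z.1 z.2) := hpm
      exact ((hmono.measurable).comp hup).sub (hup.const_mul lam)
    refine aemeasurable_of_tendsto_metrizable_ae Filter.atTop
      (fun n => (hFn n).aemeasurable) ?_
    refine hprodae.mono ?_
    rintro ⟨s, z⟩ hz
    have hpz : 0 < p s z := hpos s hz.1 z hz.2
    obtain ⟨N, hN⟩ := exists_nat_gt (1 / p s z)
    refine tendsto_nhds_of_eventually_eq ?_
    refine Filter.eventually_atTop.2 ⟨N, fun n hn => ?_⟩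
    have h1n : 1/((n:ℝ)+1) ≤ p s z := by
      rw [div_le_iff₀ (by positivity)]
      rw [div_lt_iff₀ hpz] at hN
      have hNn : (N:ℝ) ≤ n := Nat.cast_le.2 hn
      nlinarith [hN, hpz]
    have hmax : max (p s z) (1/((n:ℝ)+1)) = p s z := max_eq_left h1n
    simp only [hmax]
    ring
  have jointAEMst : AEMeasurable
      (fun z : ℝ × ℝ => σ (p z.1 z.2) + lam * p z.1 z.2) (νs.prod μy) :=
    jointAEM.add ((hpm.const_mul lam).aemeasurable)
  have hFae : AEMeasurable
      (fun z : ℝ × ℝ => ENNReal.ofReal |σ (p z.1 z.2) + lam * p z.1 z.2|)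
      (νs.prod μy) :=
    ENNReal.measurable_ofReal.comp_aemeasurable
      (continuous_abs.measurable.comp_aemeasurable jointAEMst)
  -- inner lintegral equals ofReal of the real integral, for y in Ioo
  have hinner : ∀ y ∈ Ioo (0:ℝ) 1,
      (∫⁻ s, ENNReal.ofReal |σ (p s y) + lam * p s y| ∂νs)
        = ENNReal.ofReal (∫ s in Icc (0:ℝ) T, |σ (p s y) + lam * p s y|) := fun y hy =>
    (ofReal_integral_eq_lintegral_ofReal (key y hy).1.abs
      (Filter.Eventually.of_forall fun s => abs_nonneg _)).symm
  -- the p-lintegral swap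
  have hpae : AEMeasurable (fun z : ℝ × ℝ => ENNReal.ofReal (p z.1 z.2)) (νs.prod μy) :=
    (ENNReal.measurable_ofReal.comp hpm).aemeasurable
  have hIccT : νs Set.univ = ENNReal.ofReal T := by
    rw [hνs_def, Measure.restrict_apply_univ, Real.volume_Icc]
    norm_num
  have hIoo1 : μy Set.univ = 1 := by
    rw [hμy_def, Measure.restrict_apply_univ, Real.volume_Ioo]
    norm_num
  have hpswap : (∫⁻ y, (∫⁻ s, ENNReal.ofReal (p s y) ∂νs) ∂μy)
      = ENNReal.ofReal μ * ENNReal.ofReal T := by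
    have h1 : (∫⁻ s, (∫⁻ y, ENNReal.ofReal (p s y) ∂μy) ∂νs)
        = ∫⁻ y, (∫⁻ s, ENNReal.ofReal (p s y) ∂νs) ∂μy :=
      lintegral_lintegral_swap hpae
    rw [← h1]
    have h2 : ∀ s ∈ Icc (0:ℝ) T,
        (∫⁻ y, ENNReal.ofReal (p s y) ∂μy) = ENNReal.ofReal μ := by
      intro s hs
      rw [← (hmean s hs)]
      exact (ofReal_integral_eq_lintegral_ofReal (intp s hs)
        ((ae_restrict_mem measurableSet_Ioo).mono fun y hy => (hpos s hs y hy).le)).symm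
    rw [lintegral_congr_ae (((ae_restrict_mem measurableSet_Icc).mono
      (fun s hs => h2 s hs)) : _ =ᵐ[νs] fun _ => ENNReal.ofReal μ)]
    rw [lintegral_const, hIccT]
  -- measurability of the inner p-lintegral
  have measy : ∀ t : ℝ, Measurable (fun y => p t y) := fun t =>
    hpm.comp (measurable_const.prodMk measurable_id)
  have hΦmeas : Measurable (fun y => ∫⁻ s, ENNReal.ofReal (p s y) ∂νs) := by
    have : Measurable (fun z : ℝ × ℝ => ENNReal.ofReal (p z.2 z.1)) :=
      ENNReal.measurable_ofReal.comp (hpm.comp measurable_swap)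
    exact this.lintegral_prod_right'
  -- the main finiteness bound
  have hA : (∫⁻ y, (∫⁻ s, ENNReal.ofReal |σ (p s y) + lam * p s y| ∂νs) ∂μy) < ⊤ := by
    have hle : (∫⁻ y, (∫⁻ s, ENNReal.ofReal |σ (p s y) + lam * p s y| ∂νs) ∂μy) ≤
        ∫⁻ y, (ENNReal.ofReal K₁ + (ENNReal.ofReal (p 0 y) + ENNReal.ofReal (p T y)
          + ENNReal.ofReal |lam| * (∫⁻ s, ENNReal.ofReal (p s y) ∂νs))) ∂μy := by
      refine lintegral_mono_ae ((ae_restrict_mem measurableSet_Ioo).mono fun y hy => ?_)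
      rw [hinner y hy]
      obtain ⟨hint, hbd⟩ := key y hy
      calc ENNReal.ofReal (∫ s in Icc (0:ℝ) T, |σ (p s y) + lam * p s y|)
          ≤ ENNReal.ofReal (K₁ + (p 0 y + p T y + |lam| * ∫ s in Icc (0:ℝ) T, p s y)) :=
            ENNReal.ofReal_le_ofReal hbd
        _ ≤ ENNReal.ofReal K₁ +
            ENNReal.ofReal (p 0 y + p T y + |lam| * ∫ s in Icc (0:ℝ) T, p s y) :=
            ENNReal.ofReal_add_le
        _ ≤ ENNReal.ofReal K₁ + (ENNReal.ofReal (p 0 y + p T y) +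
            ENNReal.ofReal (|lam| * ∫ s in Icc (0:ℝ) T, p s y)) :=
            add_le_add_right ENNReal.ofReal_add_le _
        _ ≤ ENNReal.ofReal K₁ + ((ENNReal.ofReal (p 0 y) + ENNReal.ofReal (p T y)) +
            ENNReal.ofReal (|lam| * ∫ s in Icc (0:ℝ) T, p s y)) :=
            add_le_add_right (add_le_add_left ENNReal.ofReal_add_le _) _
        _ ≤ ENNReal.ofReal K₁ + (ENNReal.ofReal (p 0 y) + ENNReal.ofReal (p T y)
            + ENNReal.ofReal |lam| * (∫⁻ s, ENNReal.ofReal (p s y) ∂νs)) := by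
            rw [ENNReal.ofReal_mul (abs_nonneg lam)]
            refine add_le_add_right (add_le_add_right (mul_le_mul_right ?_ _) _) _
            have hpyint : IntegrableOn (fun s => p s y) (Icc 0 T) :=
              (contx y hy).integrableOn_compact isCompact_Icc
            rw [ofReal_integral_eq_lintegral_ofReal hpyint
              ((ae_restrict_mem measurableSet_Icc).mono fun s hs => (hpos s hs y hy).le)]
    refine lt_of_le_of_lt hle ?_
    have m0 : Measurable (fun y => ENNReal.ofReal (p 0 y)) :=
      ENNReal.measurable_ofReal.comp (measy 0)
    have mT : Measurable (fun y => ENNReal.ofReal (p T y)) :=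
      ENNReal.measurable_ofReal.comp (measy T)
    rw [lintegral_add_left measurable_const,
      lintegral_add_left (m0.fun_add mT),
      lintegral_add_left m0,
      lintegral_const_mul' _ _ ENNReal.ofReal_ne_top, hpswap, lintegral_const, hIoo1]
    have e2 : (∫⁻ y, ENNReal.ofReal (p 0 y) ∂μy) = ENNReal.ofReal μ := by
      rw [← hmean 0 ⟨le_refl 0, hT.le⟩]
      exact (ofReal_integral_eq_lintegral_ofReal (intp 0 ⟨le_refl 0, hT.le⟩)
        ((ae_restrict_mem measurableSet_Ioo).mono
          fun y hy => (hpos 0 ⟨le_refl 0, hT.le⟩ y hy).le)).symm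
    have e3 : (∫⁻ y, ENNReal.ofReal (p T y) ∂μy) = ENNReal.ofReal μ := by
      rw [← hmean T ⟨hT.le, le_refl T⟩]
      exact (ofReal_integral_eq_lintegral_ofReal (intp T ⟨hT.le, le_refl T⟩)
        ((ae_restrict_mem measurableSet_Ioo).mono
          fun y hy => (hpos T ⟨hT.le, le_refl T⟩ y hy).le)).symm
    rw [e2, e3]
    rw [mul_one]
    refine ENNReal.add_lt_top.2 ⟨ENNReal.ofReal_lt_top, ?_⟩
    refine ENNReal.add_lt_top.2 ⟨ENNReal.add_lt_top.2 ⟨ENNReal.ofReal_lt_top,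
      ENNReal.ofReal_lt_top⟩, ?_⟩
    exact ENNReal.mul_lt_top ENNReal.ofReal_lt_top
      (ENNReal.mul_lt_top ENNReal.ofReal_lt_top ENNReal.ofReal_lt_top)
  have hAS : (∫⁻ s, (∫⁻ y, ENNReal.ofReal |σ (p s y) + lam * p s y| ∂μy) ∂νs) < ⊤ := by
    have hsw : (∫⁻ s, (∫⁻ y, ENNReal.ofReal |σ (p s y) + lam * p s y| ∂μy) ∂νs)
        = ∫⁻ y, (∫⁻ s, ENNReal.ofReal |σ (p s y) + lam * p s y| ∂νs) ∂μy :=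
      lintegral_lintegral_swap hFae
    rw [hsw]
    exact hA
  -- integrability of the st-integral in time
  have hDm : AEStronglyMeasurable
      (fun s => ∫ y, (σ (p s y) + lam * p s y) ∂μy) νs :=
    jointAEMst.aestronglyMeasurable.integral_prod_right'
  have hDint : IntegrableOn (fun s => ∫ y, (σ (p s y) + lam * p s y) ∂μy) (Icc 0 T) := by
    refine ⟨hDm, ?_⟩
    refine lt_of_le_of_lt (lintegral_mono fun s => ?_) hAS
    calc (‖∫ y, (σ (p s y) + lam * p s y) ∂μy‖₊ : ENNReal)
        ≤ ∫⁻ y, ‖σ (p s y) + lam * p s y‖₊ ∂μy := enorm_integral_le_lintegral_enorm _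
      _ = ∫⁻ y, ENNReal.ofReal |σ (p s y) + lam * p s y| ∂μy := by
          congr 1
          funext y
          rw [← enorm_eq_nnnorm, Real.enorm_eq_ofReal_abs]
  -- finally: the nonlocal term differs from the st-integral by a constant
  have hfinal : ∀ s ∈ Icc (0:ℝ) T, (∫ y in Ioo (0:ℝ) 1, σ (p s y))
      = (∫ y, (σ (p s y) + lam * p s y) ∂μy) - lam * μ := by
    intro s hs
    have : (∫ y, (σ (p s y) + lam * p s y) ∂μy)
        = (∫ y in Ioo (0:ℝ) 1, σ (p s y)) + lam * ∫ y in Ioo (0:ℝ) 1, p s y := by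
      rw [← integral_const_mul]
      exact integral_add (hintσ s hs) ((intp s hs).const_mul lam)
    rw [this, hmean s hs]
    ring
  exact (hDint.sub (integrable_const _)).congr
    ((ae_restrict_mem measurableSet_Icc).mono fun s hs => (hfinal s hs).symm)


/-- Gronwall / continuous-dependence estimate: if `σ` satisfies the one-sided Lipschitz
condition `(σ a − σ b)(a − b) ≥ −λ(a − b)²` on `(0,∞)` and `p, q` are two positive strong
solutions of `p_t = −σ(p) + ∫₀¹ σ(p) dy` on `(0,1) × [0,T]` with the same mean `μ`, then
`∫₀¹ |p(·,t) − q(·,t)|² dx ≤ e^{2λt} ∫₀¹ |p(·,0) − q(·,0)|² dx` for all `t ∈ [0,T]`. -/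
theorem stmt10 (σ : ℝ → ℝ) (lam μ T : ℝ) (hT : 0 < T) (hμ : 0 < μ)
    (hσ : ∀ a b : ℝ, 0 < a → 0 < b → (σ a - σ b) * (a - b) ≥ -lam * (a - b) ^ 2)
    (p q : ℝ → ℝ → ℝ)
    (hmeas : Measurable (Function.uncurry p) ∧ Measurable (Function.uncurry q))
    (hpos : ∀ t ∈ Set.Icc (0:ℝ) T, ∀ x ∈ Set.Ioo (0:ℝ) 1, 0 < p t x ∧ 0 < q t x)
    (hmean : ∀ t ∈ Set.Icc (0:ℝ) T,
      (∫ x in Set.Ioo (0:ℝ) 1, p t x) = μ ∧ (∫ x in Set.Ioo (0:ℝ) 1, q t x) = μ)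
    (hintσ : ∀ t ∈ Set.Icc (0:ℝ) T,
      IntegrableOn (fun x => σ (p t x)) (Set.Ioo 0 1) ∧
      IntegrableOn (fun x => σ (q t x)) (Set.Ioo 0 1))
    (hintsq : ∀ t ∈ Set.Icc (0:ℝ) T,
      IntegrableOn (fun x => (p t x - q t x) ^ 2) (Set.Ioo 0 1))
    (hodep : ∀ x ∈ Set.Ioo (0:ℝ) 1, ∀ t ∈ Set.Icc (0:ℝ) T,
      HasDerivAt (fun s => p s x) (-σ (p t x) + ∫ y in Set.Ioo (0:ℝ) 1, σ (p t y)) t)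
    (hodeq : ∀ x ∈ Set.Ioo (0:ℝ) 1, ∀ t ∈ Set.Icc (0:ℝ) T,
      HasDerivAt (fun s => q s x) (-σ (q t x) + ∫ y in Set.Ioo (0:ℝ) 1, σ (q t y)) t) :
    ∀ t ∈ Set.Icc (0:ℝ) T,
      (∫ x in Set.Ioo (0:ℝ) 1, (p t x - q t x) ^ 2) ≤
        Real.exp (2 * lam * t) * ∫ x in Set.Ioo (0:ℝ) 1, (p 0 x - q 0 x) ^ 2 := by
  obtain ⟨hpm, hqm⟩ := hmeas
  have hΔp : IntegrableOn (fun s => ∫ y in Set.Ioo (0:ℝ) 1, σ (p s y)) (Set.Icc 0 T) :=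
    delta_integrable hT hμ hσ hpm (fun t ht x hx => (hpos t ht x hx).1)
      (fun t ht => (hmean t ht).1) (fun t ht => (hintσ t ht).1) hodep
  have hΔq : IntegrableOn (fun s => ∫ y in Set.Ioo (0:ℝ) 1, σ (q s y)) (Set.Icc 0 T) :=
    delta_integrable hT hμ hσ hqm (fun t ht x hx => (hpos t ht x hx).2)
      (fun t ht => (hmean t ht).2) (fun t ht => (hintσ t ht).2) hodeq
  intro t ht
  obtain ⟨ht0, htT⟩ := ht
  have htI : t ∈ Icc (0:ℝ) T := ⟨ht0, htT⟩
  have h0I : (0:ℝ) ∈ Icc (0:ℝ) T := ⟨le_refl 0, hT.le⟩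
  set Δd : ℝ → ℝ := fun s =>
    (∫ y in Set.Ioo (0:ℝ) 1, σ (p s y)) - (∫ y in Set.Ioo (0:ℝ) 1, σ (q s y)) with hΔd_def
  have hΔdint : IntegrableOn Δd (Set.Icc 0 T) := hΔp.sub hΔq
  have hIoc_sub : Ioc (0:ℝ) t ⊆ Icc (0:ℝ) T := fun s hs => ⟨hs.1.le, hs.2.trans htT⟩
  have hΔdIoc : IntegrableOn Δd (Ioc 0 t) := hΔdint.mono_set hIoc_sub
  -- weight function and its absolute bound
  set W : ℝ := Real.exp (|2 * lam| * T) with hW_def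
  have hWb : ∀ s ∈ Icc (0:ℝ) T, Real.exp (-(2 * lam) * s) ≤ W := by
    intro s hs
    refine Real.exp_le_exp.2 ?_
    calc -(2 * lam) * s ≤ |(-(2 * lam)) * s| := le_abs_self _
      _ = |2 * lam| * |s| := by rw [abs_mul, abs_neg]
      _ ≤ |2 * lam| * T := by
          refine mul_le_mul_of_nonneg_left ?_ (abs_nonneg _)
          rw [abs_of_nonneg hs.1]; exact hs.2
  -- the inhomogeneity coefficient
  set c : ℝ → ℝ := fun s => 2 * Real.exp (-(2 * lam) * s) * Δd s with hc_def
  have hcIoc : IntegrableOn c (Ioc 0 t) := by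
    refine Integrable.mono' (hΔdIoc.abs.const_mul (2 * W)) ?_ ?_
    · exact (((Real.continuous_exp.comp (continuous_const.mul continuous_id)).measurable.aemeasurable.const_mul
        2).mul hΔdIoc.aemeasurable).aestronglyMeasurable
    · refine (ae_restrict_mem measurableSet_Ioc).mono (fun s hs => ?_)
      have h1 := hWb s (hIoc_sub hs)
      have h2 : (0:ℝ) < Real.exp (-(2 * lam) * s) := Real.exp_pos _
      rw [Real.norm_eq_abs, hc_def, abs_mul, abs_mul]
      rw [abs_of_nonneg h2.le]
      have : |(2:ℝ)| = 2 := by norm_num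
      rw [this]
      have := abs_nonneg (Δd s)
      nlinarith
  -- the measures
  set μx := volume.restrict (Ioo (0:ℝ) 1) with hμx_def
  set νt := volume.restrict (Ioc (0:ℝ) t) with hνt_def
  -- integrability of p, q slices
  have intpt : ∀ s ∈ Icc (0:ℝ) T, IntegrableOn (fun x => p s x) (Ioo 0 1) := by
    intro s hs
    by_contra h
    have := (hmean s hs).1
    rw [integral_undef h] at this
    linarith
  have intqt : ∀ s ∈ Icc (0:ℝ) T, IntegrableOn (fun x => q s x) (Ioo 0 1) := by
    intro s hs
    by_contra h
    have := (hmean s hs).2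
    rw [integral_undef h] at this
    linarith
  -- pointwise (in x) Gronwall-type estimate
  have key : ∀ x ∈ Set.Ioo (0:ℝ) 1,
      Real.exp (-(2 * lam) * t) * (p t x - q t x) ^ 2 ≤ (p 0 x - q 0 x) ^ 2
        + ∫ s in Ioc (0:ℝ) t, c s * (p s x - q s x) := by
    intro x hx
    have hcontp : ContinuousOn (fun s => p s x) (Icc 0 T) := fun u hu =>
      ((hodep x hx u hu).continuousAt).continuousWithinAt
    have hcontq : ContinuousOn (fun s => q s x) (Icc 0 T) := fun u hu =>
      ((hodeq x hx u hu).continuousAt).continuousWithinAt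
    obtain ⟨mp, Mp, hmp, hmpM, hbp⟩ := exists_bounds hT.le hcontp
      (fun s hs => (hpos s hs x hx).1)
    obtain ⟨mq, Mq, hmq, hmqM, hbq⟩ := exists_bounds hT.le hcontq
      (fun s hs => (hpos s hs x hx).2)
    have hmeasp : Measurable (fun s => p s x) :=
      hpm.comp (measurable_id.prodMk measurable_const)
    have hmeasq : Measurable (fun s => q s x) :=
      hqm.comp (measurable_id.prodMk measurable_const)
    obtain ⟨gp, hgpm, hgpe⟩ := sig_meas hσ hmp hmeasp hbp
    obtain ⟨gq, hgqm, hgqe⟩ := sig_meas hσ hmq hmeasq hbq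
    set Cp : ℝ := max |σ mp + lam * mp| |σ Mp + lam * Mp| + |lam| * Mp with hCp_def
    set Cq : ℝ := max |σ mq + lam * mq| |σ Mq + lam * Mq| + |lam| * Mq with hCq_def
    have hCpb : ∀ s ∈ Icc (0:ℝ) T, |σ (p s x)| ≤ Cp := fun s hs => sig_bound hσ hmp hbp s hs
    have hCqb : ∀ s ∈ Icc (0:ℝ) T, |σ (q s x)| ≤ Cq := fun s hs => sig_bound hσ hmq hbq s hs
    set R : ℝ := Mp + Mq with hR_def
    have hRb : ∀ s ∈ Icc (0:ℝ) T, |p s x - q s x| ≤ R := by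
      intro s hs
      have h1 := (hbp s hs).2
      have h2 := (hbq s hs).2
      have h3 := hmp.trans_le (hbp s hs).1
      have h4 := hmq.trans_le (hbq s hs).1
      rw [abs_le]
      constructor <;> [linarith; linarith]
    -- the derivative of the weighted square
    set G1 : ℝ → ℝ := fun s => Real.exp (-(2 * lam) * s) *
      (-2 * (p s x - q s x) * (σ (p s x) - σ (q s x)) - 2 * lam * (p s x - q s x) ^ 2)
      with hG1_def
    have hr : ∀ s ∈ Icc (0:ℝ) T, HasDerivAt (fun u => p u x - q u x)
        ((-(σ (p s x) - σ (q s x))) + Δd s) s := by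
      intro s hs
      have h1 := (hodep x hx s hs).fun_sub (hodeq x hx s hs)
      refine h1.congr_deriv ?_
      rw [hΔd_def]
      ring
    have hG : ∀ s ∈ Icc (0:ℝ) T, HasDerivAt
        (fun u => Real.exp (-(2 * lam) * u) * (p u x - q u x) ^ 2)
        (G1 s + c s * (p s x - q s x)) s := by
      intro s hs
      have hw : HasDerivAt (fun u => Real.exp (-(2 * lam) * u))
          (-(2 * lam) * Real.exp (-(2 * lam) * s)) s := by
        have := ((hasDerivAt_id s).const_mul (-(2 * lam))).exp
        simpa [mul_comm] using this
      have hr2 : HasDerivAt (fun u => (p u x - q u x) ^ 2)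
          (2 * (p s x - q s x) * ((-(σ (p s x) - σ (q s x))) + Δd s)) s := by
        have := (hr s hs).fun_pow 2
        simpa [mul_comm, mul_assoc, mul_left_comm] using this
      have h2 := hw.fun_mul hr2
      refine h2.congr_deriv ?_
      rw [hG1_def, hc_def]
      ring
    -- interval integrability
    have hG1int : IntegrableOn G1 (Ioc 0 t) := by
      refine Integrable.mono'
        (integrable_const (W * (2 * R * (Cp + Cq) + 2 * |lam| * R ^ 2))) ?_ ?_
      · have hm1 : Measurable (fun s => Real.exp (-(2 * lam) * s) *
            (-2 * (p s x - q s x) * (gp s - gq s) - 2 * lam * (p s x - q s x) ^ 2)) := by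
          refine ((Real.continuous_exp.comp (continuous_const.mul continuous_id)).measurable).mul ?_
          refine Measurable.sub ?_ (((hmeasp.sub hmeasq).pow_const 2).const_mul (2 * lam))
          exact (((hmeasp.sub hmeasq).const_mul (-2)).mul (hgpm.sub hgqm))
        refine (hm1.aestronglyMeasurable).congr ?_
        refine (ae_restrict_mem measurableSet_Ioc).mono (fun s hs => ?_)
        have hsI := hIoc_sub hs
        simp only [hgpe s hsI, hgqe s hsI, hG1_def]
      · refine (ae_restrict_mem measurableSet_Ioc).mono (fun s hs => ?_)
        have hsI := hIoc_sub hs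
        have h1 := hWb s hsI
        have h2 := hRb s hsI
        have h3 := hCpb s hsI
        have h4 := hCqb s hsI
        have h5 : |σ (p s x) - σ (q s x)| ≤ Cp + Cq := by
          calc |σ (p s x) - σ (q s x)| ≤ |σ (p s x)| + |σ (q s x)| := abs_sub _ _
            _ ≤ Cp + Cq := add_le_add h3 h4
        rw [Real.norm_eq_abs, hG1_def, abs_mul, abs_of_nonneg (Real.exp_pos _).le]
        have h6 : |(-2) * (p s x - q s x) * (σ (p s x) - σ (q s x))
            - 2 * lam * (p s x - q s x) ^ 2| ≤ 2 * R * (Cp + Cq) + 2 * |lam| * R ^ 2 := by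
          have h7 : |(-2) * (p s x - q s x) * (σ (p s x) - σ (q s x))|
              ≤ 2 * R * (Cp + Cq) := by
            rw [abs_mul, abs_mul]
            have hrn := abs_nonneg (p s x - q s x)
            have han := abs_nonneg (σ (p s x) - σ (q s x))
            have : |(-2:ℝ)| = 2 := by norm_num
            rw [this]
            nlinarith
          have h8 : |2 * lam * (p s x - q s x) ^ 2| ≤ 2 * |lam| * R ^ 2 := by
            rw [abs_mul, abs_mul]
            have : |(2:ℝ)| = 2 := by norm_num
            rw [this]
            have h9 : |(p s x - q s x) ^ 2| = |p s x - q s x| ^ 2 := by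
              rw [abs_of_nonneg (sq_nonneg _), sq_abs]
            rw [h9]
            have hrn := abs_nonneg (p s x - q s x)
            have han := abs_nonneg lam
            have h10 : |p s x - q s x| ^ 2 ≤ R ^ 2 := pow_le_pow_left₀ hrn h2 2
            nlinarith [h10, han]
          calc |(-2) * (p s x - q s x) * (σ (p s x) - σ (q s x))
              - 2 * lam * (p s x - q s x) ^ 2|
              ≤ |(-2) * (p s x - q s x) * (σ (p s x) - σ (q s x))|
                + |2 * lam * (p s x - q s x) ^ 2| := abs_sub _ _
            _ ≤ _ := add_le_add h7 h8
        have hWpos : (0:ℝ) < Real.exp (-(2 * lam) * s) := Real.exp_pos _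
        have habs_nn : (0:ℝ) ≤ |(-2) * (p s x - q s x) * (σ (p s x) - σ (q s x))
            - 2 * lam * (p s x - q s x) ^ 2| := abs_nonneg _
        nlinarith
    have hG2int : IntegrableOn (fun s => c s * (p s x - q s x)) (Ioc 0 t) := by
      refine Integrable.mono' (hcIoc.abs.const_mul R) ?_ ?_
      · exact (hcIoc.aemeasurable.mul ((hmeasp.sub hmeasq).aemeasurable)).aestronglyMeasurable
      · refine (ae_restrict_mem measurableSet_Ioc).mono (fun s hs => ?_)
        have h2 := hRb s (hIoc_sub hs)
        rw [Real.norm_eq_abs, abs_mul]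
        have := abs_nonneg (c s)
        have hR0 : (0:ℝ) ≤ R := by
          have := hmp.trans_le hmpM
          have := hmq.trans_le hmqM
          rw [hR_def]; linarith
        have := abs_nonneg (p s x - q s x)
        nlinarith
    have hII1 : IntervalIntegrable G1 volume 0 t :=
      (intervalIntegrable_iff_integrableOn_Ioc_of_le ht0).2 hG1int
    have hII2 : IntervalIntegrable (fun s => c s * (p s x - q s x)) volume 0 t :=
      (intervalIntegrable_iff_integrableOn_Ioc_of_le ht0).2 hG2int
    have hFTC : ∫ s in (0:ℝ)..t, (G1 s + c s * (p s x - q s x))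
        = Real.exp (-(2 * lam) * t) * (p t x - q t x) ^ 2
          - Real.exp (-(2 * lam) * 0) * (p 0 x - q 0 x) ^ 2 :=
      intervalIntegral.integral_eq_sub_of_hasDerivAt
        (fun s hs => hG s (by
          rw [uIcc_of_le ht0] at hs
          exact ⟨hs.1, hs.2.trans htT⟩)) (hII1.add hII2)
    have hsplit : ∫ s in (0:ℝ)..t, (G1 s + c s * (p s x - q s x))
        = (∫ s in (0:ℝ)..t, G1 s) + ∫ s in (0:ℝ)..t, c s * (p s x - q s x) :=
      intervalIntegral.integral_add hII1 hII2
    have hG1nonpos : (∫ s in (0:ℝ)..t, G1 s) ≤ 0 := by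
      rw [intervalIntegral.integral_of_le ht0]
      refine integral_nonpos_of_ae ?_
      refine (ae_restrict_mem measurableSet_Ioc).mono (fun s hs => ?_)
      have hsI := hIoc_sub hs
      have hk := hσ (p s x) (q s x) (hpos s hsI x hx).1 (hpos s hsI x hx).2
      have h1 : -2 * (p s x - q s x) * (σ (p s x) - σ (q s x))
          - 2 * lam * (p s x - q s x) ^ 2 ≤ 0 := by nlinarith
      rw [hG1_def]
      exact mul_nonpos_iff.2 (Or.inl ⟨(Real.exp_pos _).le, h1⟩)
    have hiIoc : (∫ s in (0:ℝ)..t, c s * (p s x - q s x))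
        = ∫ s in Ioc (0:ℝ) t, c s * (p s x - q s x) :=
      intervalIntegral.integral_of_le ht0
    have hz : Real.exp (-(2 * lam) * 0) = 1 := by norm_num [Real.exp_zero]
    rw [hsplit] at hFTC
    rw [hz, one_mul] at hFTC
    rw [← hiIoc]
    linarith
  -- Fubini: the inhomogeneous term integrates to zero
  have h2meas : Measurable (fun z : ℝ × ℝ => p z.2 z.1 - q z.2 z.1) :=
    (hpm.comp measurable_swap).sub (hqm.comp measurable_swap)
  have huncur : AEStronglyMeasurable
      (Function.uncurry fun x s => c s * (p s x - q s x)) (μx.prod νt) := by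
    have h1 : AEMeasurable (fun z : ℝ × ℝ => c z.2) (μx.prod νt) :=
      hcIoc.aemeasurable.comp_snd
    exact (h1.mul h2meas.aemeasurable).aestronglyMeasurable
  have hfin : HasFiniteIntegral
      (Function.uncurry fun x s => c s * (p s x - q s x)) (μx.prod νt) := by
    have hsymm : (∫⁻ z, (‖(Function.uncurry fun x s => c s * (p s x - q s x)) z‖₊ : ENNReal)
        ∂(μx.prod νt))
        = ∫⁻ s, (∫⁻ x, (‖c s * (p s x - q s x)‖₊ : ENNReal) ∂μx) ∂νt :=
      lintegral_prod_symm _ huncur.enorm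
    rw [hasFiniteIntegral_def]; refine hsymm.trans_lt ?_
    have hbnd : ∀ s ∈ Ioc (0:ℝ) t,
        (∫⁻ x, (‖c s * (p s x - q s x)‖₊ : ENNReal) ∂μx)
          ≤ (‖c s‖₊ : ENNReal) * (ENNReal.ofReal μ + ENNReal.ofReal μ) := by
      intro s hs
      have hsI := hIoc_sub hs
      have e1 : ∀ x, (‖c s * (p s x - q s x)‖₊ : ENNReal)
          = (‖c s‖₊ : ENNReal) * (‖p s x - q s x‖₊ : ENNReal) := by
        intro x
        rw [nnnorm_mul]
        push_cast
        ring
      calc (∫⁻ x, (‖c s * (p s x - q s x)‖₊ : ENNReal) ∂μx)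
          = ∫⁻ x, (‖c s‖₊ : ENNReal) * (‖p s x - q s x‖₊ : ENNReal) ∂μx := by
            exact lintegral_congr (fun x => e1 x)
        _ = (‖c s‖₊ : ENNReal) * ∫⁻ x, (‖p s x - q s x‖₊ : ENNReal) ∂μx :=
            lintegral_const_mul' _ _ ENNReal.coe_ne_top
        _ ≤ (‖c s‖₊ : ENNReal) * (ENNReal.ofReal μ + ENNReal.ofReal μ) := by
            refine mul_le_mul_right ?_ _
            have hb : (∫⁻ x, (‖p s x - q s x‖₊ : ENNReal) ∂μx)
                ≤ ∫⁻ x, (ENNReal.ofReal (p s x) + ENNReal.ofReal (q s x)) ∂μx := by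
              refine lintegral_mono_ae ((ae_restrict_mem measurableSet_Ioo).mono
                (fun x hxx => ?_))
              have hp1 := (hpos s hsI x hxx).1
              have hq1 := (hpos s hsI x hxx).2
              rw [← enorm_eq_nnnorm, Real.enorm_eq_ofReal_abs]
              calc ENNReal.ofReal |p s x - q s x|
                  ≤ ENNReal.ofReal (p s x + q s x) := by
                    refine ENNReal.ofReal_le_ofReal ?_
                    rw [abs_le]
                    constructor <;> [linarith; linarith]
                _ ≤ _ := ENNReal.ofReal_add_le
            refine hb.trans ?_
            have hmp : Measurable (fun x => ENNReal.ofReal (p s x)) :=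
              ENNReal.measurable_ofReal.comp (hpm.comp (measurable_const.prodMk measurable_id))
            rw [lintegral_add_left hmp]
            have e2 : (∫⁻ x, ENNReal.ofReal (p s x) ∂μx) = ENNReal.ofReal μ := by
              rw [← (hmean s hsI).1]
              exact (ofReal_integral_eq_lintegral_ofReal (intpt s hsI)
                ((ae_restrict_mem measurableSet_Ioo).mono
                  (fun x hxx => (hpos s hsI x hxx).1.le))).symm
            have e3 : (∫⁻ x, ENNReal.ofReal (q s x) ∂μx) = ENNReal.ofReal μ := by
              rw [← (hmean s hsI).2]
              exact (ofReal_integral_eq_lintegral_ofReal (intqt s hsI)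
                ((ae_restrict_mem measurableSet_Ioo).mono
                  (fun x hxx => (hpos s hsI x hxx).2.le))).symm
            rw [e2, e3]
    calc (∫⁻ s, (∫⁻ x, (‖c s * (p s x - q s x)‖₊ : ENNReal) ∂μx) ∂νt)
        ≤ ∫⁻ s, (‖c s‖₊ : ENNReal) * (ENNReal.ofReal μ + ENNReal.ofReal μ) ∂νt := by
          refine lintegral_mono_ae ((ae_restrict_mem measurableSet_Ioc).mono
            (fun s hs => hbnd s hs))
      _ = (∫⁻ s, (‖c s‖₊ : ENNReal) ∂νt) * (ENNReal.ofReal μ + ENNReal.ofReal μ) :=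
          lintegral_mul_const' _ _ (by simp)
      _ < ⊤ := by
          refine ENNReal.mul_lt_top ?_ ?_
          · exact (hasFiniteIntegral_def _ _).1 hcIoc.2
          · exact ENNReal.add_lt_top.2 ⟨ENNReal.ofReal_lt_top, ENNReal.ofReal_lt_top⟩
  have hprodInt : Integrable
      (Function.uncurry fun x s => c s * (p s x - q s x)) (μx.prod νt) := ⟨huncur, hfin⟩
  have hswap : (∫ x, (∫ s, c s * (p s x - q s x) ∂νt) ∂μx)
      = ∫ s, (∫ x, c s * (p s x - q s x) ∂μx) ∂νt :=
    integral_integral_swap hprodInt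
  have hzero : (∫ x, (∫ s, c s * (p s x - q s x) ∂νt) ∂μx) = 0 := by
    rw [hswap]
    have hz : ∀ s ∈ Ioc (0:ℝ) t, (∫ x, c s * (p s x - q s x) ∂μx) = 0 := by
      intro s hs
      have hsI := hIoc_sub hs
      rw [integral_const_mul]
      have : (∫ x, (p s x - q s x) ∂μx) = 0 := by
        rw [integral_sub (intpt s hsI) (intqt s hsI), (hmean s hsI).1, (hmean s hsI).2]
        ring
      rw [this, mul_zero]
    calc (∫ s, (∫ x, c s * (p s x - q s x) ∂μx) ∂νt)
        = ∫ s, (0:ℝ) ∂νt :=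
          integral_congr_ae ((ae_restrict_mem measurableSet_Ioc).mono
            (fun s hs => hz s hs))
      _ = 0 := integral_zero _ _
  have hΦint : IntegrableOn (fun x => ∫ s, c s * (p s x - q s x) ∂νt) (Ioo 0 1) :=
    hprodInt.integral_prod_left
  have hL : IntegrableOn (fun x => Real.exp (-(2 * lam) * t) * (p t x - q t x) ^ 2)
      (Ioo 0 1) := (hintsq t htI).const_mul _
  have hR : IntegrableOn (fun x => (p 0 x - q 0 x) ^ 2
      + ∫ s, c s * (p s x - q s x) ∂νt) (Ioo 0 1) := (hintsq 0 h0I).add hΦint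
  have hmono : (∫ x in Ioo (0:ℝ) 1, Real.exp (-(2 * lam) * t) * (p t x - q t x) ^ 2)
      ≤ ∫ x in Ioo (0:ℝ) 1, ((p 0 x - q 0 x) ^ 2 + ∫ s, c s * (p s x - q s x) ∂νt) :=
    setIntegral_mono_on hL hR measurableSet_Ioo (fun x hx => key x hx)
  have hLs : (∫ x in Ioo (0:ℝ) 1, Real.exp (-(2 * lam) * t) * (p t x - q t x) ^ 2)
      = Real.exp (-(2 * lam) * t) * ∫ x in Ioo (0:ℝ) 1, (p t x - q t x) ^ 2 :=
    integral_const_mul _ _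
  have hRs : (∫ x in Ioo (0:ℝ) 1, ((p 0 x - q 0 x) ^ 2 + ∫ s, c s * (p s x - q s x) ∂νt))
      = (∫ x in Ioo (0:ℝ) 1, (p 0 x - q 0 x) ^ 2) := by
    rw [integral_add (hintsq 0 h0I) hΦint, hzero, add_zero]
  rw [hLs, hRs] at hmono
  have hkey2 := mul_le_mul_of_nonneg_left hmono (Real.exp_pos (2 * lam * t)).le
  have hee : Real.exp (2 * lam * t) * Real.exp (-(2 * lam) * t) = 1 := by
    rw [← Real.exp_add]
    have heq : 2 * lam * t + -(2 * lam) * t = 0 := by ring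
    rw [heq, Real.exp_zero]
  calc (∫ x in Set.Ioo (0:ℝ) 1, (p t x - q t x) ^ 2)
      = Real.exp (2 * lam * t) * Real.exp (-(2 * lam) * t)
        * ∫ x in Set.Ioo (0:ℝ) 1, (p t x - q t x) ^ 2 := by rw [hee, one_mul]
    _ = Real.exp (2 * lam * t) * (Real.exp (-(2 * lam) * t)
        * ∫ x in Set.Ioo (0:ℝ) 1, (p t x - q t x) ^ 2) := by ring
    _ ≤ Real.exp (2 * lam * t) * ∫ x in Set.Ioo (0:ℝ) 1, (p 0 x - q 0 x) ^ 2 := hkey2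

end
end

section
/- Let σ : (0,∞) → ℝ be continuous and strictly increasing with σ(v) → −∞ as v → 0+ and σ(v) + 2λv → ∞ as v → ∞ (λ > 0), and suppose σ(v) + 2λv ≥ a + λv for v ≥ 1 for some constant a. Let h(v) = σ(v) + 2λv and let g ∈ L²(0,1). Then the function η(c) = ∫₀¹ h⁻¹(c + g(x)) dx is well-defined, continuous and strictly increasing on ℝ, with η(c) → 0 as c → −∞ and η(c) → ∞ as c → ∞; in particular for each μ > 0 there is a unique c with η(c) = μ. -/
open MeasureTheory

/-- Solvability of the Euler–Lagrange constant: with `h(v) = σ(v) + 2λv` a continuous,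
strictly increasing bijection from `(0,∞)` onto `ℝ` (inverse `hinv`), the growth bound
`h(v) ≥ a + λv` for `v ≥ 1`, and `g ∈ L²(0,1)`, the function
`η(c) = ∫₀¹ hinv(c + g(x)) dx` is well defined, continuous, strictly increasing, tends to `0`
at `−∞` and to `∞` at `+∞`; in particular for each `μ > 0` there is a unique `c` with
`η(c) = μ`. -/
theorem stmt12 (σ : ℝ → ℝ) (lam a : ℝ) (hlam : 0 < lam)
    (hcont : ContinuousOn σ (Set.Ioi 0)) (hmono : StrictMonoOn σ (Set.Ioi 0))
    (hbot : Filter.Tendsto (fun v => σ v + 2 * lam * v) (nhdsWithin 0 (Set.Ioi 0))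
      Filter.atBot)
    (htop : Filter.Tendsto (fun v => σ v + 2 * lam * v) Filter.atTop Filter.atTop)
    (hgrow : ∀ v : ℝ, 1 ≤ v → a + lam * v ≤ σ v + 2 * lam * v)
    (hinv : ℝ → ℝ)
    (hinv_pos : ∀ s : ℝ, 0 < hinv s)
    (hinv_right : ∀ s : ℝ, σ (hinv s) + 2 * lam * hinv s = s)
    (hinv_left : ∀ v : ℝ, 0 < v → hinv (σ v + 2 * lam * v) = v)
    (g : ℝ → ℝ) (hg : MemLp g 2 (volume.restrict (Set.Ioo (0:ℝ) 1))) :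
    (∀ c : ℝ, IntegrableOn (fun x => hinv (c + g x)) (Set.Ioo 0 1)) ∧
    Continuous (fun c => ∫ x in Set.Ioo (0:ℝ) 1, hinv (c + g x)) ∧
    StrictMono (fun c => ∫ x in Set.Ioo (0:ℝ) 1, hinv (c + g x)) ∧
    Filter.Tendsto (fun c => ∫ x in Set.Ioo (0:ℝ) 1, hinv (c + g x))
      Filter.atBot (nhds 0) ∧
    Filter.Tendsto (fun c => ∫ x in Set.Ioo (0:ℝ) 1, hinv (c + g x))
      Filter.atTop Filter.atTop ∧
    ∀ μ : ℝ, 0 < μ → ∃! c : ℝ, (∫ x in Set.Ioo (0:ℝ) 1, hinv (c + g x)) = μ := by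
  have hμuniv : (volume.restrict (Set.Ioo (0:ℝ) 1)) Set.univ = 1 := by
    simp [Real.volume_Ioo]
  haveI : IsProbabilityMeasure (volume.restrict (Set.Ioo (0:ℝ) 1)) := ⟨hμuniv⟩
  set μ0 : Measure ℝ := volume.restrict (Set.Ioo (0:ℝ) 1) with hμ0
  -- h is strictly monotone on (0, ∞)
  have hmonoh : StrictMonoOn (fun v => σ v + 2 * lam * v) (Set.Ioi 0) := by
    intro x hx y hy hxy
    have := hmono hx hy hxy
    simp only
    nlinarith
  -- hinv is strictly monotone
  have hinv_mono : StrictMono hinv := by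
    intro s t hst
    by_contra hle
    push_neg at hle
    have h1 : σ (hinv t) + 2 * lam * hinv t ≤ σ (hinv s) + 2 * lam * hinv s := by
      rcases eq_or_lt_of_le hle with h | h
      · rw [h]
      · exact (hmonoh (Set.mem_Ioi.2 (hinv_pos t)) (Set.mem_Ioi.2 (hinv_pos s)) h).le
    rw [hinv_right, hinv_right] at h1
    exact absurd h1 (not_le.2 hst)
  -- hinv is continuous
  have hinv_cont : Continuous hinv := by
    rw [continuous_iff_continuousAt]
    intro s
    refine continuousAt_of_monotoneOn_of_closure_image_mem_nhds
      (fun x _ y _ hxy => hinv_mono.monotone hxy) Filter.univ_mem ?_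
    have him : Set.Ioi (0:ℝ) ⊆ hinv '' Set.univ := by
      intro v hv
      exact ⟨σ v + 2 * lam * v, trivial, hinv_left v hv⟩
    refine Filter.mem_of_superset (Ici_mem_nhds (hinv_pos s)) ?_
    rw [← closure_Ioi (0:ℝ)]
    exact closure_mono him
  -- growth bound on hinv
  have hinv_le : ∀ s : ℝ, hinv s ≤ max 1 ((s - a) / lam) := by
    intro s
    by_contra hgt
    push_neg at hgt
    have h1 : 1 < hinv s := lt_of_le_of_lt (le_max_left _ _) hgt
    have h2 : (s - a) / lam < hinv s := lt_of_le_of_lt (le_max_right _ _) hgt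
    have h3 := hgrow (hinv s) h1.le
    rw [hinv_right] at h3
    have h4 : hinv s ≤ (s - a) / lam := by
      rw [le_div_iff₀ hlam]; linarith
    linarith
  -- measurability and integrability
  have hgm : AEStronglyMeasurable g μ0 := hg.aestronglyMeasurable
  have hgint : Integrable g μ0 := hg.integrable (by norm_num)
  have hFm : ∀ c : ℝ, AEStronglyMeasurable (fun x => hinv (c + g x)) μ0 :=
    fun c => hinv_cont.comp_aestronglyMeasurable (aestronglyMeasurable_const.add hgm)
  have hFint : ∀ c : ℝ, Integrable (fun x => hinv (c + g x)) μ0 := by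
    intro c
    have hB : Integrable (fun x => 1 + (|c| + |a| + |g x|) / lam) μ0 := by
      refine (integrable_const 1).add ?_
      exact (((integrable_const (|c| + |a|)).add hgint.abs).div_const lam)
    refine hB.mono' (hFm c) (Filter.Eventually.of_forall fun x => ?_)
    rw [Real.norm_eq_abs, abs_of_pos (hinv_pos _)]
    refine (hinv_le _).trans (max_le ?_ ?_)
    · have h0 : 0 ≤ (|c| + |a| + |g x|) / lam := by positivity
      linarith
    · have h1 : c + g x - a ≤ |c| + |a| + |g x| := by
        have := le_abs_self c; have := le_abs_self (g x); have := neg_le_abs a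
        linarith
      have h2 : (c + g x - a) / lam ≤ (|c| + |a| + |g x|) / lam := by
        gcongr
      linarith
  -- continuity of η
  have hcont' : Continuous (fun c => ∫ x, hinv (c + g x) ∂μ0) := by
    rw [continuous_iff_continuousAt]
    intro c₀
    refine continuousAt_of_dominated (Filter.Eventually.of_forall hFm) ?_
      (hFint (c₀ + 1)) ?_
    · filter_upwards [eventually_le_nhds (lt_add_one c₀)] with c hc
      refine Filter.Eventually.of_forall fun x => ?_
      rw [Real.norm_eq_abs, abs_of_pos (hinv_pos _)]
      exact hinv_mono.monotone (by linarith)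
    · refine Filter.Eventually.of_forall fun x => ?_
      exact (hinv_cont.comp (continuous_id.add continuous_const)).continuousAt
  -- strict monotonicity of η
  have hsm : StrictMono (fun c => ∫ x, hinv (c + g x) ∂μ0) := by
    intro c c' hcc
    have hsub : Integrable (fun x => hinv (c' + g x) - hinv (c + g x)) μ0 :=
      (hFint c').sub (hFint c)
    have hpos : 0 < ∫ x, (hinv (c' + g x) - hinv (c + g x)) ∂μ0 := by
      rw [integral_pos_iff_support_of_nonneg_ae
        (Filter.Eventually.of_forall fun x => sub_nonneg.2 (hinv_mono (by linarith)).le) hsub]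
      have hsupp : Function.support (fun x => hinv (c' + g x) - hinv (c + g x)) = Set.univ := by
        ext x
        simp only [Function.mem_support, Set.mem_univ, iff_true]
        exact sub_ne_zero.2 (ne_of_gt (hinv_mono (by linarith)))
      rw [hsupp, hμuniv]
      norm_num
    rw [integral_sub (hFint c') (hFint c)] at hpos
    simp only
    linarith
  -- hinv tends to 0 at -∞
  have hinv_bot : Filter.Tendsto hinv Filter.atBot (nhds 0) := by
    rw [NormedAddCommGroup.tendsto_nhds_zero]
    intro ε hε
    have hε2 : (0:ℝ) < ε / 2 := by linarith
    filter_upwards [Filter.eventually_le_atBot (σ (ε / 2) + 2 * lam * (ε / 2))] with s hs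
    rw [Real.norm_eq_abs, abs_of_pos (hinv_pos s)]
    calc hinv s ≤ hinv (σ (ε / 2) + 2 * lam * (ε / 2)) := hinv_mono.monotone hs
      _ = ε / 2 := hinv_left _ hε2
      _ < ε := by linarith
  -- hinv tends to ∞ at ∞
  have hinv_top : Filter.Tendsto hinv Filter.atTop Filter.atTop := by
    rw [Filter.tendsto_atTop]
    intro b
    have hb : (0:ℝ) < max b 1 := lt_of_lt_of_le one_pos (le_max_right b 1)
    filter_upwards [Filter.eventually_ge_atTop (σ (max b 1) + 2 * lam * (max b 1))] with s hs
    calc b ≤ max b 1 := le_max_left _ _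
      _ = hinv (σ (max b 1) + 2 * lam * (max b 1)) := (hinv_left _ hb).symm
      _ ≤ hinv s := hinv_mono.monotone hs
  -- η tends to 0 at -∞
  have h4 : Filter.Tendsto (fun c => ∫ x, hinv (c + g x) ∂μ0) Filter.atBot (nhds 0) := by
    have hDCT := tendsto_integral_filter_of_dominated_convergence (μ := μ0)
      (F := fun c x => hinv (c + g x)) (f := fun _ => (0:ℝ)) (bound := fun x => hinv (0 + g x))
      (Filter.Eventually.of_forall hFm)
      (by
        filter_upwards [Filter.eventually_le_atBot (0:ℝ)] with c hc
        refine Filter.Eventually.of_forall fun x => ?_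
        rw [Real.norm_eq_abs, abs_of_pos (hinv_pos _)]
        exact hinv_mono.monotone (by linarith))
      (hFint 0)
      (Filter.Eventually.of_forall fun x =>
        hinv_bot.comp (Filter.tendsto_atBot_add_const_right _ (g x) Filter.tendsto_id))
    simpa using hDCT
  -- η tends to ∞ at ∞
  have h5 : Filter.Tendsto (fun c => ∫ x, hinv (c + g x) ∂μ0) Filter.atTop Filter.atTop := by
    rw [Filter.tendsto_atTop]
    intro M
    have hM'pos : (0:ℝ) < max M 0 + 1 := by
      have := le_max_right M 0; linarith
    have hGm : ∀ c : ℝ, AEStronglyMeasurable (fun x => min (hinv (c + g x)) (max M 0 + 1)) μ0 :=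
      fun c => (continuous_id.min continuous_const).comp_aestronglyMeasurable (hFm c)
    have hGtend : Filter.Tendsto
        (fun c => ∫ x, min (hinv (c + g x)) (max M 0 + 1) ∂μ0)
        Filter.atTop (nhds (max M 0 + 1)) := by
      have hDCT := tendsto_integral_filter_of_dominated_convergence (μ := μ0) (l := Filter.atTop)
        (F := fun c x => min (hinv (c + g x)) (max M 0 + 1))
        (f := fun _ => (max M 0 + 1)) (bound := fun _ => (max M 0 + 1))
        (Filter.Eventually.of_forall hGm)
        (Filter.Eventually.of_forall fun c => Filter.Eventually.of_forall fun x => by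
          rw [Real.norm_eq_abs, abs_of_pos (lt_min (hinv_pos _) hM'pos)]
          exact min_le_right _ _)
        (integrable_const _)
        (Filter.Eventually.of_forall fun x => by
          have h1 : Filter.Tendsto (fun c => hinv (c + g x)) Filter.atTop Filter.atTop :=
            hinv_top.comp (Filter.tendsto_atTop_add_const_right _ (g x) Filter.tendsto_id)
          refine tendsto_nhds_of_eventually_eq ?_
          filter_upwards [h1.eventually_ge_atTop (max M 0 + 1)] with c hc
          exact min_eq_right hc)
      simpa using hDCT
    have hM : M < max M 0 + 1 := by
      have := le_max_left M 0; linarith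
    filter_upwards [hGtend.eventually (eventually_ge_nhds hM)] with c hc
    refine le_trans hc ?_
    refine integral_mono_of_nonneg
      (Filter.Eventually.of_forall fun x => (lt_min (hinv_pos _) hM'pos).le)
      (hFint c)
      (Filter.Eventually.of_forall fun x => min_le_left _ _)
  refine ⟨fun c => hFint c, hcont', hsm, h4, h5, ?_⟩
  intro μ hμpos
  obtain ⟨c₁, hc₁⟩ := (h4.eventually (eventually_lt_nhds hμpos)).exists
  obtain ⟨c₂, hc₂⟩ := (h5.eventually_ge_atTop μ).exists
  have hlt : c₁ < c₂ := by
    by_contra hle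
    push_neg at hle
    have := hsm.monotone hle
    linarith
  obtain ⟨c, hcmem, hceq⟩ := intermediate_value_Icc hlt.le (hcont'.continuousOn)
    ⟨hc₁.le, hc₂⟩
  exact ⟨c, hceq, fun y hy => hsm.injective (hy.trans hceq.symm)⟩
end

section
/- Conversely, under the same hypotheses: if p ∈ L²(0,1) with p ≥ 0 a.e., ∫₀¹ W(p) dx < ∞, ∫₀¹ p dx = μ, p > 0 a.e., σ(p) ∈ L²(0,1), and ξ = σ(p) − c for some constant c, then ξ ∈ ∂φ(p), i.e., for all v ∈ L²(0,1) with v ≥ 0 a.e. and ∫₀¹ v dx = μ: ∫₀¹ (W(v) − W(p) − ξ(v − p) + (λ/2)(v − p)²) dx ≥ 0. -/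
open MeasureTheory

/-- Pointwise gradient inequality from `λ`-convexity. -/
lemma key_ineq (W σ : ℝ → ℝ) (lam : ℝ)
    (hconv : ConvexOn ℝ (Set.Ici 0) (fun z => W z + lam / 2 * z ^ 2))
    (hderiv : ∀ z : ℝ, 0 < z → HasDerivAt W (σ z) z)
    {a b : ℝ} (ha : 0 < a) (hb : 0 ≤ b) :
    0 ≤ W b - W a - σ a * (b - a) + lam / 2 * (b - a) ^ 2 := by
  set g : ℝ → ℝ := fun z => W z + lam / 2 * z ^ 2 with hg
  have hgd : HasDerivAt g (σ a + lam * a) a := by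
    have h2 : HasDerivAt (fun z : ℝ => lam / 2 * z ^ 2) (lam * a) a := by
      have := (hasDerivAt_pow 2 a).const_mul (lam / 2)
      refine this.congr_deriv ?_
      ring
    exact (hderiv a ha).add h2
  have ha' : a ∈ Set.Ici (0:ℝ) := le_of_lt ha
  have hb' : b ∈ Set.Ici (0:ℝ) := hb
  have hmain : g a + (σ a + lam * a) * (b - a) ≤ g b := by
    rcases lt_trichotomy a b with h | h | h
    · have := hconv.le_slope_of_hasDerivAt ha' hb' h hgd
      rw [slope_def_field] at this
      have hba : 0 < b - a := by linarith
      have := (le_div_iff₀ hba).mp this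
      linarith
    · simp [h]
    · have := hconv.slope_le_of_hasDerivAt hb' ha' h hgd
      rw [slope_def_field] at this
      have hab : 0 < a - b := by linarith
      rw [div_le_iff₀ hab] at this
      nlinarith [this]
  simp only [hg] at hmain
  nlinarith [hmain]

/-- Characterization of the Fréchet subdifferential (sufficiency): if `W` is `λ`-convex and
differentiable on `(0,∞)` with `W' = σ`, `p ∈ L²(0,1)` with `p > 0` a.e., `∫₀¹ W(p) < ∞`,
`∫₀¹ p = μ`, `σ(p) ∈ L²(0,1)` and `ξ = σ(p) − c` for a constant `c`, then for every admissible
`v ≥ 0` a.e. with `∫₀¹ v = μ`: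
`∫₀¹ (W(v) − W(p) − ξ(v − p) + (λ/2)(v − p)²) dx ≥ 0`, i.e. `ξ ∈ ∂φ(p)`. -/
theorem stmt14 (W σ : ℝ → ℝ) (lam μ c : ℝ) (hlam : 0 ≤ lam) (hμ : 0 < μ)
    (hconv : ConvexOn ℝ (Set.Ici 0) (fun z => W z + lam / 2 * z ^ 2))
    (hderiv : ∀ z : ℝ, 0 < z → HasDerivAt W (σ z) z)
    (p ξ : ℝ → ℝ)
    (hp2 : MemLp p 2 (volume.restrict (Set.Ioo (0:ℝ) 1)))
    (hppos : ∀ᵐ x ∂(volume.restrict (Set.Ioo (0:ℝ) 1)), 0 < p x)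
    (hpW : IntegrableOn (fun x => W (p x)) (Set.Ioo 0 1))
    (hpmean : (∫ x in Set.Ioo (0:ℝ) 1, p x) = μ)
    (hσp2 : MemLp (fun x => σ (p x)) 2 (volume.restrict (Set.Ioo (0:ℝ) 1)))
    (hξ : ∀ x, ξ x = σ (p x) - c) :
    ∀ v : ℝ → ℝ, MemLp v 2 (volume.restrict (Set.Ioo (0:ℝ) 1)) →
      (∀ᵐ x ∂(volume.restrict (Set.Ioo (0:ℝ) 1)), 0 ≤ v x) →
      (∫ x in Set.Ioo (0:ℝ) 1, v x) = μ →
      IntegrableOn (fun x => W (v x)) (Set.Ioo 0 1) →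
      (∫ x in Set.Ioo (0:ℝ) 1,
        (W (v x) - W (p x) - ξ x * (v x - p x) + lam / 2 * (v x - p x) ^ 2)) ≥ 0 := by
  intro v hv2 hvnn hvmean hvW
  set ν := volume.restrict (Set.Ioo (0:ℝ) 1) with hν
  haveI : IsFiniteMeasure ν := by
    constructor
    rw [hν, Measure.restrict_apply_univ, Real.volume_Ioo]
    simp
  have hvp2 : MemLp (fun x => v x - p x) 2 ν := hv2.sub hp2
  -- integrability pieces
  have hint_p : Integrable p ν := hp2.integrable one_le_two
  have hint_v : Integrable v ν := hv2.integrable one_le_two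
  have hint_vp : Integrable (fun x => v x - p x) ν := hint_v.sub hint_p
  have hint_sq : Integrable (fun x => (v x - p x) ^ 2) ν := by
    have := (memLp_two_iff_integrable_sq hvp2.aestronglyMeasurable).mp hvp2
    simpa using this
  have hint_prod : Integrable (fun x => σ (p x) * (v x - p x)) ν := by
    have h : MemLp ((fun x => σ (p x)) • (fun x => v x - p x)) 1 ν :=
      hvp2.smul hσp2 (hpqr := ⟨by simp [one_div, ENNReal.inv_two_add_inv_two]⟩)
    rw [memLp_one_iff_integrable] at h
    simpa [Pi.smul_apply, smul_eq_mul, Pi.mul_def] using h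
  -- split the integrand
  have hsplit : ∀ x, W (v x) - W (p x) - ξ x * (v x - p x) + lam / 2 * (v x - p x) ^ 2
      = (W (v x) - W (p x) - σ (p x) * (v x - p x) + lam / 2 * (v x - p x) ^ 2)
        + c * (v x - p x) := by
    intro x; rw [hξ x]; ring
  have hint_f : Integrable
      (fun x => W (v x) - W (p x) - σ (p x) * (v x - p x) + lam / 2 * (v x - p x) ^ 2) ν :=
    ((hvW.sub hpW).sub hint_prod).add (hint_sq.const_mul _)
  have hint_c : Integrable (fun x => c * (v x - p x)) ν := hint_vp.const_mul c
  calc (∫ x in Set.Ioo (0:ℝ) 1,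
        (W (v x) - W (p x) - ξ x * (v x - p x) + lam / 2 * (v x - p x) ^ 2))
      = (∫ x, (W (v x) - W (p x) - σ (p x) * (v x - p x) + lam / 2 * (v x - p x) ^ 2) ∂ν)
        + ∫ x, c * (v x - p x) ∂ν := by
        rw [← integral_add hint_f hint_c]
        exact integral_congr_ae (Filter.Eventually.of_forall fun x => hsplit x)
    _ ≥ 0 := by
        have h1 : (0:ℝ) ≤ ∫ x, (W (v x) - W (p x) - σ (p x) * (v x - p x)
            + lam / 2 * (v x - p x) ^ 2) ∂ν := by
          apply integral_nonneg_of_ae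
          filter_upwards [hppos, hvnn] with x hpx hvx
          exact key_ineq W σ lam hconv hderiv hpx hvx
        have h2 : (∫ x, c * (v x - p x) ∂ν) = 0 := by
          rw [integral_const_mul, integral_sub hint_v hint_p]
          rw [hν] at *
          rw [hvmean, hpmean]
          ring
        linarith
end

section
/- Consider the ODE in ℝ³ in cylindrical coordinates: ṙ = −r(1−r)² − r|z|, ż = −z|z|, θ̇ = r(r−1). Every solution with z(0) ≠ 0 converges to the origin as t → ∞, whereas the solution with z(0) = 0 and r(0) > 1 satisfies r(t) → 1, θ(t) → ∞ as t → ∞ (so its ω-limit set is the entire unit circle {r = 1, z = 0}). Thus a dense set of initial data yields convergence to a rest point while some solution does not converge to any rest point. -/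
open Set Filter

lemma antitone_aux (f f' : ℝ → ℝ)
    (hd : ∀ t, 0 ≤ t → HasDerivAt f (f' t) t)
    (hf' : ∀ t, 0 < t → f' t ≤ 0) :
    ∀ t, 0 ≤ t → f t ≤ f 0 := by
  intro t ht
  have H : AntitoneOn f (Set.Ici (0:ℝ)) := by
    apply antitoneOn_of_deriv_nonpos (convex_Ici 0)
    · intro x hx; exact (hd x hx).continuousAt.continuousWithinAt
    · intro x hx
      rw [interior_Ici] at hx
      exact ((hd x hx.le).differentiableAt).differentiableWithinAt
    · intro x hx
      rw [interior_Ici] at hx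
      rw [(hd x hx.le).deriv]
      exact hf' x hx
  exact H (by simp : (0:ℝ) ∈ Set.Ici (0:ℝ)) ht ht

lemma antitone_aux_Icc (f f' : ℝ → ℝ) (T : ℝ) (hT : 0 ≤ T)
    (hd : ∀ t ∈ Set.Icc (0:ℝ) T, HasDerivAt f (f' t) t)
    (hf' : ∀ t ∈ Set.Ioo (0:ℝ) T, f' t ≤ 0) :
    f T ≤ f 0 := by
  have H : AntitoneOn f (Set.Icc (0:ℝ) T) := by
    apply antitoneOn_of_deriv_nonpos (convex_Icc 0 T)
    · intro x hx; exact (hd x hx).continuousAt.continuousWithinAt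
    · intro x hx
      rw [interior_Icc] at hx
      exact ((hd x (Set.mem_Icc.2 ⟨hx.1.le, hx.2.le⟩)).differentiableAt).differentiableWithinAt
    · intro x hx
      rw [interior_Icc] at hx
      rw [(hd x (Set.mem_Icc.2 ⟨hx.1.le, hx.2.le⟩)).deriv]
      exact hf' x hx
  exact H (Set.left_mem_Icc.2 hT) (Set.right_mem_Icc.2 hT) hT

lemma inv_est (f f' : ℝ → ℝ) (K T : ℝ) (hK : 0 ≤ K) (hT : 0 ≤ T)
    (hd : ∀ t ∈ Set.Icc (0:ℝ) T, HasDerivAt f (f' t) t)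
    (hpos : ∀ t ∈ Set.Icc (0:ℝ) T, 0 < f t)
    (hb : ∀ t ∈ Set.Icc (0:ℝ) T, -K * (f t)^2 ≤ f' t) :
    (f T)⁻¹ ≤ (f 0)⁻¹ + K * T := by
  have key := antitone_aux_Icc (fun u => (f u)⁻¹ - K * u)
      (fun u => -f' u / (f u)^2 - K) T hT ?_ ?_
  · have := key
    simp only [mul_zero, sub_zero] at this
    linarith
  · intro t ht
    have h1 : HasDerivAt (fun u => (f u)⁻¹) (-f' t / (f t)^2) t :=
      (hd t ht).inv (ne_of_gt (hpos t ht))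
    have h2 : HasDerivAt (fun u => K * u) K t := by
      simpa using (hasDerivAt_id t).const_mul K
    exact h1.sub h2
  · intro t ht
    have ht' : t ∈ Set.Icc (0:ℝ) T := ⟨ht.1.le, ht.2.le⟩
    have hf2 : (0:ℝ) < (f t)^2 := pow_pos (hpos t ht') 2
    have := hb t ht'
    rw [sub_nonpos, div_le_iff₀ hf2]
    nlinarith

lemma pos_lemma (f f' : ℝ → ℝ) (K : ℝ) (hK : 0 ≤ K)
    (hd : ∀ t, 0 ≤ t → HasDerivAt f (f' t) t)
    (hb : ∀ t, 0 ≤ t → 0 < f t → -K * (f t)^2 ≤ f' t)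
    (h0 : 0 < f 0) :
    ∀ T, 0 ≤ T → ((f 0)⁻¹ + K * T)⁻¹ ≤ f T := by
  have hC : ∀ T, 0 ≤ T → (0:ℝ) < (f 0)⁻¹ + K * T := by
    intro T hT
    have : (0:ℝ) < (f 0)⁻¹ := inv_pos.2 h0
    nlinarith
  -- positivity of f on [0, ∞)
  have hpos : ∀ t, 0 ≤ t → 0 < f t := by
    by_contra hcon
    push_neg at hcon
    obtain ⟨T, hT0, hTle⟩ := hcon
    set S : Set ℝ := {t | t ∈ Set.Icc (0:ℝ) T ∧ f t ≤ 0} with hS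
    have hScl : IsClosed S := by
      have hcont : ContinuousOn f (Set.Icc (0:ℝ) T) := fun x hx =>
        (hd x hx.1).continuousAt.continuousWithinAt
      have : S = Set.Icc (0:ℝ) T ∩ f ⁻¹' (Set.Iic 0) := by
        ext x
        simp only [hS, Set.mem_setOf_eq, Set.mem_inter_iff, Set.mem_preimage, Set.mem_Iic]
      rw [this]
      exact hcont.preimage_isClosed_of_isClosed isClosed_Icc isClosed_Iic
    have hSco : IsCompact S :=
      (isCompact_Icc (a := (0:ℝ)) (b := T)).of_isClosed_subset hScl (fun x hx => hx.1)
    have hSne : S.Nonempty := ⟨T, ⟨Set.right_mem_Icc.2 hT0, hTle⟩⟩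
    set T₀ := sInf S with hT₀
    have hT₀S : T₀ ∈ S := hSco.sInf_mem hSne
    have hT₀pos : 0 < T₀ := by
      rcases lt_or_eq_of_le hT₀S.1.1 with h | h
      · exact h
      · exfalso; rw [← h] at hT₀S; linarith [hT₀S.2]
    have hfposIoo : ∀ t, 0 ≤ t → t < T₀ → 0 < f t := by
      intro t ht htlt
      by_contra hle
      push_neg at hle
      have : t ∈ S := ⟨⟨ht, htlt.le.trans hT₀S.1.2⟩, hle⟩
      exact absurd (csInf_le hSco.bddBelow this) (not_le.2 htlt)
    set ε : ℝ := ((f 0)⁻¹ + K * T₀)⁻¹ with hε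
    have hεpos : 0 < ε := inv_pos.2 (hC T₀ hT₀pos.le)
    have hbound : ∀ t, 0 ≤ t → t < T₀ → ε ≤ f t := by
      intro t ht htlt
      have hIcc : ∀ u ∈ Set.Icc (0:ℝ) t, u ∈ Set.Icc (0:ℝ) T := fun u hu =>
        ⟨hu.1, (hu.2.trans (htlt.le.trans hT₀S.1.2))⟩
      have hposIcc : ∀ u ∈ Set.Icc (0:ℝ) t, 0 < f u := fun u hu =>
        hfposIoo u hu.1 (lt_of_le_of_lt hu.2 htlt)
      have hinv := inv_est f f' K t hK ht
        (fun u hu => hd u hu.1)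
        hposIcc
        (fun u hu => hb u hu.1 (hposIcc u hu))
      have h2 : (f t)⁻¹ ≤ (f 0)⁻¹ + K * T₀ := by nlinarith [hC t ht]
      have hft : 0 < f t := hfposIoo t ht htlt
      rw [hε]
      rw [inv_le_comm₀ (hC T₀ hT₀pos.le) hft]
      exact h2
    -- take the limit t → T₀⁻
    have hcontT₀ : Filter.Tendsto f (nhdsWithin T₀ (Set.Iio T₀)) (nhds (f T₀)) :=
      ((hd T₀ hT₀pos.le).continuousAt.continuousWithinAt)
    have hev : ∀ᶠ t in nhdsWithin T₀ (Set.Iio T₀), ε ≤ f t := by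
      filter_upwards [Ioo_mem_nhdsLT_of_mem (Set.mem_Ioc.2 ⟨hT₀pos, le_refl T₀⟩)] with t ht
      exact hbound t ht.1.le ht.2
    have := ge_of_tendsto hcontT₀ hev
    linarith [hT₀S.2]
  intro T hT
  have hinv := inv_est f f' K T hK hT
    (fun u hu => hd u hu.1) (fun u hu => hpos u hu.1)
    (fun u hu => hb u hu.1 (hpos u hu.1))
  have hft : 0 < f T := hpos T hT
  rw [inv_le_comm₀ (hC T hT) hft]
  exact hinv

lemma z_exact (z : ℝ → ℝ)
    (hz : ∀ t, 0 ≤ t → HasDerivAt z (-(z t) * |z t|) t)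
    (h0 : 0 < z 0) :
    ∀ t, 0 ≤ t → z t = z 0 / (1 + z 0 * t) := by
  have hposz : ∀ t, 0 ≤ t → 0 < z t := by
    intro t ht
    have := pos_lemma z (fun u => -(z u) * |z u|) 1 zero_le_one hz
      (fun u hu hzu => by rw [abs_of_pos hzu]; nlinarith) h0 t ht
    have hC : (0:ℝ) < (z 0)⁻¹ + 1 * t := by
      have : (0:ℝ) < (z 0)⁻¹ := inv_pos.2 h0
      nlinarith
    calc (0:ℝ) < ((z 0)⁻¹ + 1 * t)⁻¹ := inv_pos.2 hC
    _ ≤ z t := this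
  -- g u = (z u)⁻¹ - u has derivative 0
  have hg : ∀ t, 0 ≤ t → HasDerivAt (fun u => (z u)⁻¹ - u) 0 t := by
    intro t ht
    have h1 : HasDerivAt (fun u => (z u)⁻¹)
        (-(-(z t) * |z t|) / (z t)^2) t := (hz t ht).inv (ne_of_gt (hposz t ht))
    have h2 : HasDerivAt (fun u : ℝ => u) 1 t := hasDerivAt_id t
    have h3 := h1.sub h2
    have he : -(-(z t) * |z t|) / (z t)^2 - 1 = 0 := by
      rw [abs_of_pos (hposz t ht)]
      have : z t ≠ 0 := ne_of_gt (hposz t ht)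
      field_simp
      ring
    rw [he] at h3
    exact h3
  have hle := antitone_aux (fun u => (z u)⁻¹ - u) (fun _ => 0) hg (fun _ _ => le_refl 0)
  have hge := antitone_aux (fun u => -((z u)⁻¹ - u)) (fun _ => 0)
    (fun t ht => (hg t ht).neg.congr_deriv (by ring)) (fun _ _ => le_refl 0)
  intro t ht
  have h1 := hle t ht
  have h2 := hge t ht
  simp only [neg_sub] at h1 h2
  have heq : (z t)⁻¹ = (z 0)⁻¹ + t := by simp at h1 h2 ⊢; linarith
  have hzt := hposz t ht
  have hden : 0 < 1 + z 0 * t := by nlinarith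
  field_simp at heq ⊢
  nlinarith [heq]

lemma zabs_formula (z : ℝ → ℝ)
    (hz : ∀ t : ℝ, 0 ≤ t → HasDerivAt z (-(z t) * |z t|) t)
    (hz0 : z 0 ≠ 0) :
    ∀ t, 0 ≤ t → z t = z 0 / (1 + |z 0| * t) := by
  rcases lt_or_gt_of_ne hz0 with hneg | hpos
  · -- apply z_exact to -z
    have hw : ∀ t, 0 ≤ t → HasDerivAt (fun u => -z u) (-(-z t) * |(-z ·) t|) t := by
      intro t ht
      have := (hz t ht).neg
      apply this.congr_deriv
      simp only [abs_neg]
      ring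
    have h0 : 0 < (fun u => -z u) 0 := by simpa using hneg
    have := z_exact (fun u => -z u) hw h0
    intro t ht
    have h1 := this t ht
    rw [abs_of_neg hneg]
    have : z t = -(-z 0 / (1 + -z 0 * t)) := by rw [← h1]; ring
    rw [this]; ring
  · intro t ht
    rw [abs_of_pos hpos]
    exact z_exact z hz hpos t ht

lemma partA (r z : ℝ → ℝ)
    (hr : ∀ t : ℝ, 0 ≤ t → HasDerivAt r (-(r t) * (1 - r t) ^ 2 - r t * |z t|) t)
    (hz : ∀ t : ℝ, 0 ≤ t → HasDerivAt z (-(z t) * |z t|) t)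
    (hrnn : ∀ t : ℝ, 0 ≤ t → 0 ≤ r t) (hz0 : z 0 ≠ 0) :
    Filter.Tendsto r Filter.atTop (nhds 0) ∧ Filter.Tendsto z Filter.atTop (nhds 0) := by
  set c := |z 0| with hc
  have hcpos : 0 < c := abs_pos.2 hz0
  have hzeq := zabs_formula z hz hz0
  have hdenpos : ∀ t : ℝ, 0 ≤ t → (0:ℝ) < 1 + c * t := by
    intro t ht; nlinarith
  have hlin : Filter.Tendsto (fun t : ℝ => 1 + c * t) Filter.atTop Filter.atTop := by
    apply Filter.tendsto_atTop_add_const_left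
    exact (Filter.tendsto_id.const_mul_atTop hcpos)
  have hinv0 : Filter.Tendsto (fun t : ℝ => (1 + c * t)⁻¹) Filter.atTop (nhds 0) :=
    hlin.inv_tendsto_atTop
  constructor
  · -- r → 0
    have hzabs : ∀ t : ℝ, 0 ≤ t → |z t| * (1 + c * t) = c := by
      intro t ht
      rw [hzeq t ht, abs_div, abs_of_pos (hdenpos t ht), ← hc]
      field_simp
    have hkey := antitone_aux (fun t => r t * (1 + c * t))
      (fun t => (-(r t) * (1 - r t) ^ 2 - r t * |z t|) * (1 + c * t) + r t * c) ?_ ?_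
    · have hub : ∀ t : ℝ, 0 ≤ t → r t ≤ r 0 * (1 + c * t)⁻¹ := by
        intro t ht
        have := hkey t ht
        simp only [mul_zero, add_zero, mul_one] at this
        rw [le_mul_inv_iff₀ (hdenpos t ht)]
        linarith
      apply tendsto_of_tendsto_of_tendsto_of_le_of_le' tendsto_const_nhds
        (by simpa using hinv0.const_mul (r 0))
      · filter_upwards [Filter.eventually_ge_atTop (0:ℝ)] with t ht using hrnn t ht
      · filter_upwards [Filter.eventually_ge_atTop (0:ℝ)] with t ht using hub t ht
    · intro t ht
      have h1 := (hr t ht).mul ((hasDerivAt_id t).const_mul c |>.const_add 1)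
      simp only [id_eq] at h1
      exact h1.congr_deriv (by ring)
    · intro t ht
      have := hzabs t ht.le
      have h2 : (-(r t) * (1 - r t) ^ 2 - r t * |z t|) * (1 + c * t) + r t * c
          = -(r t) * (1 - r t) ^ 2 * (1 + c * t) := by
        have h3 : r t * (|z t| * (1 + c * t)) = r t * c := by rw [this]
        nlinarith [h3]
      show (-(r t) * (1 - r t) ^ 2 - r t * |z t|) * (1 + c * t) + r t * c ≤ 0
      rw [h2]
      nlinarith [mul_nonneg (mul_nonneg (hrnn t ht.le) (sq_nonneg (1 - r t))) (hdenpos t ht.le).le]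
  · -- z → 0
    have hten : Filter.Tendsto (fun t : ℝ => z 0 / (1 + c * t)) Filter.atTop (nhds 0) := by
      simpa [div_eq_mul_inv] using hinv0.const_mul (z 0)
    apply hten.congr'
    filter_upwards [Filter.eventually_ge_atTop (0:ℝ)] with t ht
    exact (hzeq t ht).symm

lemma partB (r z θ : ℝ → ℝ)
    (hr : ∀ t : ℝ, 0 ≤ t → HasDerivAt r (-(r t) * (1 - r t) ^ 2 - r t * |z t|) t)
    (hz : ∀ t : ℝ, 0 ≤ t → HasDerivAt z (-(z t) * |z t|) t)
    (hθ : ∀ t : ℝ, 0 ≤ t → HasDerivAt θ (r t * (r t - 1)) t)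
    (hrnn : ∀ t : ℝ, 0 ≤ t → 0 ≤ r t) (hz0 : z 0 = 0) (hr0 : 1 < r 0) :
    Filter.Tendsto r Filter.atTop (nhds 1) ∧ Filter.Tendsto θ Filter.atTop Filter.atTop := by
  -- z vanishes identically on [0, ∞)
  have hzzero : ∀ t : ℝ, 0 ≤ t → z t = 0 := by
    have hw := antitone_aux (fun t => (z t)^2) (fun t => 2 * z t * (-(z t) * |z t|))
      (fun t ht => (hz t ht).pow 2 |>.congr_deriv (by ring))
      (fun t ht => by nlinarith [mul_nonneg (sq_nonneg (z t)) (abs_nonneg (z t))])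
    intro t ht
    have h1 := hw t ht
    simp only [hz0] at h1
    have h2 : (0:ℝ) ≤ (z t)^2 := sq_nonneg _
    have : (z t)^2 = 0 := by simpa using le_antisymm (by simpa using h1) h2
    exact pow_eq_zero_iff (n := 2) (by norm_num) |>.1 this
  have hr' : ∀ t : ℝ, 0 ≤ t → HasDerivAt r (-(r t) * (1 - r t) ^ 2) t := by
    intro t ht
    have := hr t ht
    rw [hzzero t ht] at this
    simpa using this
  -- r is nonincreasing
  have hrle : ∀ t : ℝ, 0 ≤ t → r t ≤ r 0 :=
    antitone_aux r (fun t => -(r t) * (1 - r t) ^ 2)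
      (fun t ht => hr' t ht)
      (fun t ht => by nlinarith [mul_nonneg (hrnn t ht.le) (sq_nonneg (1 - r t))])
  set s : ℝ → ℝ := fun t => r t - 1 with hsdef
  have hs0 : 0 < s 0 := by simp [hsdef]; linarith
  have hsderiv : ∀ t : ℝ, 0 ≤ t → HasDerivAt s (-(r t) * (1 - r t) ^ 2) t :=
    fun t ht => (hr' t ht).sub_const 1
  have hr0pos : (0:ℝ) < r 0 := by linarith
  -- lower bound on s
  have hslow := pos_lemma s (fun t => -(r t) * (1 - r t) ^ 2) (r 0) hr0pos.le hsderiv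
    (fun t ht hst => by
      simp only [hsdef] at hst ⊢
      nlinarith [hrle t ht, sq_nonneg (r t - 1)]) hs0
  have hspos : ∀ t : ℝ, 0 ≤ t → 0 < s t := by
    intro t ht
    have hC : (0:ℝ) < (s 0)⁻¹ + r 0 * t := by
      have := inv_pos.2 hs0; nlinarith
    exact lt_of_lt_of_le (inv_pos.2 hC) (hslow t ht)
  -- upper bound on s : (s t)⁻¹ ≥ (s 0)⁻¹ + t
  have hq := antitone_aux (fun t => (s 0)⁻¹ + t - (s t)⁻¹)
    (fun t => 1 - (-((-(r t) * (1 - r t) ^ 2)) / (s t)^2)) ?_ ?_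
  rotate_left
  · intro t ht
    have h1 : HasDerivAt (fun u => (s u)⁻¹)
        (-(-(r t) * (1 - r t) ^ 2) / (s t)^2) t :=
      (hsderiv t ht).inv (ne_of_gt (hspos t ht))
    have h2 : HasDerivAt (fun u : ℝ => (s 0)⁻¹ + u) 1 t := (hasDerivAt_id t).const_add _
    exact (h2.sub h1).congr_deriv (by ring)
  · intro t ht
    have hst := hspos t ht.le
    have hsne : (s t) ≠ 0 := ne_of_gt hst
    have hkey : -(-(r t) * (1 - r t) ^ 2) / (s t)^2 = r t := by
      have : (1 - r t)^2 = (s t)^2 := by simp only [hsdef]; ring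
      rw [this]
      field_simp
    rw [hkey]
    have : (1:ℝ) < r t := by have := hst; simp only [hsdef] at this; linarith
    linarith
  have hsupper : ∀ t : ℝ, 0 ≤ t → s t ≤ ((s 0)⁻¹ + t)⁻¹ := by
    intro t ht
    have h1 := hq t ht
    simp only [add_zero] at h1
    have h2 : (s 0)⁻¹ + t ≤ (s t)⁻¹ := by
      have : (s 0)⁻¹ + 0 - (s 0)⁻¹ = 0 := by ring
      linarith [h1, this]
    have hA : (0:ℝ) < (s 0)⁻¹ + t := by
      have := inv_pos.2 hs0; linarith
    exact (le_inv_comm₀ hA (hspos t ht)).1 h2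
  constructor
  · -- r → 1
    have hupper : Filter.Tendsto (fun t : ℝ => 1 + ((s 0)⁻¹ + t)⁻¹) Filter.atTop (nhds 1) := by
      have h1 : Filter.Tendsto (fun t : ℝ => (s 0)⁻¹ + t) Filter.atTop Filter.atTop :=
        Filter.tendsto_atTop_add_const_left _ _ Filter.tendsto_id
      have := h1.inv_tendsto_atTop
      simpa using (tendsto_const_nhds (x := (1:ℝ)) (f := Filter.atTop)).add this
    apply tendsto_of_tendsto_of_tendsto_of_le_of_le' tendsto_const_nhds hupper
    · filter_upwards [Filter.eventually_ge_atTop (0:ℝ)] with t ht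
      have := hspos t ht; simp only [hsdef] at this; linarith
    · filter_upwards [Filter.eventually_ge_atTop (0:ℝ)] with t ht
      have := hsupper t ht; simp only [hsdef] at this; linarith
  · -- θ → ∞
    set L : ℝ → ℝ := fun t => θ 0 + (r 0)⁻¹ * (Real.log ((s 0)⁻¹ + r 0 * t) - Real.log ((s 0)⁻¹))
      with hLdef
    have hCpos : ∀ t : ℝ, 0 ≤ t → (0:ℝ) < (s 0)⁻¹ + r 0 * t := by
      intro t ht
      have := inv_pos.2 hs0; nlinarith
    have hD := antitone_aux (fun t => L t - θ t)
      (fun t => (r 0)⁻¹ * (((s 0)⁻¹ + r 0 * t)⁻¹ * r 0) - r t * (r t - 1)) ?_ ?_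
    rotate_left
    · intro t ht
      have haff : HasDerivAt (fun u : ℝ => (s 0)⁻¹ + r 0 * u) (r 0) t := by
        simpa using ((hasDerivAt_id t).const_mul (r 0)).const_add ((s 0)⁻¹)
      have hlog : HasDerivAt (fun u : ℝ => Real.log ((s 0)⁻¹ + r 0 * u))
          (((s 0)⁻¹ + r 0 * t)⁻¹ * r 0) t :=
        by have := (Real.hasDerivAt_log (ne_of_gt (hCpos t ht))).comp t haff; exact this
      have hL : HasDerivAt L ((r 0)⁻¹ * (((s 0)⁻¹ + r 0 * t)⁻¹ * r 0)) t := by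
        rw [hLdef]
        simpa using (((hlog.sub_const (Real.log ((s 0)⁻¹))).const_mul ((r 0)⁻¹)).const_add (θ 0))
      exact hL.sub (hθ t ht)
    · intro t ht
      have h1 : (r 0)⁻¹ * (((s 0)⁻¹ + r 0 * t)⁻¹ * r 0) = ((s 0)⁻¹ + r 0 * t)⁻¹ := by
        field_simp
      rw [h1]
      have h2 := hslow t ht.le
      have hst := hspos t ht.le
      have hseq : s t = r t - 1 := rfl
      have h4 : s t ≤ r t * (r t - 1) := by nlinarith [hst, hseq]
      linarith
    have hθlow : ∀ t : ℝ, 0 ≤ t → L t ≤ θ t := by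
      intro t ht
      have := hD t ht
      simp only [hLdef, mul_zero, add_zero, sub_self, mul_zero] at this ⊢
      linarith
    have hLtop : Filter.Tendsto L Filter.atTop Filter.atTop := by
      rw [hLdef]
      apply Filter.tendsto_atTop_add_const_left
      apply Filter.Tendsto.const_mul_atTop (inv_pos.2 hr0pos)
      apply Filter.tendsto_atTop_add_const_right
      apply Real.tendsto_log_atTop.comp
      apply Filter.tendsto_atTop_add_const_left
      exact Filter.tendsto_id.const_mul_atTop hr0pos
    apply Filter.tendsto_atTop_mono' _ _ hLtop
    filter_upwards [Filter.eventually_ge_atTop (0:ℝ)] with t ht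
    exact hθlow t ht


/-- The counterexample ODE in cylindrical coordinates:
`ṙ = −r(1−r)² − r|z|`, `ż = −z|z|`, `θ̇ = r(r−1)`.
Every solution with `z(0) ≠ 0` converges to the origin (`r → 0`, `z → 0`), whereas a solution
with `z(0) = 0`, `r(0) > 1` satisfies `r(t) → 1` and `θ(t) → ∞` as `t → ∞`, so it does not
converge to any rest point (its ω-limit set is the whole unit circle). -/
theorem stmt16 (r z θ : ℝ → ℝ)
    (hr : ∀ t : ℝ, 0 ≤ t → HasDerivAt r (-(r t) * (1 - r t) ^ 2 - r t * |z t|) t)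
    (hz : ∀ t : ℝ, 0 ≤ t → HasDerivAt z (-(z t) * |z t|) t)
    (hθ : ∀ t : ℝ, 0 ≤ t → HasDerivAt θ (r t * (r t - 1)) t)
    (hrnn : ∀ t : ℝ, 0 ≤ t → 0 ≤ r t) :
    (z 0 ≠ 0 →
      Filter.Tendsto r Filter.atTop (nhds 0) ∧ Filter.Tendsto z Filter.atTop (nhds 0)) ∧
    (z 0 = 0 → 1 < r 0 →
      Filter.Tendsto r Filter.atTop (nhds 1) ∧ Filter.Tendsto θ Filter.atTop Filter.atTop) := by
  exact ⟨fun hz0 => partA r z hr hz hrnn hz0, fun hz0 hr0 => partB r z θ hr hz hθ hrnn hz0 hr0⟩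
end

section
/- Let z : (0,∞) → ℝ be a bounded C¹ solution of z'(t) = f(z(t)) + e(t), where f : ℝ → ℝ is continuous and not constant on any open interval, and e is continuous with e(t) → 0 as t → ∞. Then z(t) converges to some limit z_∞ as t → ∞, and f(z_∞) = 0. -/
open Filter Set Topology

/-- Forward invariance: if `f c > 0`, `e → 0`, and `z` solves the ODE on `(0,∞)`,
then once `z` reaches `≥ c` at a large time, it stays `≥ c`. -/
lemma pego_aux (f e z : ℝ → ℝ)
    (he0 : Tendsto e atTop (nhds 0))
    (hode : ∀ t : ℝ, 0 < t → HasDerivAt z (f (z t) + e t) t)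
    (c : ℝ) (hfc : 0 < f c)
    (hfreq : ∃ᶠ t in atTop, c ≤ z t) :
    ∀ᶠ t in atTop, c ≤ z t := by
  have hzc : ∀ t : ℝ, 0 < t → ContinuousAt z t := fun t ht => (hode t ht).continuousAt
  have heT : ∀ᶠ s in atTop, |e s| < f c / 2 := by
    have : ∀ᶠ x in nhds (0 : ℝ), |x| < f c / 2 := by
      have : {x : ℝ | |x| < f c / 2} ∈ nhds (0 : ℝ) := by
        apply IsOpen.mem_nhds
        · exact isOpen_lt (continuous_abs) continuous_const
        · simpa using by positivity
      exact this
    exact he0.eventually this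
  obtain ⟨T, hT⟩ := (heT.and (eventually_gt_atTop 0)).exists_forall_of_atTop
  obtain ⟨t0, ht0z, ht0T⟩ := (hfreq.and_eventually (eventually_ge_atTop T)).exists
  have ht0pos : 0 < t0 := (hT t0 ht0T).2
  rw [eventually_atTop]
  refine ⟨t0, fun t1 ht1 => ?_⟩
  by_contra hzt1
  push_neg at hzt1
  have ht1gt : t0 < t1 := lt_of_le_of_ne ht1 (fun h => absurd (h ▸ ht0z) (not_le.2 hzt1))
  -- the set of times in [t0, t1] where z ≥ c
  set S : Set ℝ := Icc t0 t1 ∩ z ⁻¹' Ici c with hS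
  have hzcon : ContinuousOn z (Icc t0 t1) := fun x hx =>
    (hzc x (lt_of_lt_of_le ht0pos hx.1)).continuousWithinAt
  have hScl : IsClosed S := hzcon.preimage_isClosed_of_isClosed isClosed_Icc isClosed_Ici
  have hSne : S.Nonempty := ⟨t0, ⟨le_refl _, le_of_lt ht1gt⟩, ht0z⟩
  have hSbdd : BddAbove S := ⟨t1, fun x hx => hx.1.2⟩
  set s := sSup S with hs
  have hsS : s ∈ S := hScl.csSup_mem hSne hSbdd
  have hsle : s ≤ t1 := hsS.1.2
  have hst0 : t0 ≤ s := hsS.1.1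
  have hspos : 0 < s := lt_of_lt_of_le ht0pos hst0
  have hsT : T ≤ s := le_trans ht0T hst0
  have hslt : s < t1 := lt_of_le_of_ne hsle (fun h => absurd (h ▸ hsS.2) (not_le.2 hzt1))
  have hlt : ∀ t ∈ Ioc s t1, z t < c := by
    intro t ht
    by_contra hh
    push_neg at hh
    have : t ∈ S := ⟨⟨le_trans hst0 (le_of_lt ht.1), ht.2⟩, hh⟩
    exact absurd (le_csSup hSbdd this) (not_le.2 ht.1)
  -- z s = c
  have hzsc : z s = c := by
    refine le_antisymm ?_ hsS.2
    have htend : Tendsto z (nhdsWithin s (Ioi s)) (nhds (z s)) :=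
      (hzc s hspos).tendsto.mono_left nhdsWithin_le_nhds
    have hev : ∀ᶠ t in nhdsWithin s (Ioi s), z t ≤ c := by
      filter_upwards [Ioc_mem_nhdsGT_of_mem ⟨le_refl s, hslt⟩] with t ht
      exact le_of_lt (hlt t ht)
    exact le_of_tendsto htend hev
  -- derivative at s is positive
  have hd := hode s hspos
  have hdpos : 0 < f (z s) + e s := by
    rw [hzsc]
    have := (hT s hsT).1
    have h1 : -(f c / 2) < e s := neg_lt_of_abs_lt this
    linarith
  have hslope := hasDerivAt_iff_tendsto_slope.1 hd
  have hslope' : Tendsto (slope z s) (nhdsWithin s (Ioi s)) (nhds (f (z s) + e s)) :=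
    hslope.mono_left (nhdsWithin_mono s (fun x hx => ne_of_gt hx))
  have hev2 : ∀ᶠ t in nhdsWithin s (Ioi s), 0 < slope z s t :=
    hslope'.eventually (eventually_gt_nhds hdpos)
  obtain ⟨t, htsl, htmem⟩ := (hev2.and (Ioc_mem_nhdsGT_of_mem ⟨le_refl s, hslt⟩)).exists
  have : 0 < (z t - z s) / (t - s) := by
    simpa [slope_def_field, div_eq_inv_mul] using htsl
  have hts : 0 < t - s := sub_pos.2 htmem.1
  have : 0 < z t - z s := by
    have := mul_pos this hts
    rwa [div_mul_cancel₀] at this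
    exact ne_of_gt hts
  have : c < z t := by rw [← hzsc]; linarith
  exact absurd this (not_lt.2 (le_of_lt (hlt t htmem)))

/-- If `z → L` with `f L > 0`, we get a contradiction with convergence. -/
lemma pego_aux2 (f e z : ℝ → ℝ)
    (hf : Continuous f)
    (he0 : Tendsto e atTop (nhds 0))
    (hode : ∀ t : ℝ, 0 < t → HasDerivAt z (f (z t) + e t) t)
    (L : ℝ) (hL : Tendsto z atTop (nhds L)) (hfL : 0 < f L) : False := by
  set δ := f L / 2 with hδ
  have hδpos : 0 < δ := by positivity
  have htend : Tendsto (fun t => f (z t) + e t) atTop (nhds (f L + 0)) :=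
    ((hf.tendsto L).comp hL).add he0
  rw [add_zero] at htend
  have hev : ∀ᶠ t in atTop, δ < f (z t) + e t :=
    htend.eventually (eventually_gt_nhds (by linarith))
  obtain ⟨T, hT⟩ := (hev.and (eventually_gt_atTop 0)).exists_forall_of_atTop
  -- linear growth : for t ≥ T, δ * (t - T) ≤ z t - z T
  have hgrow : ∀ t, T ≤ t → δ * (t - T) ≤ z t - z T := by
    have hD : Convex ℝ (Ici T) := convex_Ici T
    have hcont : ContinuousOn z (Ici T) := fun x hx =>
      ((hode x (lt_of_lt_of_le (hT T le_rfl).2 hx)).continuousAt).continuousWithinAt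
    have hdiff : DifferentiableOn ℝ z (interior (Ici T)) := by
      intro x hx
      rw [interior_Ici] at hx
      exact ((hode x (lt_trans (hT T le_rfl).2 hx)).differentiableAt).differentiableWithinAt
    have hge : ∀ x ∈ interior (Ici T), δ ≤ deriv z x := by
      intro x hx
      rw [interior_Ici] at hx
      rw [(hode x (lt_trans (hT T le_rfl).2 hx)).deriv]
      exact le_of_lt (hT x (le_of_lt hx)).1
    intro t ht
    exact hD.mul_sub_le_image_sub_of_le_deriv hcont hdiff hge T (self_mem_Ici) t ht ht
  -- but z is eventually ≤ L + 1
  have hub : ∀ᶠ t in atTop, z t < L + 1 :=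
    hL.eventually (eventually_lt_nhds (by linarith))
  obtain ⟨t, htub, htlarge, htT⟩ :=
    (hub.and ((eventually_ge_atTop ((L + 1 - z T) / δ + T)).and
      (eventually_ge_atTop T))).exists
  have h1 : δ * (t - T) ≤ z t - z T := hgrow t htT
  have h2 : L + 1 - z T ≤ δ * (t - T) := by
    have : (L + 1 - z T) / δ ≤ t - T := by linarith
    calc L + 1 - z T = δ * ((L + 1 - z T) / δ) := by field_simp
    _ ≤ δ * (t - T) := by
        exact mul_le_mul_of_nonneg_left this (le_of_lt hδpos)
  linarith

/-- Pego's lemma: if `f : ℝ → ℝ` is continuous and not constant on any open interval,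
`e` is continuous with `e(t) → 0` as `t → ∞`, and `z` is a bounded `C¹` solution of
`z' = f(z) + e` on `(0,∞)`, then `z(t) → z_∞` as `t → ∞` for some `z_∞` with `f(z_∞) = 0`. -/
theorem stmt17 (f e z : ℝ → ℝ)
    (hf : Continuous f)
    (hfnc : ∀ a b : ℝ, a < b → ¬ ∃ k : ℝ, ∀ x ∈ Set.Ioo a b, f x = k)
    (he : Continuous e)
    (he0 : Filter.Tendsto e Filter.atTop (nhds 0))
    (hode : ∀ t : ℝ, 0 < t → HasDerivAt z (f (z t) + e t) t)
    (hbdd : ∃ M : ℝ, ∀ t : ℝ, 0 < t → |z t| ≤ M) :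
    ∃ zinf : ℝ, Filter.Tendsto z Filter.atTop (nhds zinf) ∧ f zinf = 0 := by
  -- negated system, used for the symmetric cases
  have hodeneg : ∀ t : ℝ, 0 < t →
      HasDerivAt (fun s => -z s) ((fun x => -f (-x)) ((fun s => -z s) t) + (fun s => -e s) t) t := by
    intro t ht
    have : HasDerivAt (fun s => -z s) _ t := (hode t ht).neg
    convert this using 1
    simp
    ring
  have he0neg : Tendsto (fun s => -e s) atTop (nhds 0) := by
    have := he0.neg
    simpa using this
  obtain ⟨M, hM⟩ := hbdd
  have hzM : ∀ᶠ t in atTop, |z t| ≤ M := by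
    filter_upwards [eventually_gt_atTop 0] with t ht using hM t ht
  have hbd1 : IsBoundedUnder (· ≤ ·) atTop z :=
    ⟨M, hzM.mono fun t h => (abs_le.1 h).2⟩
  have hbd2 : IsBoundedUnder (· ≥ ·) atTop z :=
    ⟨-M, hzM.mono fun t h => (abs_le.1 h).1⟩
  have hcb1 : IsCoboundedUnder (· ≤ ·) atTop z := hbd2.isCoboundedUnder_le
  have hcb2 : IsCoboundedUnder (· ≥ ·) atTop z := hbd1.isCoboundedUnder_ge
  set α := liminf z atTop with hα
  set β := limsup z atTop with hβ
  have hαβ : α ≤ β := liminf_le_limsup hbd1 hbd2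
  rcases eq_or_lt_of_le hαβ with heq | hlt
  · -- convergence case
    have htend : Tendsto z atTop (nhds α) :=
      tendsto_of_liminf_eq_limsup rfl heq.symm hbd1 hbd2
    refine ⟨α, htend, ?_⟩
    by_contra hne
    rcases lt_or_gt_of_ne hne with hneg | hpos
    · -- f α < 0 : apply aux2 to negated system
      apply pego_aux2 (fun x => -f (-x)) (fun s => -e s) (fun s => -z s)
        ((hf.comp continuous_neg).neg) he0neg hodeneg (-α)
      · simpa using htend.neg
      · simpa using hneg
    · exact pego_aux2 f e z hf he0 hode α htend hpos
  · -- oscillation case : contradiction with hfnc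
    exfalso
    refine hfnc α β hlt ⟨0, fun x hx => ?_⟩
    by_contra hfx
    rcases lt_or_gt_of_ne hfx with hneg | hpos
    · -- f x < 0 : use negated system to show limsup ≤ x
      have hfreq : ∃ᶠ t in atTop, z t < x := frequently_lt_of_liminf_lt hcb2 hx.1
      have hfreq' : ∃ᶠ t in atTop, -x ≤ -z t :=
        hfreq.mono fun t ht => by linarith
      have hev := pego_aux (fun x => -f (-x)) (fun s => -e s) (fun s => -z s)
        he0neg hodeneg (-x) (by simpa using hneg) hfreq'
      have : β ≤ x := by
        apply limsup_le_of_le hcb1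
        filter_upwards [hev] with t ht
        linarith
      exact absurd hx.2 (not_lt.2 this)
    · -- f x > 0 : show x ≤ liminf
      have hfreq : ∃ᶠ t in atTop, x < z t := frequently_lt_of_lt_limsup hcb1 hx.2
      have hev := pego_aux f e z he0 hode x hpos (hfreq.mono fun t ht => le_of_lt ht)
      have : x ≤ α := le_liminf_of_le hcb2 hev
      exact absurd hx.1 (not_lt.2 this)
end
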